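/- arXiv:math/0507311 — 5 statements merged into one kernel-verified Lean document; each statement's English description precedes it below -/
import Mathlib

section
/- Let A be a finite arrangement of affine hyperplanes in ℝ^ℓ and let F : ∅ = F^{−1} ⊂ F^0 ⊂ F^1 ⊂ ⋯ ⊂ F^ℓ = ℝ^ℓ be a generic flag for A. For each q = 0, 1, …, ℓ let ch_q^F(A) = {C chamber of A : C ∩ F^q ≠ ∅ and C ∩ F^{q−1} = ∅}. Then |ch_q^F(A)| = b_q(A), the coefficient of t^q in the Poincaré polynomial π(A,t). -/
open scoped Classical

noncomputable section

variable (K : Type) [Field K] {V : Type} [AddCommGroup V] [Module K V]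

/-- An affine hyperplane in `V`: the level set of a nonzero linear functional. -/
def IsHyperplane (H : Set V) : Prop :=
  ∃ (f : V →ₗ[K] K) (c : K), f ≠ 0 ∧ H = {x | f x = c}

/-- The dimension of a subset of `V`: the dimension of its affine span. -/
def flatDim (X : Set V) : ℕ := Module.finrank K (affineSpan K X).direction

/-- The intersection poset `L(A)` of the arrangement `A` inside the ambient set `W`:
all nonempty intersections of subfamilies of `A` (intersected with the ambient `W`),
the empty subfamily giving `W` itself. -/
def interPosetIn (W : Set V) (A : Finset (Set V)) : Finset (Set V) :=
  (A.powerset.image fun S => W ∩ ⋂ H ∈ S, H).filter fun X => X.Nonempty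

/-- The rank of `X`: its codimension within the ambient space `W`. -/
def rkIn (W X : Set V) : ℕ := flatDim K W - flatDim K X

/-- `μ` satisfies the defining recursion of the Möbius function of the poset
`L(A)` inside the ambient set `W`.  `L(A)` is ordered by reverse inclusion, so the
condition `μ(W) = 1`, `μ(X) = -∑_{Y < X} μ(Y)` for `X > W` is equivalent to:
for every `X ∈ L(A)`, `∑_{Y ⊇ X} μ(Y)` is `1` if `X = W` and `0` otherwise. -/
def IsMobiusIn (W : Set V) (A : Finset (Set V)) (μ : Set V → ℤ) : Prop :=
  ∀ X ∈ interPosetIn W A,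
    (∑ Y ∈ (interPosetIn W A).filter fun Y => X ⊆ Y, μ Y) = if X = W then 1 else 0

/-- The Poincaré polynomial `π(A,t) = ∑_{X ∈ L(A)} μ(X) (-t)^{r(X)}`. -/
def poinIn (W : Set V) (A : Finset (Set V)) (μ : Set V → ℤ) : Polynomial ℤ :=
  ∑ X ∈ interPosetIn W A, Polynomial.C (μ X) * (- Polynomial.X) ^ (rkIn K W X)

/-- A chamber of the arrangement `A` within the ambient set `W`: a connected
component of `W ∖ ⋃_{H ∈ A} H`. -/
def IsChamberIn [TopologicalSpace V] (W : Set V) (A : Finset (Set V)) (C : Set V) : Prop :=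
  ∃ x ∈ W ∩ (⋃ H ∈ A, (H : Set V))ᶜ, C = connectedComponentIn (W ∩ (⋃ H ∈ A, (H : Set V))ᶜ) x

/-- `F` is a generic (transversal) `q`-dimensional affine subspace for the
arrangement `A`: it is (the carrier of) an affine subspace of dimension `q`, and
for every `X ∈ L(A)`, if `r(X) ≤ q` then `F ∩ X` is nonempty of dimension
`q - r(X)`, and if `r(X) > q` then `F ∩ X = ∅`. -/
def IsGenericFlat (q : ℕ) (A : Finset (Set V)) (F : Set V) : Prop :=
  (∃ W : AffineSubspace K V, (W : Set V) = F) ∧ F.Nonempty ∧ flatDim K F = q ∧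
  ∀ X ∈ interPosetIn Set.univ A,
    (rkIn K Set.univ X ≤ q → (F ∩ X).Nonempty ∧ flatDim K (F ∩ X) = q - rkIn K Set.univ X) ∧
    (q < rkIn K Set.univ X → F ∩ X = ∅)

end

-- L1: flats, hyperplanes, dimension lemmas
noncomputable section ArrAux
variable {ℓ : ℕ}

local notation "V" => (Fin ℓ → ℝ)

def IsFlat (X : Set V) : Prop := ∃ S : AffineSubspace ℝ V, (S : Set V) = X

/-- chosen functional data for a hyperplane -/
def hfc (H : Set V) : (V →ₗ[ℝ] ℝ) × ℝ :=
  if h : IsHyperplane ℝ H then ⟨h.choose, h.choose_spec.choose⟩ else 0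

lemma hfc_spec {H : Set V} (h : IsHyperplane ℝ H) :
    (hfc H).1 ≠ 0 ∧ H = {x | (hfc H).1 x = (hfc H).2} := by
  rw [hfc, dif_pos h]
  exact ⟨h.choose_spec.choose_spec.1, h.choose_spec.choose_spec.2⟩

/-- the hyperplane `{x | f x = c}` as an affine subspace -/
def hypAff (f : V →ₗ[ℝ] ℝ) (c : ℝ) : AffineSubspace ℝ V where
  carrier := {x | f x = c}
  smul_vsub_vadd_mem' := by
    intro t p1 p2 p3 h1 h2 h3
    simp only [Set.mem_setOf_eq] at *
    simp [vsub_eq_sub, vadd_eq_add, map_add, map_smul, map_sub, h1, h2, h3]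

@[simp] lemma hypAff_coe (f : V →ₗ[ℝ] ℝ) (c : ℝ) :
    ((hypAff f c : AffineSubspace ℝ V) : Set V) = {x | f x = c} := rfl

lemma flatDim_coe (S : AffineSubspace ℝ V) :
    flatDim ℝ (S : Set V) = Module.finrank ℝ S.direction := by
  rw [flatDim, S.affineSpan_coe]

lemma hypAff_direction {f : V →ₗ[ℝ] ℝ} {c : ℝ} (h : ({x | f x = c} : Set V).Nonempty) :
    (hypAff f c).direction = LinearMap.ker f := by
  obtain ⟨x, hx⟩ := h
  ext v
  rw [AffineSubspace.mem_direction_iff_eq_vsub ⟨x, hx⟩]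
  constructor
  · rintro ⟨p1, hp1, p2, hp2, rfl⟩
    simp only [LinearMap.mem_ker, vsub_eq_sub, map_sub]
    have h1 : f p1 = c := hp1
    have h2 : f p2 = c := hp2
    rw [h1, h2, sub_self]
  · intro hv
    refine ⟨v + x, ?_, x, hx, ?_⟩
    · show f (v + x) = c
      rw [map_add, LinearMap.mem_ker.mp hv, zero_add]; exact hx
    · simp [vsub_eq_sub]

lemma dim_drop {S : AffineSubspace ℝ V} {f : V →ₗ[ℝ] ℝ} {c : ℝ}
    (hne : ((S : Set V) ∩ {x | f x = c}).Nonempty)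
    (hns : ¬ (S : Set V) ⊆ {x | f x = c}) :
    flatDim ℝ ((S : Set V) ∩ {x | f x = c}) + 1 = flatDim ℝ (S : Set V) := by
  set T := S ⊓ hypAff f c with hT
  have hTc : ((T : AffineSubspace ℝ V) : Set V) = (S : Set V) ∩ {x | f x = c} := by
    rfl
  obtain ⟨x, hxS, hxH⟩ := hne
  have hdirT : T.direction = S.direction ⊓ LinearMap.ker f := by
    rw [hT, AffineSubspace.direction_inf_of_mem hxS (by exact hxH : x ∈ hypAff f c),
      hypAff_direction ⟨x, hxH⟩]
  -- the functional restricted to the direction of S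
  set D := S.direction with hD
  set g : D →ₗ[ℝ] ℝ := f.comp D.subtype with hg
  have hker : Submodule.map D.subtype (LinearMap.ker g) = D ⊓ LinearMap.ker f := by
    rw [hg, LinearMap.ker_comp, Submodule.map_comap_subtype]
  -- g is surjective
  obtain ⟨y, hyS⟩ := Set.not_subset.mp hns
  have hw : (y -ᵥ x : V) ∈ D := AffineSubspace.vsub_mem_direction hyS.1 hxS
  have hgne : g ⟨_, hw⟩ ≠ 0 := by
    simp only [hg, LinearMap.comp_apply, Submodule.subtype_apply, vsub_eq_sub, map_sub]
    have : f x = c := hxH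
    rw [this]
    intro hcon
    exact hyS.2 (by simpa [Set.mem_setOf_eq] using sub_eq_zero.mp hcon)
  have hrange : LinearMap.range g = ⊤ := by
    rw [LinearMap.range_eq_top]
    intro r
    refine ⟨(r / g ⟨_, hw⟩) • ⟨_, hw⟩, ?_⟩
    rw [map_smul, smul_eq_mul, div_mul_cancel₀ _ hgne]
  have hrn : Module.finrank ℝ (LinearMap.range g) + Module.finrank ℝ (LinearMap.ker g)
      = Module.finrank ℝ D := LinearMap.finrank_range_add_finrank_ker g
  rw [hrange, finrank_top, Module.finrank_self] at hrn
  calc flatDim ℝ ((S : Set V) ∩ {x | f x = c}) + 1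
      = Module.finrank ℝ T.direction + 1 := by rw [← hTc, flatDim_coe]
    _ = Module.finrank ℝ (LinearMap.ker g) + 1 := by
        rw [hdirT, ← hker, Submodule.finrank_map_subtype_eq]
    _ = flatDim ℝ (S : Set V) := by rw [flatDim_coe, ← hrn, add_comm]

end ArrAux
noncomputable section ArrAux2
variable {ℓ : ℕ}
local notation "V" => (Fin ℓ → ℝ)

/-- abbreviations for the chosen functional -/
def hfv (H : Set V) : V →ₗ[ℝ] ℝ := (hfc H).1
def hcv (H : Set V) : ℝ := (hfc H).2

lemma mem_hyp_iff {H : Set V} (h : IsHyperplane ℝ H) {x : V} :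
    x ∈ H ↔ hfv H x = hcv H := by
  conv_lhs => rw [(hfc_spec h).2]
  rfl

lemma flat_line_mem {S : AffineSubspace ℝ V} {x y : V} (hx : x ∈ S) (hy : y ∈ S) (t : ℝ) :
    x + t • (y - x) ∈ S := by
  have := AffineSubspace.smul_vsub_vadd_mem S t hy hx hx
  simpa [vsub_eq_sub, vadd_eq_add, add_comm] using this

lemma line_apply (f : V →ₗ[ℝ] ℝ) (x y : V) (t : ℝ) :
    f (x + t • (y - x)) = f x + t * (f y - f x) := by
  simp [map_add, map_smul, map_sub, smul_eq_mul]

/-- if a flat misses the hyperplane `{f = c}`, then `f - c` has constant sign on it -/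
lemma same_side {S : AffineSubspace ℝ V} {f : V →ₗ[ℝ] ℝ} {c : ℝ}
    (hdisj : ((S : Set V) ∩ {x | f x = c}) = ∅) {x y : V} (hx : x ∈ S) (hy : y ∈ S) :
    (c < f x ↔ c < f y) := by
  have hne : ∀ z, z ∈ S → f z ≠ c := by
    intro z hz hzc
    have hmem : z ∈ ((S : Set V) ∩ {x | f x = c}) := ⟨hz, hzc⟩
    rw [hdisj] at hmem
    exact hmem
  have key : ∀ u v : V, u ∈ S → v ∈ S → f u < c → c < f v → False := by
    intro u v hu hv h1 h2
    set t : ℝ := (c - f u) / (f v - f u) with ht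
    have hz : u + t • (v - u) ∈ S := flat_line_mem hu hv t
    apply hne _ hz
    rw [line_apply, ht, div_mul_cancel₀ _ (by linarith)]
    ring
  constructor
  · intro h
    rcases lt_trichotomy (f y) c with h' | h' | h'
    · exact (key y x hy hx h' h).elim
    · exact absurd h' (hne y hy)
    · exact h'
  · intro h
    rcases lt_trichotomy (f x) c with h' | h' | h'
    · exact (key x y hx hy h' h).elim
    · exact absurd h' (hne x hx)
    · exact h'

lemma between_sign_lt {f : V →ₗ[ℝ] ℝ} {c : ℝ} {x y : V} {t : ℝ}
    (ht0 : 0 ≤ t) (ht1 : t ≤ 1) (hx : f x < c) (hy : f y < c) :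
    f (x + t • (y - x)) < c := by
  rw [line_apply]
  rcases eq_or_lt_of_le ht0 with h | h
  · simpa [← h] using hx
  · nlinarith [mul_lt_mul_of_pos_left hy h, mul_le_mul_of_nonneg_left hx.le (sub_nonneg.mpr ht1)]

lemma between_sign_gt {f : V →ₗ[ℝ] ℝ} {c : ℝ} {x y : V} {t : ℝ}
    (ht0 : 0 ≤ t) (ht1 : t ≤ 1) (hx : c < f x) (hy : c < f y) :
    c < f (x + t • (y - x)) := by
  rw [line_apply]
  rcases eq_or_lt_of_le ht0 with h | h
  · simpa [← h] using hx
  · nlinarith [mul_lt_mul_of_pos_left hy h, mul_le_mul_of_nonneg_left hx.le (sub_nonneg.mpr ht1)]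

/-- perturbation lemma: moving a little along any line from `x` keeps the strict sign
pattern with respect to a finite set of hyperplanes avoiding `x`. -/
lemma perturb {𝓑 : Finset (Set V)} (h𝓑 : ∀ H ∈ 𝓑, IsHyperplane ℝ H) {x : V}
    (hxO : ∀ H ∈ 𝓑, x ∉ H) (y : V) :
    ∃ ε > (0:ℝ), ∀ t : ℝ, |t| < ε → ∀ H ∈ 𝓑,
      (x + t • (y - x) ∉ H ∧ (hcv H < hfv H (x + t • (y - x)) ↔ hcv H < hfv H x)) := by
  classical
  set side : Set V → Set V := fun H =>
    if hcv H < hfv H x then {z | hcv H < hfv H z} else {z | hfv H z < hcv H} with hside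
  have hopen : ∀ H ∈ 𝓑, IsOpen (side H) := by
    intro H _
    have hcont : Continuous (hfv H) := LinearMap.continuous_of_finiteDimensional _
    by_cases h : hcv H < hfv H x
    · simpa [hside, h] using isOpen_lt continuous_const hcont
    · simpa [hside, h] using isOpen_lt hcont continuous_const
  have hmem : ∀ H ∈ 𝓑, x ∈ side H := by
    intro H hH
    by_cases h : hcv H < hfv H x
    · simp [hside, h]
    · have : hfv H x ≠ hcv H := fun hc => hxO H hH ((mem_hyp_iff (h𝓑 H hH)).mpr hc)
      simp only [hside, if_neg h, Set.mem_setOf_eq]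
      exact lt_of_le_of_ne (not_lt.mp h) this
  set U : Set V := ⋂ H ∈ 𝓑, side H with hU
  have hUopen : IsOpen U := isOpen_biInter_finset hopen
  have hxU : x ∈ U := Set.mem_iInter₂.mpr hmem
  have hγ : Continuous (fun t : ℝ => x + t • (y - x)) := by
    exact continuous_const.add (continuous_id.smul continuous_const)
  have hnhds : (fun t : ℝ => x + t • (y - x)) ⁻¹' U ∈ nhds (0:ℝ) := by
    apply hγ.continuousAt.preimage_mem_nhds
    apply hUopen.mem_nhds
    simpa using hxU
  obtain ⟨ε, hε, hball⟩ := Metric.mem_nhds_iff.mp hnhds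
  refine ⟨ε, hε, fun t ht H hH => ?_⟩
  have htU : x + t • (y - x) ∈ U := by
    apply hball
    simpa [Real.dist_eq] using ht
  have hts : x + t • (y - x) ∈ side H := by
    have := Set.mem_iInter₂.mp htU H hH
    exact this
  by_cases h : hcv H < hfv H x
  · rw [hside] at hts
    simp only [if_pos h, Set.mem_setOf_eq] at hts
    refine ⟨fun hmem => ?_, iff_of_true hts h⟩
    exact absurd ((mem_hyp_iff (h𝓑 H hH)).mp hmem) (ne_of_gt hts)
  · rw [hside] at hts
    simp only [if_neg h, Set.mem_setOf_eq] at hts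
    refine ⟨fun hmem => ?_, iff_of_false (not_lt.mpr hts.le) h⟩
    exact absurd ((mem_hyp_iff (h𝓑 H hH)).mp hmem) (ne_of_lt hts)

end ArrAux2
noncomputable section ArrAux3
variable {ℓ : ℕ}
local notation "V" => (Fin ℓ → ℝ)

/-- the sign pattern of a point with respect to a finite set of hyperplanes -/
def pat (𝓑 : Finset (Set V)) (x : V) : Finset (Set V) :=
  𝓑.filter fun H => hcv H < hfv H x

/-- realized sign patterns on `W` -/
def Epat (𝓑 : Finset (Set V)) (W : Set V) : Set (Finset (Set V)) :=
  pat 𝓑 '' (W \ ⋃ H ∈ 𝓑, H)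

def svc (𝓑 : Finset (Set V)) (W : Set V) : ℕ := (Epat 𝓑 W).ncard

/-- the Whitney-style sum -/
def Tsum (𝓑 : Finset (Set V)) (W : Set V) : ℤ :=
  ∑ B ∈ 𝓑.powerset, if (W ∩ ⋂ H ∈ B, H).Nonempty then
    (-1) ^ (B.card + flatDim ℝ W + flatDim ℝ (W ∩ ⋂ H ∈ B, H)) else 0

lemma pat_subset (𝓑 : Finset (Set V)) (x : V) : pat 𝓑 x ⊆ 𝓑 := Finset.filter_subset _ _

lemma pat_image_finite (𝓑 : Finset (Set V)) (s : Set V) : (pat 𝓑 '' s).Finite := by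
  apply Set.Finite.subset (Finset.finite_toSet 𝓑.powerset)
  rintro P ⟨x, -, rfl⟩
  simp only [Finset.coe_powerset, Set.mem_preimage, Set.mem_powerset_iff,
    Finset.coe_subset]
  exact pat_subset _ _

lemma Epat_finite (𝓑 : Finset (Set V)) (W : Set V) : (Epat 𝓑 W).Finite :=
  pat_image_finite _ _

lemma mem_hyp_aux {H : Set V} (h : IsHyperplane ℝ H) {x : V} :
    x ∉ H ↔ hfv H x ≠ hcv H := by rw [mem_hyp_iff h]

lemma pat_insert (H0 : Set V) (𝓑' : Finset (Set V)) (x : V) :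
    pat (insert H0 𝓑') x
      = if hcv H0 < hfv H0 x then insert H0 (pat 𝓑' x) else pat 𝓑' x := by
  rw [pat, Finset.filter_insert]
  rfl

lemma pat_congr {𝓑' : Finset (Set V)} {x z : V}
    (h : ∀ H ∈ 𝓑', (hcv H < hfv H z ↔ hcv H < hfv H x)) :
    pat 𝓑' z = pat 𝓑' x := by
  rw [pat, pat]
  exact Finset.filter_congr fun H hH => by rw [h H hH]

lemma notmem_biUnion {𝓑 : Finset (Set V)} {x : V} :
    x ∉ (⋃ H ∈ 𝓑, H) ↔ ∀ H ∈ 𝓑, x ∉ H := by simp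

/-- points strictly between two points with the same sign pattern keep the pattern -/
lemma pat_between {𝓑' : Finset (Set V)} (h𝓑' : ∀ H ∈ 𝓑', IsHyperplane ℝ H) {x y : V}
    (hx : ∀ H ∈ 𝓑', x ∉ H) (hy : ∀ H ∈ 𝓑', y ∉ H)
    (hpat : pat 𝓑' x = pat 𝓑' y) {t : ℝ} (ht0 : 0 ≤ t) (ht1 : t ≤ 1) :
    (∀ H ∈ 𝓑', x + t • (y - x) ∉ H) ∧ pat 𝓑' (x + t • (y - x)) = pat 𝓑' x := by
  have key : ∀ H ∈ 𝓑', (x + t • (y - x) ∉ H) ∧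
      (hcv H < hfv H (x + t • (y - x)) ↔ hcv H < hfv H x) := by
    intro H hH
    by_cases h : hcv H < hfv H x
    · have hyH : hcv H < hfv H y := by
        have hx' : H ∈ pat 𝓑' x := Finset.mem_filter.mpr ⟨hH, h⟩
        rw [hpat] at hx'
        exact (Finset.mem_filter.mp hx').2
      have := between_sign_gt ht0 ht1 h hyH
      exact ⟨(mem_hyp_aux (h𝓑' H hH)).mpr (ne_of_gt this), iff_of_true this h⟩
    · have hxlt : hfv H x < hcv H :=
        lt_of_le_of_ne (not_lt.mp h) ((mem_hyp_aux (h𝓑' H hH)).mp (hx H hH))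
      have hylt : hfv H y < hcv H := by
        rcases lt_trichotomy (hfv H y) (hcv H) with h' | h' | h'
        · exact h'
        · exact absurd h' ((mem_hyp_aux (h𝓑' H hH)).mp (hy H hH))
        · have hy' : H ∈ pat 𝓑' y := Finset.mem_filter.mpr ⟨hH, h'⟩
          rw [← hpat] at hy'
          exact absurd (Finset.mem_filter.mp hy').2 h
      have := between_sign_lt ht0 ht1 hxlt hylt
      exact ⟨(mem_hyp_aux (h𝓑' H hH)).mpr (ne_of_lt this), iff_of_false (not_lt.mpr this.le) h⟩
  exact ⟨fun H hH => (key H hH).1, pat_congr fun H hH => (key H hH).2⟩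

lemma insert_injOn (H0 : Set V) :
    Set.InjOn (insert H0) {s : Finset (Set V) | H0 ∉ s} := by
  intro s hs t ht hst
  have := congrArg (Finset.erase · H0) hst
  simpa [Finset.erase_insert hs, Finset.erase_insert ht] using this

end ArrAux3
noncomputable section ArrAux4
variable {ℓ : ℕ}
local notation "V" => (Fin ℓ → ℝ)

lemma Tsum_empty (W : Set V) (hW : W.Nonempty) : Tsum ∅ W = 1 := by
  rw [Tsum, Finset.powerset_empty, Finset.sum_singleton]
  have h1 : (W ∩ ⋂ H ∈ (∅ : Finset (Set V)), H) = W := by simp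
  rw [h1, if_pos hW, Finset.card_empty]
  have h2 : 0 + flatDim ℝ W + flatDim ℝ W = 2 * flatDim ℝ W := by ring
  rw [h2, pow_mul]
  norm_num

lemma svc_empty (W : Set V) (hW : W.Nonempty) : svc ∅ W = 1 := by
  have h : Epat ∅ W = {(∅ : Finset (Set V))} := by
    ext P
    constructor
    · rintro ⟨x, -, rfl⟩
      simp [pat]
    · rintro hP
      obtain ⟨x, hx⟩ := hW
      refine ⟨x, by simp [hx], ?_⟩
      simp only [Set.mem_singleton_iff] at hP
      simp [pat, hP]
  rw [svc, h, Set.ncard_singleton]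

lemma Tsum_insert {H0 : Set V} {𝓑' : Finset (Set V)} (hH0 : H0 ∉ 𝓑') (W : Set V) :
    Tsum (insert H0 𝓑') W =
      ∑ B ∈ 𝓑'.powerset,
        ((if (W ∩ ⋂ H ∈ B, H).Nonempty then
            (-1) ^ (B.card + flatDim ℝ W + flatDim ℝ (W ∩ ⋂ H ∈ B, H)) else 0)
         + (if ((W ∩ H0) ∩ ⋂ H ∈ B, H).Nonempty then
            (-1) ^ (B.card + 1 + flatDim ℝ W + flatDim ℝ ((W ∩ H0) ∩ ⋂ H ∈ B, H)) else 0)) := by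
  rw [Tsum, Finset.sum_powerset_insert hH0, Finset.sum_add_distrib]
  congr 1
  apply Finset.sum_congr rfl
  intro B hB
  have hBsub : B ⊆ 𝓑' := Finset.mem_powerset.mp hB
  have hH0B : H0 ∉ B := fun h => hH0 (hBsub h)
  have hset : (W ∩ ⋂ H ∈ insert H0 B, H) = ((W ∩ H0) ∩ ⋂ H ∈ B, H) := by
    rw [Finset.set_biInter_insert, ← Set.inter_assoc]
  rw [hset, Finset.card_insert_of_notMem hH0B]

lemma Tsum_subset_zero {H0 : Set V} {𝓑' : Finset (Set V)} (hH0 : H0 ∉ 𝓑') {W : Set V}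
    (hsub : W ⊆ H0) : Tsum (insert H0 𝓑') W = 0 := by
  rw [Tsum_insert hH0]
  apply Finset.sum_eq_zero
  intro B _
  have hWH : W ∩ H0 = W := Set.inter_eq_left.mpr hsub
  rw [hWH]
  by_cases h : (W ∩ ⋂ H ∈ B, H).Nonempty
  · rw [if_pos h, if_pos h]
    have he : B.card + 1 + flatDim ℝ W + flatDim ℝ (W ∩ ⋂ H ∈ B, H)
        = (B.card + flatDim ℝ W + flatDim ℝ (W ∩ ⋂ H ∈ B, H)) + 1 := by ring
    rw [he, pow_succ]
    ring
  · rw [if_neg h, if_neg h]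
    ring

lemma Tsum_disj {H0 : Set V} {𝓑' : Finset (Set V)} (hH0 : H0 ∉ 𝓑') {W : Set V}
    (hdisj : W ∩ H0 = ∅) : Tsum (insert H0 𝓑') W = Tsum 𝓑' W := by
  rw [Tsum_insert hH0, Tsum]
  apply Finset.sum_congr rfl
  intro B _
  rw [hdisj]
  have : ¬ ((∅ : Set V) ∩ ⋂ H ∈ B, H).Nonempty := by simp
  rw [if_neg this, add_zero]

lemma Tsum_main {H0 : Set V} {𝓑' : Finset (Set V)} (hH0 : H0 ∉ 𝓑')
    {S : AffineSubspace ℝ V} (hyp0 : IsHyperplane ℝ H0)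
    (hne : ((S : Set V) ∩ H0).Nonempty) (hnsub : ¬ (S : Set V) ⊆ H0) :
    Tsum (insert H0 𝓑') (S : Set V) = Tsum 𝓑' (S : Set V) + Tsum 𝓑' ((S : Set V) ∩ H0) := by
  have hH0eq : H0 = {x | hfv H0 x = hcv H0} := (hfc_spec hyp0).2
  have hdim : flatDim ℝ ((S : Set V) ∩ H0) + 1 = flatDim ℝ (S : Set V) := by
    rw [hH0eq] at hne hnsub ⊢
    exact dim_drop hne hnsub
  rw [Tsum_insert hH0, Finset.sum_add_distrib]
  congr 1
  rw [Tsum]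
  apply Finset.sum_congr rfl
  intro B _
  by_cases h : (((S : Set V) ∩ H0) ∩ ⋂ H ∈ B, H).Nonempty
  · rw [if_pos h, if_pos h]
    have he : B.card + 1 + flatDim ℝ (S : Set V)
          + flatDim ℝ (((S : Set V) ∩ H0) ∩ ⋂ H ∈ B, H)
        = (B.card + flatDim ℝ ((S : Set V) ∩ H0)
          + flatDim ℝ (((S : Set V) ∩ H0) ∩ ⋂ H ∈ B, H)) + 2 := by omega
    rw [he, pow_add]
    norm_num
  · rw [if_neg h, if_neg h]
end ArrAux4
noncomputable section ArrAux5
variable {ℓ : ℕ}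
local notation "V" => (Fin ℓ → ℝ)

lemma svc_subset_zero {𝓑 : Finset (Set V)} {H0 : Set V} (h0 : H0 ∈ 𝓑) {W : Set V}
    (hsub : W ⊆ H0) : svc 𝓑 W = 0 := by
  have hd : W \ ⋃ H ∈ 𝓑, H = ∅ := by
    apply Set.eq_empty_iff_forall_notMem.mpr
    rintro x ⟨h1, h2⟩
    exact h2 (Set.mem_biUnion h0 (hsub h1))
  rw [svc, Epat, hd, Set.image_empty, Set.ncard_empty]

lemma svc_disj {H0 : Set V} {𝓑' : Finset (Set V)} (hH0 : H0 ∉ 𝓑')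
    (hyp0 : IsHyperplane ℝ H0) {S : AffineSubspace ℝ V} (hS : (S : Set V).Nonempty)
    (hdisj : (S : Set V) ∩ H0 = ∅) :
    svc (insert H0 𝓑') (S : Set V) = svc 𝓑' (S : Set V) := by
  have hH0eq : H0 = {x | hfv H0 x = hcv H0} := (hfc_spec hyp0).2
  have hdom : (S : Set V) \ ⋃ H ∈ insert H0 𝓑', H = (S : Set V) \ ⋃ H ∈ 𝓑', H := by
    rw [Finset.set_biUnion_insert]
    ext x
    simp only [Set.mem_diff, Set.mem_union]
    constructor
    · rintro ⟨h1, h2⟩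
      exact ⟨h1, fun h => h2 (Or.inr h)⟩
    · rintro ⟨h1, h2⟩
      refine ⟨h1, fun h => ?_⟩
      rcases h with h | h
      · have hx : x ∈ (S : Set V) ∩ H0 := ⟨h1, h⟩
        rw [hdisj] at hx
        exact hx.elim
      · exact h2 h
  obtain ⟨w0, hw0⟩ := hS
  have hdisj' : ((S : Set V) ∩ {x | hfv H0 x = hcv H0}) = ∅ := by rw [← hH0eq]; exact hdisj
  have hside : ∀ x ∈ (S : Set V), (hcv H0 < hfv H0 x ↔ hcv H0 < hfv H0 w0) :=
    fun x hx => (same_side hdisj' hw0 hx).symm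
  by_cases hsgn : hcv H0 < hfv H0 w0
  · have himg : Epat (insert H0 𝓑') (S : Set V) = insert H0 '' Epat 𝓑' (S : Set V) := by
      rw [Epat, Epat, hdom, Set.image_image]
      apply Set.image_congr
      intro x hx
      rw [pat_insert, if_pos ((hside x hx.1).mpr hsgn)]
    rw [svc, svc, himg,
      Set.ncard_image_of_injOn ((insert_injOn H0).mono ?_)]
    rintro P ⟨x, -, rfl⟩
    exact fun h => hH0 (pat_subset 𝓑' x h)
  · have himg : Epat (insert H0 𝓑') (S : Set V) = Epat 𝓑' (S : Set V) := by
      rw [Epat, Epat, hdom]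
      apply Set.image_congr
      intro x hx
      rw [pat_insert, if_neg (fun h => hsgn ((hside x hx.1).mp h))]
    rw [svc, svc, himg]

lemma svc_main {H0 : Set V} {𝓑' : Finset (Set V)} (hH0 : H0 ∉ 𝓑')
    (h𝓑' : ∀ H ∈ 𝓑', IsHyperplane ℝ H) (hyp0 : IsHyperplane ℝ H0)
    {S : AffineSubspace ℝ V} (hnsub : ¬ (S : Set V) ⊆ H0) :
    svc (insert H0 𝓑') (S : Set V)
      = svc 𝓑' (S : Set V) + svc 𝓑' ((S : Set V) ∩ H0) := by
  classical
  obtain ⟨y, hyW, hyH0⟩ := Set.not_subset.mp hnsub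
  have hyne : hfv H0 y ≠ hcv H0 := (mem_hyp_aux hyp0).mp hyH0
  set W : Set V := (S : Set V) with hWdef
  set M' : Set V := W \ ⋃ H ∈ 𝓑', H with hM'
  set Dm : Set V := M' ∩ {x | hfv H0 x < hcv H0} with hDm
  set Dp : Set V := M' ∩ {x | hcv H0 < hfv H0 x} with hDp
  set Em : Set (Finset (Set V)) := pat 𝓑' '' Dm with hEm
  set Ep : Set (Finset (Set V)) := pat 𝓑' '' Dp with hEp
  have finEm : Em.Finite := pat_image_finite _ _
  have finEp : Ep.Finite := pat_image_finite _ _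
  have hMoff : ∀ {x}, x ∈ M' → ∀ H ∈ 𝓑', x ∉ H := fun hx => notmem_biUnion.mp hx.2
  -- moving from a point of M' on H0 in both directions
  have hperturb : ∀ x, x ∈ M' → hfv H0 x = hcv H0 → pat 𝓑' x ∈ Em ∧ pat 𝓑' x ∈ Ep := by
    intro x hx hx0
    obtain ⟨ε, hε, hp⟩ := perturb h𝓑' (hMoff hx) y
    have hz : ∀ t : ℝ, |t| < ε → (x + t • (y - x) ∈ M'
        ∧ pat 𝓑' (x + t • (y - x)) = pat 𝓑' x
        ∧ hfv H0 (x + t • (y - x)) = hcv H0 + t * (hfv H0 y - hcv H0)) := by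
      intro t ht
      have h1 := hp t ht
      refine ⟨⟨flat_line_mem hx.1 hyW t, ?_⟩, pat_congr (fun H hH => (h1 H hH).2), ?_⟩
      · exact notmem_biUnion.mpr fun H hH => (h1 H hH).1
      · rw [line_apply, hx0]
    have habs1 : |ε/2| < ε := by rw [abs_of_pos (by linarith)]; linarith
    have habs2 : |(-(ε/2))| < ε := by rw [abs_neg, abs_of_pos (by linarith)]; linarith
    obtain ⟨hm1, hm2, hm3⟩ := hz (ε/2) habs1
    obtain ⟨hn1, hn2, hn3⟩ := hz (-(ε/2)) habs2
    rcases lt_or_gt_of_ne hyne with hy' | hy'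
    · constructor
      · exact ⟨_, ⟨hm1, by rw [Set.mem_setOf_eq, hm3]; nlinarith⟩, hm2⟩
      · exact ⟨_, ⟨hn1, by rw [Set.mem_setOf_eq, hn3]; nlinarith⟩, hn2⟩
    · constructor
      · exact ⟨_, ⟨hn1, by rw [Set.mem_setOf_eq, hn3]; nlinarith⟩, hn2⟩
      · exact ⟨_, ⟨hm1, by rw [Set.mem_setOf_eq, hm3]; nlinarith⟩, hm2⟩
  -- F1 : every pattern on W is realized strictly off H0
  have hF1 : Epat 𝓑' W = Em ∪ Ep := by
    apply Set.Subset.antisymm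
    · rintro P ⟨x, hx, rfl⟩
      rcases lt_trichotomy (hfv H0 x) (hcv H0) with h | h | h
      · exact Or.inl ⟨x, ⟨hx, h⟩, rfl⟩
      · rcases hperturb x hx h with ⟨h1, _⟩
        exact Or.inl h1
      · exact Or.inr ⟨x, ⟨hx, h⟩, rfl⟩
    · exact Set.union_subset (Set.image_mono Set.inter_subset_left)
        (Set.image_mono Set.inter_subset_left)
  -- F2 : patterns realized on both sides are exactly those realized on W ∩ H0
  have hF2 : Em ∩ Ep = Epat 𝓑' (W ∩ H0) := by
    apply Set.Subset.antisymm
    · rintro P ⟨⟨x1, hx1, rfl⟩, ⟨x2, hx2, hP⟩⟩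
      have ha : hfv H0 x1 < hcv H0 := hx1.2
      have hb : hcv H0 < hfv H0 x2 := hx2.2
      set t : ℝ := (hcv H0 - hfv H0 x1) / (hfv H0 x2 - hfv H0 x1) with htd
      have hden : (0:ℝ) < hfv H0 x2 - hfv H0 x1 := by linarith
      have ht0 : 0 ≤ t := div_nonneg (by linarith) hden.le
      have ht1 : t ≤ 1 := by
        rw [div_le_one hden]; linarith
      obtain ⟨hzoff, hzpat⟩ := pat_between h𝓑' (hMoff hx1.1) (hMoff hx2.1) hP.symm ht0 ht1
      refine ⟨x1 + t • (x2 - x1), ⟨⟨flat_line_mem hx1.1.1 hx2.1.1 t, ?_⟩, ?_⟩, hzpat⟩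
      · rw [(hfc_spec hyp0).2]
        show hfv H0 (x1 + t • (x2 - x1)) = hcv H0
        rw [line_apply, htd, div_mul_cancel₀ _ (ne_of_gt hden)]
        ring
      · exact notmem_biUnion.mpr hzoff
    · rintro P ⟨z, ⟨⟨hzW, hzH0⟩, hzoff⟩, rfl⟩
      have hz0 : hfv H0 z = hcv H0 := (mem_hyp_iff hyp0).mp hzH0
      exact hperturb z ⟨hzW, hzoff⟩ hz0
  -- F3 : decompose the patterns for the bigger arrangement
  have hdom3 : W \ ⋃ H ∈ insert H0 𝓑', H = Dm ∪ Dp := by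
    rw [Finset.set_biUnion_insert]
    ext x
    simp only [hDm, hDp, hM', Set.mem_diff, Set.mem_union, Set.mem_inter_iff,
      Set.mem_setOf_eq]
    constructor
    · rintro ⟨h1, h2⟩
      push_neg at h2
      have hx0 : hfv H0 x ≠ hcv H0 := (mem_hyp_aux hyp0).mp h2.1
      rcases lt_or_gt_of_ne hx0 with h | h
      · exact Or.inl ⟨⟨h1, h2.2⟩, h⟩
      · exact Or.inr ⟨⟨h1, h2.2⟩, h⟩
    · rintro (⟨⟨h1, h2⟩, h3⟩ | ⟨⟨h1, h2⟩, h3⟩)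
      · exact ⟨h1, fun h => h.elim
          (fun hh => (mem_hyp_aux hyp0).mpr (ne_of_lt h3) hh) h2⟩
      · exact ⟨h1, fun h => h.elim
          (fun hh => (mem_hyp_aux hyp0).mpr (ne_of_gt h3) hh) h2⟩
  have hF3 : Epat (insert H0 𝓑') W = Em ∪ (insert H0 '' Ep) := by
    rw [Epat, hdom3, Set.image_union]
    congr 1
    · apply Set.image_congr
      intro x hx
      rw [pat_insert, if_neg (not_lt.mpr (le_of_lt (show hfv H0 x < hcv H0 from hx.2)))]
    · rw [hEp, Set.image_image]
      apply Set.image_congr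
      intro x hx
      rw [pat_insert, if_pos (show hcv H0 < hfv H0 x from hx.2)]
  -- membership of H0 separates the two parts
  have hEmH0 : ∀ P ∈ Em, H0 ∉ P := by
    rintro P ⟨x, -, rfl⟩ h
    exact hH0 (pat_subset 𝓑' x h)
  have hEpH0 : ∀ P ∈ Ep, H0 ∉ P := by
    rintro P ⟨x, -, rfl⟩ h
    exact hH0 (pat_subset 𝓑' x h)
  have hdisj2 : Disjoint Em (insert H0 '' Ep) := by
    rw [Set.disjoint_left]
    rintro P hP ⟨Q, hQ, rfl⟩
    exact hEmH0 _ hP (Finset.mem_insert_self _ _)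
  have hcard : svc (insert H0 𝓑') W = Em.ncard + Ep.ncard := by
    rw [svc, hF3, Set.ncard_union_eq hdisj2 finEm (finEp.image _),
      Set.ncard_image_of_injOn ((insert_injOn H0).mono hEpH0)]
  rw [hcard, svc, svc]
  have := Set.ncard_union_add_ncard_inter Em Ep finEm finEp
  rw [hF1, ← hF2]
  omega

end ArrAux5
noncomputable section ArrAux6
variable {ℓ : ℕ}
local notation "V" => (Fin ℓ → ℝ)

theorem lemZ (𝓑 : Finset (Set V)) :
    (∀ H ∈ 𝓑, IsHyperplane ℝ H) → ∀ (S : AffineSubspace ℝ V), (S : Set V).Nonempty →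
      (svc 𝓑 (S : Set V) : ℤ) = Tsum 𝓑 (S : Set V) := by
  induction 𝓑 using Finset.induction_on with
  | empty =>
    intro _ S hS
    rw [svc_empty _ hS, Tsum_empty _ hS]
    norm_num
  | @insert H0 𝓑' hH0 ih =>
    intro h𝓑 S hS
    have hyp0 : IsHyperplane ℝ H0 := h𝓑 H0 (Finset.mem_insert_self _ _)
    have h𝓑' : ∀ H ∈ 𝓑', IsHyperplane ℝ H := fun H hH => h𝓑 H (Finset.mem_insert_of_mem hH)
    by_cases hsub : (S : Set V) ⊆ H0
    · rw [svc_subset_zero (Finset.mem_insert_self _ _) hsub, Tsum_subset_zero hH0 hsub]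
      norm_num
    · by_cases hdisj : (S : Set V) ∩ H0 = ∅
      · rw [svc_disj hH0 hyp0 hS hdisj, Tsum_disj hH0 hdisj]
        exact ih h𝓑' S hS
      · have hne : ((S : Set V) ∩ H0).Nonempty := Set.nonempty_iff_ne_empty.mpr hdisj
        have hH0eq : H0 = {x | hfv H0 x = hcv H0} := (hfc_spec hyp0).2
        set G : AffineSubspace ℝ V := S ⊓ hypAff (hfv H0) (hcv H0) with hG
        have hGcoe : (G : Set V) = (S : Set V) ∩ H0 := by
          have h1 : (G : Set V) = (S : Set V) ∩ {x | hfv H0 x = hcv H0} := rfl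
          rw [h1, ← hH0eq]
        rw [svc_main hH0 h𝓑' hyp0 hsub, Tsum_main hH0 hyp0 hne hsub]
        push_cast
        rw [ih h𝓑' S hS, ← hGcoe, ih h𝓑' G (by rw [hGcoe]; exact hne)]
end ArrAux6
noncomputable section ArrAux7
variable {ℓ : ℕ}
local notation "V" => (Fin ℓ → ℝ)

def MSet (A : Finset (Set V)) : Set V := Set.univ ∩ (⋃ H ∈ A, (H : Set V))ᶜ

def cls (A : Finset (Set V)) (x : V) : Set V :=
  ⋂ H ∈ A, (if hcv H < hfv H x then {y | hcv H < hfv H y} else {y | hfv H y < hcv H})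

lemma MSet_off {A : Finset (Set V)} {x : V} (hx : x ∈ MSet A) : ∀ H ∈ A, x ∉ H :=
  notmem_biUnion.mp hx.2

lemma cls_open (A : Finset (Set V)) (x : V) : IsOpen (cls A x) := by
  apply isOpen_biInter_finset
  intro H _
  have hcont : Continuous (hfv H) := LinearMap.continuous_of_finiteDimensional _
  by_cases h : hcv H < hfv H x
  · simpa [h] using isOpen_lt continuous_const hcont
  · simpa [h] using isOpen_lt hcont continuous_const

lemma cls_convex (A : Finset (Set V)) (x : V) : Convex ℝ (cls A x) := by
  apply convex_iInter₂
  intro H _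
  by_cases h : hcv H < hfv H x
  · simpa [h] using convex_halfSpace_gt (LinearMap.isLinear (hfv H)) (hcv H)
  · simpa [h] using convex_halfSpace_lt (LinearMap.isLinear (hfv H)) (hcv H)

lemma mem_cls_self {A : Finset (Set V)} (hA : ∀ H ∈ A, IsHyperplane ℝ H) {x : V}
    (hx : x ∈ MSet A) : x ∈ cls A x := by
  apply Set.mem_iInter₂.mpr
  intro H hH
  by_cases h : hcv H < hfv H x
  · rw [if_pos h]; exact h
  · rw [if_neg h]
    exact lt_of_le_of_ne (not_lt.mp h) ((mem_hyp_aux (hA H hH)).mp (MSet_off hx H hH))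

lemma cls_subset_M {A : Finset (Set V)} (hA : ∀ H ∈ A, IsHyperplane ℝ H) (x : V) :
    cls A x ⊆ MSet A := by
  intro y hy
  refine ⟨trivial, notmem_biUnion.mpr fun H hH => ?_⟩
  have := Set.mem_iInter₂.mp hy H hH
  by_cases h : hcv H < hfv H x
  · rw [if_pos h] at this
    exact (mem_hyp_aux (hA H hH)).mpr (ne_of_gt this)
  · rw [if_neg h] at this
    exact (mem_hyp_aux (hA H hH)).mpr (ne_of_lt this)

lemma mem_cls_iff {A : Finset (Set V)} (hA : ∀ H ∈ A, IsHyperplane ℝ H) {x : V}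
    (hx : x ∈ MSet A) {y : V} :
    y ∈ cls A x ↔ y ∈ MSet A ∧ pat A y = pat A x := by
  constructor
  · intro hy
    refine ⟨cls_subset_M hA x hy, ?_⟩
    apply pat_congr
    intro H hH
    have hmem := Set.mem_iInter₂.mp hy H hH
    by_cases h : hcv H < hfv H x
    · rw [if_pos h] at hmem
      exact iff_of_true hmem h
    · rw [if_neg h] at hmem
      exact iff_of_false (not_lt.mpr hmem.le) h
  · rintro ⟨hyM, hpat⟩
    apply Set.mem_iInter₂.mpr
    intro H hH
    by_cases h : hcv H < hfv H x
    · rw [if_pos h]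
      have : H ∈ pat A x := Finset.mem_filter.mpr ⟨hH, h⟩
      rw [← hpat] at this
      exact (Finset.mem_filter.mp this).2
    · rw [if_neg h]
      have hyne : hfv H y ≠ hcv H := (mem_hyp_aux (hA H hH)).mp (MSet_off hyM H hH)
      rcases lt_or_gt_of_ne hyne with h' | h'
      · exact h'
      · have : H ∈ pat A y := Finset.mem_filter.mpr ⟨hH, h'⟩
        rw [hpat] at this
        exact absurd (Finset.mem_filter.mp this).2 h

lemma cls_eq_of_meet {A : Finset (Set V)} {x z : V}
    (h : (cls A x ∩ cls A z).Nonempty) : cls A x = cls A z := by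
  obtain ⟨y, hyx, hyz⟩ := h
  have key : ∀ H ∈ A, (hcv H < hfv H x ↔ hcv H < hfv H z) := by
    intro H hH
    have h1 := Set.mem_iInter₂.mp hyx H hH
    have h2 := Set.mem_iInter₂.mp hyz H hH
    by_cases hx' : hcv H < hfv H x <;> by_cases hz' : hcv H < hfv H z
    · exact iff_of_true hx' hz'
    · rw [if_pos hx'] at h1
      rw [if_neg hz'] at h2
      have h1' : hcv H < hfv H y := h1
      have h2' : hfv H y < hcv H := h2
      exact absurd h1' (not_lt.mpr h2'.le)
    · rw [if_neg hx'] at h1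
      rw [if_pos hz'] at h2
      have h1' : hfv H y < hcv H := h1
      have h2' : hcv H < hfv H y := h2
      exact absurd h2' (not_lt.mpr h1'.le)
    · exact iff_of_false hx' hz'
  unfold cls
  apply Set.iInter₂_congr
  intro H hH
  rw [if_congr (key H hH) rfl rfl]

lemma component_eq_cls {A : Finset (Set V)} (hA : ∀ H ∈ A, IsHyperplane ℝ H) {x : V}
    (hx : x ∈ MSet A) : connectedComponentIn (MSet A) x = cls A x := by
  apply Set.Subset.antisymm
  · set U := cls A x with hU
    set Vv := ⋃ y ∈ (MSet A) \ U, cls A y with hVv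
    have hVopen : IsOpen Vv := isOpen_biUnion fun y _ => cls_open A y
    have hcover : connectedComponentIn (MSet A) x ⊆ U ∪ Vv := by
      intro z hz
      have hzM : z ∈ MSet A := connectedComponentIn_subset _ _ hz
      by_cases h : z ∈ U
      · exact Or.inl h
      · exact Or.inr (Set.mem_biUnion ⟨hzM, h⟩ (mem_cls_self hA hzM))
    by_contra hnot
    obtain ⟨w, hw, hwU⟩ := Set.not_subset.mp hnot
    have hwM : w ∈ MSet A := connectedComponentIn_subset _ _ hw
    have h1 : (connectedComponentIn (MSet A) x ∩ U).Nonempty :=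
      ⟨x, mem_connectedComponentIn hx, mem_cls_self hA hx⟩
    have h2 : (connectedComponentIn (MSet A) x ∩ Vv).Nonempty :=
      ⟨w, hw, Set.mem_biUnion ⟨hwM, hwU⟩ (mem_cls_self hA hwM)⟩
    obtain ⟨z, _, hzU, hzV⟩ :=
      isPreconnected_connectedComponentIn U Vv (cls_open A x) hVopen hcover h1 h2
    obtain ⟨y, hy, hzy⟩ := Set.mem_iUnion₂.mp hzV
    have : cls A x = cls A y := cls_eq_of_meet ⟨z, hzU, hzy⟩
    have hyy : y ∈ cls A y := mem_cls_self hA hy.1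
    rw [← this] at hyy
    exact hy.2 hyy
  · exact (cls_convex A x).isPreconnected.subset_connectedComponentIn
      (mem_cls_self hA hx) (cls_subset_M hA x)

lemma chamber_iff {A : Finset (Set V)} (hA : ∀ H ∈ A, IsHyperplane ℝ H) {C : Set V} :
    IsChamberIn Set.univ A C ↔ ∃ x ∈ MSet A, C = cls A x := by
  unfold IsChamberIn
  constructor
  · rintro ⟨x, hx, rfl⟩
    exact ⟨x, hx, component_eq_cls hA hx⟩
  · rintro ⟨x, hx, rfl⟩
    exact ⟨x, hx, (component_eq_cls hA hx).symm⟩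

end ArrAux7
noncomputable section ArrAux8
variable {ℓ : ℕ}
local notation "V" => (Fin ℓ → ℝ)

def chamberPat (A : Finset (Set V)) (C : Set V) : Finset (Set V) :=
  A.filter fun H => C ⊆ {y | hcv H < hfv H y}

lemma chamberPat_cls {A : Finset (Set V)} (hA : ∀ H ∈ A, IsHyperplane ℝ H) {x : V}
    (hx : x ∈ MSet A) : chamberPat A (cls A x) = pat A x := by
  unfold chamberPat pat
  apply Finset.filter_congr
  intro H hH
  constructor
  · intro h
    exact h (mem_cls_self hA hx)
  · intro h y hy
    have hmem := Set.mem_iInter₂.mp hy H hH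
    rw [if_pos h] at hmem
    exact hmem

lemma chamber_count {A : Finset (Set V)} (hA : ∀ H ∈ A, IsHyperplane ℝ H)
    (Wq P : Set V) :
    {C : Set V | IsChamberIn Set.univ A C ∧ (C ∩ Wq).Nonempty ∧ C ∩ P = ∅}.ncard
      = ((Epat A Wq) \ (Epat A P)).ncard := by
  classical
  set 𝒮 := {C : Set V | IsChamberIn Set.univ A C ∧ (C ∩ Wq).Nonempty ∧ C ∩ P = ∅} with h𝒮
  have himg : chamberPat A '' 𝒮 = (Epat A Wq) \ (Epat A P) := by
    apply Set.Subset.antisymm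
    · rintro S ⟨C, hC, rfl⟩
      obtain ⟨hCc, hCW, hCP⟩ := hC
      obtain ⟨x, hxM, rfl⟩ := (chamber_iff hA).mp hCc
      rw [chamberPat_cls hA hxM]
      obtain ⟨z, hzC, hzW⟩ := hCW
      have hzM : z ∈ MSet A := cls_subset_M hA x hzC
      have hzpat : pat A z = pat A x := ((mem_cls_iff hA hxM).mp hzC).2
      constructor
      · exact ⟨z, ⟨hzW, hzM.2⟩, hzpat⟩
      · rintro ⟨w, hw, hwpat⟩
        have hwM : w ∈ MSet A := ⟨trivial, hw.2⟩
        have hwC : w ∈ cls A x := (mem_cls_iff hA hxM).mpr ⟨hwM, hwpat⟩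
        have : w ∈ cls A x ∩ P := ⟨hwC, hw.1⟩
        rw [hCP] at this
        exact this
    · rintro S ⟨⟨z, hz, rfl⟩, hSP⟩
      have hzM : z ∈ MSet A := ⟨trivial, hz.2⟩
      refine ⟨cls A z, ⟨?_, ⟨z, mem_cls_self hA hzM, hz.1⟩, ?_⟩, ?_⟩
      · exact (chamber_iff hA).mpr ⟨z, hzM, rfl⟩
      · apply Set.eq_empty_iff_forall_notMem.mpr
        rintro w ⟨hwC, hwP⟩
        have hwM := cls_subset_M hA z hwC
        have hwpat : pat A w = pat A z := ((mem_cls_iff hA hzM).mp hwC).2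
        exact hSP ⟨w, ⟨hwP, hwM.2⟩, hwpat⟩
      · exact chamberPat_cls hA hzM
  have hinj : Set.InjOn (chamberPat A) 𝒮 := by
    rintro C1 h1 C2 h2 heq
    obtain ⟨x1, hx1, rfl⟩ := (chamber_iff hA).mp h1.1
    obtain ⟨x2, hx2, rfl⟩ := (chamber_iff hA).mp h2.1
    rw [chamberPat_cls hA hx1, chamberPat_cls hA hx2] at heq
    apply cls_eq_of_meet
    exact ⟨x2, (mem_cls_iff hA hx1).mpr ⟨hx2, heq.symm⟩, mem_cls_self hA hx2⟩
  rw [← himg, Set.ncard_image_of_injOn hinj]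

end ArrAux8
noncomputable section ArrAux9
variable {ℓ : ℕ}
local notation "V" => (Fin ℓ → ℝ)

lemma hyp_proper {H : Set V} (h : IsHyperplane ℝ H) : ∃ x : V, x ∉ H := by
  obtain ⟨f, c, hf, rfl⟩ := h
  have hv : ∃ v : V, f v ≠ 0 := by
    by_contra hcon
    push_neg at hcon
    exact hf (LinearMap.ext fun v => by rw [hcon v]; rfl)
  obtain ⟨v, hv⟩ := hv
  refine ⟨((c + 1) / f v) • v, ?_⟩
  simp only [Set.mem_setOf_eq, map_smul, smul_eq_mul]
  rw [div_mul_cancel₀ _ hv]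
  intro hcon
  linarith

lemma univ_mem_poset (A : Finset (Set V)) : Set.univ ∈ interPosetIn Set.univ A := by
  refine Finset.mem_filter.mpr ⟨Finset.mem_image.mpr ⟨∅, by simp, by simp⟩, ⟨0, trivial⟩⟩

/-- the Whitney candidate for the Möbius function -/
def gW (A : Finset (Set V)) (X : Set V) : ℤ :=
  ∑ B ∈ A.powerset.filter (fun B => Set.univ ∩ ⋂ H ∈ B, H = X), (-1) ^ B.card

lemma gW_system (A : Finset (Set V)) (hA : ∀ H ∈ A, IsHyperplane ℝ H) :
    ∀ X ∈ interPosetIn Set.univ A,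
      (∑ Y ∈ (interPosetIn Set.univ A).filter fun Y => X ⊆ Y, gW A Y)
        = if X = Set.univ then 1 else 0 := by
  intro X hX
  obtain ⟨hXim, hXne⟩ := Finset.mem_filter.mp hX
  obtain ⟨B0, hB0, hB0X⟩ := Finset.mem_image.mp hXim
  unfold gW
  rw [Finset.sum_fiberwise_eq_sum_filter A.powerset
    ((interPosetIn Set.univ A).filter fun Y => X ⊆ Y)
    (fun B => Set.univ ∩ ⋂ H ∈ B, H) (fun B => (-1) ^ B.card)]
  have hfilter : A.powerset.filter
      (fun B => (Set.univ ∩ ⋂ H ∈ B, H) ∈ (interPosetIn Set.univ A).filter fun Y => X ⊆ Y)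
      = (A.filter fun H => X ⊆ H).powerset := by
    ext B
    simp only [Finset.mem_filter, Finset.mem_powerset]
    constructor
    · rintro ⟨hBA, hmem⟩
      have hXB : X ⊆ Set.univ ∩ ⋂ H ∈ B, H := hmem.2
      intro H hHB
      refine Finset.mem_filter.mpr ⟨hBA hHB, fun x hx => ?_⟩
      exact Set.mem_iInter₂.mp (hXB hx).2 H hHB
    · intro hBsub
      have hBA : B ⊆ A := hBsub.trans (A.filter_subset _)
      have hXB : X ⊆ Set.univ ∩ ⋂ H ∈ B, H := by
        intro x hx
        exact ⟨trivial, Set.mem_iInter₂.mpr fun H hH =>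
          (Finset.mem_filter.mp (hBsub hH)).2 hx⟩
      refine ⟨hBA, ?_, hXB⟩
      exact Finset.mem_filter.mpr ⟨Finset.mem_image.mpr
        ⟨B, Finset.mem_powerset.mpr hBA, rfl⟩, hXne.mono hXB⟩
  rw [hfilter, Finset.sum_powerset_neg_one_pow_card]
  by_cases hXu : X = Set.univ
  · rw [if_pos hXu, if_pos]
    apply Finset.filter_eq_empty_iff.mpr
    intro H hH
    obtain ⟨x, hx⟩ := hyp_proper (hA H hH)
    intro hcon
    rw [hXu] at hcon
    exact hx (hcon trivial)
  · rw [if_neg hXu, if_neg]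
    have hB0ne : B0 ≠ ∅ := by
      intro hcon
      rw [hcon] at hB0X
      simp at hB0X
      exact hXu hB0X.symm
    obtain ⟨H0, hH0⟩ := Finset.nonempty_of_ne_empty hB0ne
    have hXH0 : X ⊆ H0 := by
      intro x hx
      rw [← hB0X] at hx
      exact Set.mem_iInter₂.mp hx.2 H0 hH0
    exact Finset.ne_empty_of_mem
      (Finset.mem_filter.mpr ⟨Finset.mem_powerset.mp hB0 hH0, hXH0⟩)

end ArrAux9
noncomputable section ArrAux10
variable {ℓ : ℕ}
local notation "V" => (Fin ℓ → ℝ)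

lemma mobius_step {A : Finset (Set V)} {μ : Set V → ℤ}
    (hμ : IsMobiusIn Set.univ A μ)
    (hν : ∀ X ∈ interPosetIn Set.univ A,
      (∑ Y ∈ (interPosetIn Set.univ A).filter fun Y => X ⊆ Y, gW A Y)
        = if X = Set.univ then 1 else 0)
    {X : Set V} (hX : X ∈ interPosetIn Set.univ A)
    (hrec : ∀ Y ∈ (interPosetIn Set.univ A).filter fun Y => X ⊂ Y, μ Y = gW A Y) :
    μ X = gW A X := by
  set L := interPosetIn Set.univ A with hL
  have hsplit : L.filter (fun Y => X ⊆ Y) = insert X (L.filter fun Y => X ⊂ Y) := by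
    ext Y
    simp only [Finset.mem_filter, Finset.mem_insert]
    constructor
    · rintro ⟨hY, hXY⟩
      rcases eq_or_ne Y X with h | h
      · exact Or.inl h
      · exact Or.inr ⟨hY, hXY.ssubset_of_ne h.symm⟩
    · rintro (rfl | ⟨hY, hXY⟩)
      · exact ⟨hX, subset_rfl⟩
      · exact ⟨hY, hXY.subset⟩
  have hXnot : X ∉ L.filter (fun Y => X ⊂ Y) := by
    simp only [Finset.mem_filter]
    rintro ⟨-, h⟩
    exact h.ne rfl
  have h1 := hμ X hX
  have h2 := hν X hX
  rw [hsplit, Finset.sum_insert hXnot] at h1 h2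
  have h3 : ∑ Y ∈ L.filter (fun Y => X ⊂ Y), μ Y
      = ∑ Y ∈ L.filter (fun Y => X ⊂ Y), gW A Y :=
    Finset.sum_congr rfl hrec
  have h4 := h1.trans h2.symm
  linarith

lemma mobius_eq_gW {A : Finset (Set V)} (hA : ∀ H ∈ A, IsHyperplane ℝ H)
    {μ : Set V → ℤ} (hμ : IsMobiusIn Set.univ A μ) :
    ∀ X ∈ interPosetIn Set.univ A, μ X = gW A X := by
  set L := interPosetIn Set.univ A with hL
  suffices h : ∀ n : ℕ, ∀ X ∈ L, (L.filter fun Y => X ⊂ Y).card ≤ n → μ X = gW A X by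
    intro X hX
    exact h _ X hX le_rfl
  intro n
  induction n with
  | zero =>
    intro X hX hcard
    apply mobius_step hμ (gW_system A hA) hX
    intro Y hY
    rw [Nat.le_zero, Finset.card_eq_zero] at hcard
    rw [hcard] at hY
    exact absurd hY (Finset.notMem_empty Y)
  | succ n IH =>
    intro X hX hcard
    apply mobius_step hμ (gW_system A hA) hX
    intro Y hY
    obtain ⟨hYL, hXY⟩ := Finset.mem_filter.mp hY
    apply IH Y hYL
    have hsub : L.filter (fun Z => Y ⊂ Z) ⊆ L.filter (fun Z => X ⊂ Z) := by
      intro Z hZ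
      obtain ⟨h1, h2⟩ := Finset.mem_filter.mp hZ
      exact Finset.mem_filter.mpr ⟨h1, hXY.trans h2⟩
    have hYnot : Y ∉ L.filter (fun Z => Y ⊂ Z) := by
      simp only [Finset.mem_filter]
      rintro ⟨-, h⟩
      exact h.ne rfl
    have hss : L.filter (fun Z => Y ⊂ Z) ⊂ L.filter (fun Z => X ⊂ Z) :=
      (Finset.ssubset_iff_of_subset hsub).mpr ⟨Y, hY, hYnot⟩
    have := Finset.card_lt_card hss
    omega

end ArrAux10
noncomputable section ArrAux11
variable {ℓ : ℕ}
local notation "V" => (Fin ℓ → ℝ)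

lemma poin_coeff (A : Finset (Set V)) (μ : Set V → ℤ) (q : ℕ) :
    (poinIn ℝ Set.univ A μ).coeff q
      = ∑ X ∈ interPosetIn Set.univ A,
          (if rkIn ℝ Set.univ X = q then μ X * (-1) ^ q else 0) := by
  rw [poinIn, Polynomial.finset_sum_coeff]
  apply Finset.sum_congr rfl
  intro X _
  have hC : (-1 : Polynomial ℤ) = Polynomial.C (-1 : ℤ) := by simp
  have h1 : (Polynomial.C (μ X) * (-Polynomial.X : Polynomial ℤ) ^ (rkIn ℝ Set.univ X)).coeff q
      = μ X * (-1 : ℤ) ^ (rkIn ℝ Set.univ X) * (if q = rkIn ℝ Set.univ X then 1 else 0) := by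
    rw [neg_pow, hC, ← Polynomial.C_pow, ← mul_assoc, ← Polynomial.C_mul,
      Polynomial.coeff_C_mul, Polynomial.coeff_X_pow]
  rw [h1]
  by_cases h : rkIn ℝ Set.univ X = q
  · rw [if_pos h, if_pos h.symm, h, mul_one]
  · rw [if_neg h, if_neg (fun hc => h hc.symm), mul_zero]

lemma coeff_B_form {A : Finset (Set V)} (hA : ∀ H ∈ A, IsHyperplane ℝ H)
    {μ : Set V → ℤ} (hμ : IsMobiusIn Set.univ A μ) (q : ℕ) :
    (poinIn ℝ Set.univ A μ).coeff q
      = ∑ B ∈ A.powerset,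
          (if (Set.univ ∩ ⋂ H ∈ B, H).Nonempty
              ∧ rkIn ℝ Set.univ (Set.univ ∩ ⋂ H ∈ B, H) = q
           then (-1) ^ (B.card + q) else 0) := by
  classical
  set L := interPosetIn Set.univ A with hL
  rw [poin_coeff]
  have h1 : ∑ X ∈ L, (if rkIn ℝ Set.univ X = q then μ X * (-1) ^ q else 0)
      = ∑ X ∈ L, (if rkIn ℝ Set.univ X = q then gW A X * (-1) ^ q else 0) := by
    apply Finset.sum_congr rfl
    intro X hX
    rw [mobius_eq_gW hA hμ X hX]
  rw [h1, ← Finset.sum_filter]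
  have h2 : ∀ X : Set V, gW A X * (-1 : ℤ) ^ q
      = ∑ B ∈ A.powerset.filter (fun B => Set.univ ∩ ⋂ H ∈ B, H = X),
          (-1 : ℤ) ^ (B.card + q) := by
    intro X
    rw [gW, Finset.sum_mul]
    apply Finset.sum_congr rfl
    intro B _
    rw [pow_add]
  calc ∑ X ∈ L.filter (fun X => rkIn ℝ Set.univ X = q), gW A X * (-1) ^ q
      = ∑ X ∈ L.filter (fun X => rkIn ℝ Set.univ X = q),
          ∑ B ∈ A.powerset.filter (fun B => Set.univ ∩ ⋂ H ∈ B, H = X),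
            (-1 : ℤ) ^ (B.card + q) := Finset.sum_congr rfl fun X _ => h2 X
    _ = ∑ B ∈ A.powerset.filter
          (fun B => (Set.univ ∩ ⋂ H ∈ B, H) ∈ L.filter (fun X => rkIn ℝ Set.univ X = q)),
            (-1 : ℤ) ^ (B.card + q) :=
        Finset.sum_fiberwise_eq_sum_filter _ _ _ _
    _ = ∑ B ∈ A.powerset,
          (if (Set.univ ∩ ⋂ H ∈ B, H) ∈ L.filter (fun X => rkIn ℝ Set.univ X = q)
           then (-1 : ℤ) ^ (B.card + q) else 0) := Finset.sum_filter _ _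
    _ = _ := by
        apply Finset.sum_congr rfl
        intro B hB
        have hiff : (Set.univ ∩ ⋂ H ∈ B, H) ∈ L.filter (fun X => rkIn ℝ Set.univ X = q)
            ↔ (Set.univ ∩ ⋂ H ∈ B, H).Nonempty
              ∧ rkIn ℝ Set.univ (Set.univ ∩ ⋂ H ∈ B, H) = q := by
          constructor
          · intro h
            obtain ⟨hmemL, hrk⟩ := Finset.mem_filter.mp h
            exact ⟨(Finset.mem_filter.mp hmemL).2, hrk⟩
          · rintro ⟨hne, hrk⟩
            exact Finset.mem_filter.mpr
              ⟨Finset.mem_filter.mpr ⟨Finset.mem_image.mpr ⟨B, hB, rfl⟩, hne⟩, hrk⟩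
        rw [if_congr hiff rfl rfl]

lemma Tsum_generic {A : Finset (Set V)} {F : Set V} {q : ℕ}
    (hgen : IsGenericFlat ℝ q A F) :
    Tsum A F = ∑ B ∈ A.powerset,
      (if (Set.univ ∩ ⋂ H ∈ B, H).Nonempty
          ∧ rkIn ℝ Set.univ (Set.univ ∩ ⋂ H ∈ B, H) ≤ q
       then (-1) ^ (B.card + rkIn ℝ Set.univ (Set.univ ∩ ⋂ H ∈ B, H)) else 0) := by
  obtain ⟨-, hFne, hFdim, hX⟩ := hgen
  rw [Tsum]
  apply Finset.sum_congr rfl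
  intro B hB
  have hFX : F ∩ ⋂ H ∈ B, H = F ∩ (Set.univ ∩ ⋂ H ∈ B, H) := by
    rw [Set.univ_inter]
  by_cases hne : (Set.univ ∩ ⋂ H ∈ B, H).Nonempty
  · have hXL : (Set.univ ∩ ⋂ H ∈ B, H) ∈ interPosetIn Set.univ A :=
      Finset.mem_filter.mpr ⟨Finset.mem_image.mpr ⟨B, hB, rfl⟩, hne⟩
    obtain ⟨h1, h2⟩ := hX _ hXL
    by_cases hrk : rkIn ℝ Set.univ (Set.univ ∩ ⋂ H ∈ B, H) ≤ q
    · obtain ⟨hFXne, hFXdim⟩ := h1 hrk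
      rw [hFX] at *
      rw [if_pos hFXne, if_pos ⟨hne, hrk⟩, hFdim, hFXdim]
      set r := rkIn ℝ Set.univ (Set.univ ∩ ⋂ H ∈ B, H) with hr
      have he : B.card + q + (q - r) = (B.card + r) + 2 * (q - r) := by omega
      rw [he, pow_add, pow_mul, neg_one_sq, one_pow, mul_one]
    · have hFXe : F ∩ ⋂ H ∈ B, H = ∅ := by rw [hFX]; exact h2 (not_le.mp hrk)
      rw [hFXe, if_neg Set.not_nonempty_empty, if_neg (fun hc => hrk hc.2)]
  · have h0 : Set.univ ∩ ⋂ H ∈ B, H = ∅ := Set.not_nonempty_iff_eq_empty.mp hne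
    have hR : F ∩ ⋂ H ∈ B, H = ∅ := by
      apply Set.eq_empty_iff_forall_notMem.mpr
      intro x hx
      have hx2 : x ∈ Set.univ ∩ ⋂ H ∈ B, H := ⟨trivial, hx.2⟩
      rw [h0] at hx2
      exact hx2
    rw [hR, if_neg Set.not_nonempty_empty, if_neg (fun hc => hne hc.1)]

lemma Epat_empty (A : Finset (Set V)) : Epat A (∅ : Set V) = ∅ := by
  simp [Epat]

lemma svc_emptyW (A : Finset (Set V)) : svc A (∅ : Set V) = 0 := by
  rw [svc, Epat_empty, Set.ncard_empty]

end ArrAux11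


/-- Let `F⁰ ⊂ F¹ ⊂ ⋯ ⊂ F^ℓ = ℝ^ℓ` be a generic flag for a finite
arrangement `A` of affine hyperplanes in `ℝ^ℓ` (with the convention `F⁻¹ = ∅`).  For
each `q ≤ ℓ`, the number of chambers `C` with `C ∩ F^q ≠ ∅` and `C ∩ F^{q-1} = ∅`
equals `b_q(A)`, the coefficient of `t^q` in the Poincaré polynomial `π(A,t)`. -/
theorem chambers_of_flag {ℓ : ℕ} (A : Finset (Set (Fin ℓ → ℝ)))
    (hA : ∀ H ∈ A, IsHyperplane ℝ H)
    (F : ℕ → Set (Fin ℓ → ℝ))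
    (hgen : ∀ q ≤ ℓ, IsGenericFlat ℝ q A (F q))
    (hchain : ∀ q < ℓ, F q ⊆ F (q + 1))
    (htop : F ℓ = Set.univ)
    (μ : Set (Fin ℓ → ℝ) → ℤ) (hμ : IsMobiusIn Set.univ A μ)
    (q : ℕ) (hq : q ≤ ℓ) :
    (Nat.card {C : Set (Fin ℓ → ℝ) //
        IsChamberIn Set.univ A C ∧ (C ∩ F q).Nonempty ∧
          ∀ p, q = p + 1 → C ∩ F p = ∅} : ℤ)
      = (poinIn ℝ Set.univ A μ).coeff q := by

  classical
  rw [coeff_B_form hA hμ q]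
  obtain ⟨⟨Sq, hSq⟩, hFqne, hFqdim, -⟩ := hgen q hq
  have hTq : (svc A (F q) : ℤ) = Tsum A (F q) := by
    rw [← hSq]
    exact lemZ A hA Sq (by rw [hSq]; exact hFqne)
  have hTgen := Tsum_generic (hgen q hq)
  rcases q with _ | p
  · -- q = 0
    have hcard : Nat.card {C : Set (Fin ℓ → ℝ) //
        IsChamberIn Set.univ A C ∧ (C ∩ F 0).Nonempty ∧
          ∀ p, 0 = p + 1 → C ∩ F p = ∅}
        = {C : Set (Fin ℓ → ℝ) | IsChamberIn Set.univ A C ∧ (C ∩ F 0).Nonempty ∧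
          ∀ p, 0 = p + 1 → C ∩ F p = ∅}.ncard := Nat.card_coe_set_eq _
    have hset : {C : Set (Fin ℓ → ℝ) | IsChamberIn Set.univ A C ∧ (C ∩ F 0).Nonempty ∧
          ∀ p, 0 = p + 1 → C ∩ F p = ∅}
        = {C : Set (Fin ℓ → ℝ) | IsChamberIn Set.univ A C ∧ (C ∩ F 0).Nonempty ∧
          C ∩ (∅ : Set (Fin ℓ → ℝ)) = ∅} := by
      ext C
      constructor
      · rintro ⟨h1, h2, -⟩
        exact ⟨h1, h2, Set.inter_empty C⟩
      · rintro ⟨h1, h2, -⟩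
        exact ⟨h1, h2, fun p hp => absurd hp (by omega)⟩
    rw [hcard, hset, chamber_count hA (F 0) ∅, Epat_empty, Set.diff_empty]
    rw [show (Epat A (F 0)).ncard = svc A (F 0) from rfl, hTq, hTgen]
    apply Finset.sum_congr rfl
    intro B _
    by_cases h : (Set.univ ∩ ⋂ H ∈ B, H).Nonempty
        ∧ rkIn ℝ Set.univ (Set.univ ∩ ⋂ H ∈ B, H) = 0
    · rw [if_pos ⟨h.1, le_of_eq h.2⟩, if_pos h, h.2]
    · rw [if_neg (fun hc => h ⟨hc.1, Nat.le_zero.mp hc.2⟩), if_neg h]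
  · -- q = p + 1
    have hpl : p < ℓ := by omega
    obtain ⟨⟨Sp, hSp⟩, hFpne, hFpdim, -⟩ := hgen p (by omega)
    have hTp : (svc A (F p) : ℤ) = Tsum A (F p) := by
      rw [← hSp]
      exact lemZ A hA Sp (by rw [hSp]; exact hFpne)
    have hTgenp := Tsum_generic (hgen p (by omega))
    have hcard : Nat.card {C : Set (Fin ℓ → ℝ) //
        IsChamberIn Set.univ A C ∧ (C ∩ F (p + 1)).Nonempty ∧
          ∀ p', p + 1 = p' + 1 → C ∩ F p' = ∅}
        = {C : Set (Fin ℓ → ℝ) | IsChamberIn Set.univ A C ∧ (C ∩ F (p + 1)).Nonempty ∧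
          ∀ p', p + 1 = p' + 1 → C ∩ F p' = ∅}.ncard := Nat.card_coe_set_eq _
    have hset : {C : Set (Fin ℓ → ℝ) | IsChamberIn Set.univ A C ∧ (C ∩ F (p + 1)).Nonempty ∧
          ∀ p', p + 1 = p' + 1 → C ∩ F p' = ∅}
        = {C : Set (Fin ℓ → ℝ) | IsChamberIn Set.univ A C ∧ (C ∩ F (p + 1)).Nonempty ∧
          C ∩ F p = ∅} := by
      ext C
      constructor
      · rintro ⟨h1, h2, h3⟩
        exact ⟨h1, h2, h3 p rfl⟩
      · rintro ⟨h1, h2, h3⟩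
        refine ⟨h1, h2, fun p' hp' => ?_⟩
        have : p' = p := by omega
        rw [this]
        exact h3
    rw [hcard, hset, chamber_count hA (F (p + 1)) (F p)]
    have hsub : Epat A (F p) ⊆ Epat A (F (p + 1)) :=
      Set.image_mono (Set.diff_subset_diff_left (hchain p hpl))
    rw [Set.ncard_diff hsub (Epat_finite A (F p))]
    have hle : (Epat A (F p)).ncard ≤ (Epat A (F (p + 1))).ncard :=
      Set.ncard_le_ncard hsub (Epat_finite _ _)
    rw [Nat.cast_sub hle,
      show (Epat A (F (p + 1))).ncard = svc A (F (p + 1)) from rfl,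
      show (Epat A (F p)).ncard = svc A (F p) from rfl,
      hTq, hTp, hTgen, hTgenp, ← Finset.sum_sub_distrib]
    apply Finset.sum_congr rfl
    intro B _
    by_cases h1 : (Set.univ ∩ ⋂ H ∈ B, H).Nonempty
    · by_cases h2 : rkIn ℝ Set.univ (Set.univ ∩ ⋂ H ∈ B, H) ≤ p
      · rw [if_pos ⟨h1, by omega⟩, if_pos ⟨h1, h2⟩,
          if_neg (fun hc => by omega), sub_self]
      · by_cases h3 : rkIn ℝ Set.univ (Set.univ ∩ ⋂ H ∈ B, H) = p + 1
        · rw [if_pos ⟨h1, le_of_eq h3⟩, if_neg (fun hc => h2 hc.2),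
            if_pos ⟨h1, h3⟩, h3, sub_zero]
        · rw [if_neg (fun hc => by omega), if_neg (fun hc => h2 hc.2),
            if_neg (fun hc => h3 hc.2), sub_zero]
    · rw [if_neg (fun hc => h1 hc.1), if_neg (fun hc => h1 hc.1),
        if_neg (fun hc => h1 hc.1), sub_zero]
end

section
/- Let A be an essential finite arrangement of affine hyperplanes in ℝ^ℓ and let F^{ℓ−1} be a generic affine hyperplane for A. Then b_ℓ(A) = β(A ∪ {F^{ℓ−1}}), where A ∪ {F^{ℓ−1}} is the arrangement obtained by adding the hyperplane F^{ℓ−1} to A. -/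
open scoped Classical

namespace ArrAux

section Comb


variable {α : Type*}

lemma upset_lt {L : Finset (Set α)} {X Y : Set α} (hY : Y ∈ L) (hXY : X ⊆ Y)
    (hne : Y ≠ X) (hX : X ∈ L) :
    (L.filter fun Z => Y ⊆ Z).card < (L.filter fun Z => X ⊆ Z).card := by
  apply Finset.card_lt_card
  rw [Finset.ssubset_def]
  constructor
  · intro Z hZ
    rw [Finset.mem_filter] at *
    exact ⟨hZ.1, hXY.trans hZ.2⟩
  · intro hsub
    have hXmem : X ∈ L.filter fun Z => X ⊆ Z := by simp [hX]
    have := hsub hXmem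
    rw [Finset.mem_filter] at this
    exact hne (subset_antisymm this.2 hXY)

lemma eq_zero_of_upper {L : Finset (Set α)} {f : Set α → ℤ}
    (h : ∀ X ∈ L, (∑ Y ∈ L.filter fun Y => X ⊆ Y, f Y) = 0) :
    ∀ X ∈ L, f X = 0 := by
  suffices H : ∀ n X, X ∈ L → (L.filter fun Y => X ⊆ Y).card ≤ n → f X = 0 from
    fun X hX => H _ X hX le_rfl
  intro n
  induction n with
  | zero =>
    intro X hX hle
    have : 0 < (L.filter fun Y => X ⊆ Y).card :=
      Finset.card_pos.2 ⟨X, Finset.mem_filter.2 ⟨hX, subset_rfl⟩⟩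
    omega
  | succ n ih =>
    intro X hX hle
    have key := h X hX
    have hXmem : X ∈ L.filter fun Y => X ⊆ Y := by simp [hX]
    rw [← Finset.add_sum_erase _ _ hXmem] at key
    rw [Finset.sum_eq_zero (fun Y hY => ?_)] at key
    · simpa using key
    · rw [Finset.mem_erase, Finset.mem_filter] at hY
      exact ih Y hY.2.1 (by have := upset_lt hY.2.1 hY.2.2 hY.1 hX; omega)

variable (L : Finset (Set α)) (X : Set α)

/-- interval cardinality used as fuel for the dual Möbius function -/
noncomputable def icard (Z : Set α) : ℕ :=
  (L.filter fun W => X ⊆ W ∧ W ⊆ Z ∧ W ≠ Z).card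

noncomputable def nuAux : ℕ → Set α → ℤ
  | 0, _ => 0
  | n + 1, Z =>
    (if Z = X then 1 else 0)
      - ∑ W ∈ L.filter fun W => X ⊆ W ∧ W ⊆ Z ∧ W ≠ Z, nuAux n W

lemma icard_lt {L : Finset (Set α)} {X W Z : Set α} (hW : W ∈ L) (hXW : X ⊆ W)
    (hWZ : W ⊆ Z) (hne : W ≠ Z) : icard L X W < icard L X Z := by
  apply Finset.card_lt_card
  rw [Finset.ssubset_def]
  constructor
  · intro W' hW'
    rw [Finset.mem_filter] at *
    refine ⟨hW'.1, hW'.2.1, hW'.2.2.1.trans hWZ, fun hEq => ?_⟩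
    exact hne (subset_antisymm hWZ (hEq ▸ hW'.2.2.1))
  · intro hsub
    have hmem : W ∈ L.filter fun W' => X ⊆ W' ∧ W' ⊆ Z ∧ W' ≠ Z := by
      rw [Finset.mem_filter]; exact ⟨hW, hXW, hWZ, hne⟩
    have := hsub hmem
    rw [Finset.mem_filter] at this
    exact this.2.2.2 rfl

lemma nuAux_stable (n : ℕ) : ∀ m Z, icard L X Z ≤ n → icard L X Z ≤ m →
    nuAux L X (n + 1) Z = nuAux L X (m + 1) Z := by
  induction n using Nat.strong_induction_on with
  | _ n ih =>
    intro m Z hn hm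
    show _ - _ = _ - _
    congr 1
    apply Finset.sum_congr rfl
    intro W hW
    rw [Finset.mem_filter] at hW
    have hlt : icard L X W < icard L X Z := icard_lt hW.1 hW.2.1 hW.2.2.1 hW.2.2.2
    have hone : 1 ≤ icard L X Z := by
      apply Finset.card_pos.2 ⟨W, ?_⟩
      rw [Finset.mem_filter]; exact ⟨hW.1, hW.2⟩
    obtain ⟨n', rfl⟩ : ∃ n', n = n' + 1 := ⟨n - 1, by omega⟩
    obtain ⟨m', rfl⟩ : ∃ m', m = m' + 1 := ⟨m - 1, by omega⟩
    exact ih n' (by omega) m' W (by omega) (by omega)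

/-- the dual ("upper") Möbius function of the poset `L` with top-reference `X` -/
noncomputable def nu (Z : Set α) : ℤ := nuAux L X (L.card + 1) Z

lemma icard_le_card (Z : Set α) : icard L X Z ≤ L.card :=
  Finset.card_le_card (Finset.filter_subset _ _)

lemma nu_sum {L : Finset (Set α)} {X Z : Set α} (hZ : Z ∈ L) (hXZ : X ⊆ Z) :
    (∑ W ∈ L.filter fun W => X ⊆ W ∧ W ⊆ Z, nu L X W) = if Z = X then 1 else 0 := by
  have hcard : 1 ≤ L.card := Finset.card_pos.2 ⟨Z, hZ⟩
  have hsplit : (L.filter fun W => X ⊆ W ∧ W ⊆ Z)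
      = insert Z (L.filter fun W => X ⊆ W ∧ W ⊆ Z ∧ W ≠ Z) := by
    ext W
    simp only [Finset.mem_insert, Finset.mem_filter]
    constructor
    · intro hW
      by_cases hWZ : W = Z
      · exact Or.inl hWZ
      · exact Or.inr ⟨hW.1, hW.2.1, hW.2.2, hWZ⟩
    · rintro (rfl | hW)
      · exact ⟨hZ, hXZ, le_rfl⟩
      · exact ⟨hW.1, hW.2.1, hW.2.2.1⟩
  rw [hsplit, Finset.sum_insert (by simp)]
  have hnu : ∀ W ∈ L.filter fun W => X ⊆ W ∧ W ⊆ Z ∧ W ≠ Z,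
      nu L X W = nuAux L X L.card W := by
    intro W hW
    rw [Finset.mem_filter] at hW
    have hicard : icard L X W ≤ L.card - 1 := by
      have : (L.filter fun W' => X ⊆ W' ∧ W' ⊆ W ∧ W' ≠ W) ⊆ L.erase W := by
        intro W' hW'
        rw [Finset.mem_filter] at hW'
        rw [Finset.mem_erase]
        refine ⟨fun hEq => ?_, hW'.1⟩
        exact hW'.2.2.2 hEq
      have := Finset.card_le_card this
      rw [Finset.card_erase_of_mem hW.1] at this
      exact this
    show nuAux L X (L.card + 1) W = nuAux L X L.card W
    obtain ⟨c, hc⟩ : ∃ c, L.card = c + 1 := ⟨L.card - 1, by omega⟩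
    rw [hc]
    exact nuAux_stable L X (c + 1) c W (by omega) (by omega)
  rw [Finset.sum_congr rfl hnu]
  obtain ⟨c, hc⟩ : ∃ c, L.card = c + 1 := ⟨L.card - 1, by omega⟩
  have hZdef : nu L X Z
      = (if Z = X then 1 else 0) - ∑ W ∈ L.filter fun W => X ⊆ W ∧ W ⊆ Z ∧ W ≠ Z,
          nuAux L X L.card W := by
    show nuAux L X (L.card + 1) Z = _
    rw [hc]
    rfl
  rw [hZdef]
  ring


end Comb

section Geo


variable {ℓ : ℕ}

local notation "V" => Fin ℓ → ℝ

/-- `s` is (the carrier of) an affine subspace. -/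
def IsAff (s : Set V) : Prop := ∃ W : AffineSubspace ℝ V, (W : Set V) = s

lemma isAff_univ : IsAff (Set.univ : Set V) := ⟨⊤, by simp⟩

lemma isAff_inter {s t : Set V} (hs : IsAff s) (ht : IsAff t) : IsAff (s ∩ t) := by
  obtain ⟨W1, rfl⟩ := hs
  obtain ⟨W2, rfl⟩ := ht
  exact ⟨W1 ⊓ W2, AffineSubspace.coe_inf W1 W2⟩

lemma flatDim_coe (W : AffineSubspace ℝ V) :
    flatDim ℝ (W : Set V) = Module.finrank ℝ W.direction := by
  rw [flatDim, AffineSubspace.affineSpan_coe]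

lemma flatDim_univ : flatDim ℝ (Set.univ : Set V) = ℓ := by
  rw [show (Set.univ : Set V) = ((⊤ : AffineSubspace ℝ V) : Set V) by simp,
    flatDim_coe, AffineSubspace.direction_top, finrank_top]
  exact Module.finrank_fin_fun ℝ

lemma flatDim_le (s : Set V) : flatDim ℝ s ≤ ℓ := by
  rw [flatDim]
  have := Submodule.finrank_le (affineSpan ℝ s).direction
  rwa [Module.finrank_fin_fun] at this

lemma flatDim_mono {s t : Set V} (h : s ⊆ t) : flatDim ℝ s ≤ flatDim ℝ t := by
  rw [flatDim, flatDim]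
  exact Submodule.finrank_mono (AffineSubspace.direction_le (affineSpan_mono ℝ h))

lemma flatDim_strict {s t : Set V} (hs : IsAff s) (ht : IsAff t) (hne : s.Nonempty)
    (hsub : s ⊆ t) (hneq : s ≠ t) : flatDim ℝ s < flatDim ℝ t := by
  obtain ⟨W1, rfl⟩ := hs
  obtain ⟨W2, rfl⟩ := ht
  rw [flatDim_coe, flatDim_coe]
  have hlt : W1 < W2 := by
    rw [← SetLike.coe_ssubset_coe]
    exact ssubset_of_subset_of_ne hsub hneq
  exact Submodule.finrank_lt_finrank_of_lt (AffineSubspace.direction_lt_of_nonempty hlt hne)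

lemma eq_of_flatDim_eq {s t : Set V} (hs : IsAff s) (ht : IsAff t) (hne : s.Nonempty)
    (hsub : s ⊆ t) (hdim : flatDim ℝ t ≤ flatDim ℝ s) : s = t := by
  by_contra hneq
  exact absurd (flatDim_strict hs ht hne hsub hneq) (by omega)

lemma hyperplane_nonempty {H : Set V} (h : IsHyperplane ℝ H) : H.Nonempty := by
  obtain ⟨f, c, hf, rfl⟩ := h
  obtain ⟨y, hy⟩ : ∃ y, f y ≠ 0 := by
    by_contra hy
    push_neg at hy
    exact hf (LinearMap.ext fun x => by rw [hy x]; rfl)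
  exact ⟨(c / f y) • y, by simp [div_mul_cancel₀ c hy]⟩

lemma hyperplane_isAff {H : Set V} (h : IsHyperplane ℝ H) : IsAff H := by
  obtain ⟨x₀, hx₀⟩ := hyperplane_nonempty h
  obtain ⟨f, c, hf, rfl⟩ := h
  refine ⟨AffineSubspace.mk' x₀ (LinearMap.ker f), Set.ext fun x => ?_⟩
  rw [SetLike.mem_coe, AffineSubspace.mem_mk']
  simp only [vsub_eq_sub, LinearMap.mem_ker, map_sub, Set.mem_setOf_eq, sub_eq_zero]
  have : f x₀ = c := hx₀
  constructor
  · intro h'; rw [h', this]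
  · intro h'; rw [h', this]

lemma finrank_ker {f : (V →ₗ[ℝ] ℝ)} (hf : f ≠ 0) :
    Module.finrank ℝ (LinearMap.ker f) = ℓ - 1 := by
  have h1 := LinearMap.finrank_range_add_finrank_ker f
  rw [Module.finrank_fin_fun] at h1
  have hr1 : Module.finrank ℝ (LinearMap.range f) = 1 := by
    have hle : Module.finrank ℝ (LinearMap.range f) ≤ 1 := by
      have := Submodule.finrank_le (LinearMap.range f)
      rwa [Module.finrank_self] at this
    have hne : LinearMap.range f ≠ ⊥ := fun h => hf (LinearMap.range_eq_bot.1 h)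
    have : Module.finrank ℝ (LinearMap.range f) ≠ 0 :=
      fun h0 => hne (Submodule.finrank_eq_zero.1 h0)
    omega
  omega

lemma hyperplane_flatDim {H : Set V} (h : IsHyperplane ℝ H) : flatDim ℝ H = ℓ - 1 := by
  obtain ⟨x₀, hx₀⟩ := hyperplane_nonempty h
  obtain ⟨f, c, hf, rfl⟩ := h
  have hcoe : ({x | f x = c} : Set V) = (AffineSubspace.mk' x₀ (LinearMap.ker f) : Set V) := by
    refine (Set.ext fun x => ?_).symm
    rw [SetLike.mem_coe, AffineSubspace.mem_mk']
    simp only [vsub_eq_sub, LinearMap.mem_ker, map_sub, Set.mem_setOf_eq, sub_eq_zero]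
    have : f x₀ = c := hx₀
    constructor
    · intro h'; rw [h', this]
    · intro h'; rw [h', this]
  rw [hcoe, flatDim_coe, AffineSubspace.direction_mk']
  exact finrank_ker hf

lemma hyperplane_ne_univ (hl : 1 ≤ ℓ) {H : Set V} (h : IsHyperplane ℝ H) :
    H ≠ Set.univ := by
  intro hEq
  have := hyperplane_flatDim h
  rw [hEq, flatDim_univ] at this
  omega

/-- rank-nullity bound : cutting with a kernel loses at most one dimension -/
lemma finrank_inf_ker (U : Submodule ℝ V) (f : V →ₗ[ℝ] ℝ) :
    Module.finrank ℝ U ≤ Module.finrank ℝ (U ⊓ LinearMap.ker f : Submodule ℝ V) + 1 := by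
  have h1 := LinearMap.finrank_range_add_finrank_ker (f.domRestrict U)
  have h2 : LinearMap.ker (f.domRestrict U) = Submodule.comap U.subtype (LinearMap.ker f) := by
    rw [LinearMap.domRestrict, LinearMap.ker_comp]
  have h3 : Submodule.comap U.subtype (LinearMap.ker f)
      = Submodule.comap U.subtype (U ⊓ LinearMap.ker f) := by
    rw [Submodule.comap_inf, Submodule.comap_subtype_self, top_inf_eq]
  have h4 : Module.finrank ℝ (Submodule.comap U.subtype (U ⊓ LinearMap.ker f))
      = Module.finrank ℝ (U ⊓ LinearMap.ker f : Submodule ℝ V) :=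
    (Submodule.comapSubtypeEquivOfLe inf_le_left).finrank_eq
  have h5 : Module.finrank ℝ (LinearMap.range (f.domRestrict U)) ≤ 1 := by
    have := Submodule.finrank_le (LinearMap.range (f.domRestrict U))
    rwa [Module.finrank_self] at this
  rw [h2, h3, h4] at h1
  omega

/-- cutting an affine set with a hyperplane loses at most one dimension -/
lemma flatDim_inter_hyperplane {s H : Set V} (hs : IsAff s) (hH : IsHyperplane ℝ H)
    (hne : (s ∩ H).Nonempty) : flatDim ℝ s ≤ flatDim ℝ (s ∩ H) + 1 := by
  obtain ⟨W, rfl⟩ := hs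
  obtain ⟨x₀, hx₀W, hx₀H⟩ := hne
  obtain ⟨f, c, hf, rfl⟩ := hH
  have hx₀c : f x₀ = c := hx₀H
  -- the intersection is an affine subspace
  have hAff : IsAff ((W : Set V) ∩ {x | f x = c}) :=
    isAff_inter ⟨W, rfl⟩ (hyperplane_isAff ⟨f, c, hf, rfl⟩)
  obtain ⟨T, hT⟩ := hAff
  rw [flatDim_coe, ← hT, flatDim_coe]
  -- W.direction ⊓ ker f ≤ T.direction
  have hdir : W.direction ⊓ LinearMap.ker f ≤ T.direction := by
    intro v hv
    have hvW : v +ᵥ x₀ ∈ W := AffineSubspace.vadd_mem_of_mem_direction hv.1 hx₀W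
    have hvH : f (v +ᵥ x₀) = c := by
      have : f v = 0 := hv.2
      simp only [vadd_eq_add, map_add, this, zero_add, hx₀c]
    have hvT : v +ᵥ x₀ ∈ T := by
      rw [← SetLike.mem_coe, hT]
      exact ⟨hvW, hvH⟩
    have hx₀T : x₀ ∈ T := by
      rw [← SetLike.mem_coe, hT]
      exact ⟨hx₀W, hx₀c⟩
    have := AffineSubspace.vsub_mem_direction hvT hx₀T
    simpa using this
  calc Module.finrank ℝ W.direction
      ≤ Module.finrank ℝ (W.direction ⊓ LinearMap.ker f : Submodule ℝ V) + 1 :=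
        finrank_inf_ker _ f
    _ ≤ Module.finrank ℝ T.direction + 1 := by
        have := Submodule.finrank_mono hdir
        omega


/-! ### Part 3: the intersection poset of an arrangement -/

lemma mem_interPoset {B : Finset (Set V)} {X : Set V} :
    X ∈ interPosetIn Set.univ B ↔
      X.Nonempty ∧ ∃ S : Finset (Set V), S ⊆ B ∧ X = Set.univ ∩ ⋂ H ∈ S, H := by
  simp only [interPosetIn, Finset.mem_filter, Finset.mem_image, Finset.mem_powerset]
  constructor
  · rintro ⟨⟨S, hS, rfl⟩, hne⟩
    exact ⟨hne, S, hS, rfl⟩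
  · rintro ⟨hne, S, hS, rfl⟩
    exact ⟨⟨S, hS, rfl⟩, hne⟩

lemma univ_mem (B : Finset (Set V)) : Set.univ ∈ interPosetIn (Set.univ : Set V) B := by
  rw [mem_interPoset]
  exact ⟨Set.univ_nonempty, ∅, Finset.empty_subset _, by simp⟩

lemma nonempty_of_mem {B : Finset (Set V)} {X : Set V} (h : X ∈ interPosetIn Set.univ B) :
    X.Nonempty := (mem_interPoset.1 h).1

lemma inter_mem {B : Finset (Set V)} {X Y : Set V} (hX : X ∈ interPosetIn Set.univ B)
    (hY : Y ∈ interPosetIn Set.univ B) (hne : (X ∩ Y).Nonempty) :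
    X ∩ Y ∈ interPosetIn Set.univ B := by
  obtain ⟨-, S, hS, rfl⟩ := mem_interPoset.1 hX
  obtain ⟨-, T, hT, rfl⟩ := mem_interPoset.1 hY
  rw [mem_interPoset]
  refine ⟨hne, S ∪ T, Finset.union_subset hS hT, ?_⟩
  rw [Finset.set_biInter_inter]
  ext x
  simp only [Set.mem_inter_iff, Set.mem_univ, true_and]
  try tauto

lemma hyp_mem {B : Finset (Set V)} {H : Set V} (hH : H ∈ B) (hne : H.Nonempty) :
    H ∈ interPosetIn Set.univ B := by
  rw [mem_interPoset]
  refine ⟨hne, {H}, Finset.singleton_subset_iff.2 hH, ?_⟩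
  simp

lemma exists_sup_hyp {B : Finset (Set V)} {X : Set V} (hX : X ∈ interPosetIn Set.univ B)
    (hne : X ≠ Set.univ) : ∃ H ∈ B, X ⊆ H := by
  obtain ⟨-, S, hS, rfl⟩ := mem_interPoset.1 hX
  rcases Finset.eq_empty_or_nonempty S with rfl | ⟨H, hH⟩
  · exact absurd (by simp) hne
  · refine ⟨H, hS hH, ?_⟩
    refine Set.inter_subset_right.trans ?_
    exact Set.biInter_subset_of_mem hH

lemma isAff_biInter {S : Finset (Set V)} (h : ∀ H ∈ S, IsAff H) :
    IsAff (⋂ H ∈ S, (H : Set V)) := by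
  induction S using Finset.induction_on with
  | empty => simpa using isAff_univ
  | insert a s hnotmem ih =>
    rw [Finset.set_biInter_insert]
    exact isAff_inter (h a (Finset.mem_insert_self a s))
      (ih fun H hH => h H (Finset.mem_insert_of_mem hH))

lemma isAff_of_mem {B : Finset (Set V)} (hB : ∀ H ∈ B, IsHyperplane ℝ H) {X : Set V}
    (hX : X ∈ interPosetIn Set.univ B) : IsAff X := by
  obtain ⟨-, S, hS, rfl⟩ := mem_interPoset.1 hX
  exact isAff_inter isAff_univ (isAff_biInter fun H hH => hyperplane_isAff (hB H (hS hH)))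

lemma rk_eq (X : Set V) : rkIn ℝ (Set.univ : Set V) X = ℓ - flatDim ℝ X := by
  rw [rkIn, flatDim_univ]

/-! ### genericity consequences -/

section Generic

lemma gen_pos {A : Finset (Set V)} {F : Set V} (hF : IsGenericFlat ℝ (ℓ - 1) A F) {X : Set V}
    (hX : X ∈ interPosetIn Set.univ A) (h1 : 1 ≤ flatDim ℝ X) :
    (F ∩ X).Nonempty ∧ flatDim ℝ (F ∩ X) = flatDim ℝ X - 1 := by
  have hgen := (hF.2.2.2 X hX).1
  have hd := flatDim_le X
  rw [rk_eq] at hgen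
  have h := hgen (by omega)
  exact ⟨h.1, by omega⟩

lemma gen_zero {A : Finset (Set V)} {F : Set V} (hF : IsGenericFlat ℝ (ℓ - 1) A F) (hl : 1 ≤ ℓ) {X : Set V}
    (hX : X ∈ interPosetIn Set.univ A) (h0 : flatDim ℝ X = 0) : F ∩ X = ∅ := by
  have hgen := (hF.2.2.2 X hX).2
  rw [rk_eq] at hgen
  exact hgen (by omega)

lemma not_subset_F {A : Finset (Set V)} {F : Set V} (hF : IsGenericFlat ℝ (ℓ - 1) A F) (hl : 1 ≤ ℓ) {X : Set V}
    (hX : X ∈ interPosetIn Set.univ A) : ¬ X ⊆ F := by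
  intro hsub
  have hXF : F ∩ X = X := Set.inter_eq_self_of_subset_right hsub
  have hne : X.Nonempty := nonempty_of_mem hX
  by_cases h1 : 1 ≤ flatDim ℝ X
  · have := (gen_pos hF hX h1).2
    rw [hXF] at this
    omega
  · have h0 : flatDim ℝ X = 0 := by omega
    have := gen_zero hF hl hX h0
    rw [hXF] at this
    exact hne.ne_empty this

lemma F_ne_univ {A : Finset (Set V)} {F : Set V} (hF : IsGenericFlat ℝ (ℓ - 1) A F) (hl : 1 ≤ ℓ) : F ≠ Set.univ := by
  intro hEq
  have := hF.2.2.1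
  rw [hEq, flatDim_univ] at this
  omega

/-- key transversality lemma : if `F ∩ X ⊆ Y` then already `X ⊆ Y` -/
lemma gen_key {A : Finset (Set V)} {F : Set V} (hF : IsGenericFlat ℝ (ℓ - 1) A F) (hA : ∀ H ∈ A, IsHyperplane ℝ H)
    {X Y : Set V} (hX : X ∈ interPosetIn Set.univ A) (h1 : 1 ≤ flatDim ℝ X)
    (hY : Y ∈ interPosetIn Set.univ A) (hsub : F ∩ X ⊆ Y) : X ⊆ Y := by
  have hFX := gen_pos hF hX h1
  have hZne : (X ∩ Y).Nonempty := hFX.1.mono (Set.subset_inter Set.inter_subset_right hsub)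
  have hZ : X ∩ Y ∈ interPosetIn Set.univ A := inter_mem hX hY hZne
  have hFZ : F ∩ (X ∩ Y) = F ∩ X := by
    apply Set.Subset.antisymm
    · exact Set.inter_subset_inter subset_rfl Set.inter_subset_left
    · exact Set.subset_inter (Set.inter_subset_left) (Set.subset_inter Set.inter_subset_right hsub)
  have h1Z : 1 ≤ flatDim ℝ (X ∩ Y) := by
    by_contra h0
    have := gen_zero hF (by have := flatDim_le (X:Set V); omega) hZ (by omega)
    rw [hFZ] at this
    exact hFX.1.ne_empty this
  have hFZdim := (gen_pos hF hZ h1Z).2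
  rw [hFZ, hFX.2] at hFZdim
  -- flatDim (X ∩ Y) = flatDim X
  have hdimle : flatDim ℝ (X ∩ Y) ≤ flatDim ℝ X := flatDim_mono Set.inter_subset_left
  have hdim : flatDim ℝ X ≤ flatDim ℝ (X ∩ Y) := by omega
  have hXZ : X ∩ Y = X :=
    eq_of_flatDim_eq (isAff_of_mem hA hZ) (isAff_of_mem hA hX) hZne Set.inter_subset_left hdim
  intro x hx
  have : x ∈ X ∩ Y := hXZ.symm ▸ hx
  exact this.2

lemma gen_inj {A : Finset (Set V)} {F : Set V} (hF : IsGenericFlat ℝ (ℓ - 1) A F) (hA : ∀ H ∈ A, IsHyperplane ℝ H)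
    {X Y : Set V} (hX : X ∈ interPosetIn Set.univ A) (h1X : 1 ≤ flatDim ℝ X)
    (hY : Y ∈ interPosetIn Set.univ A) (h1Y : 1 ≤ flatDim ℝ Y)
    (h : F ∩ X = F ∩ Y) : X = Y := by
  have h1 : X ⊆ Y := gen_key hF hA hX h1X hY (h ▸ Set.inter_subset_right)
  have h2 : Y ⊆ X := gen_key hF hA hY h1Y hX (h.symm ▸ Set.inter_subset_right)
  exact Set.Subset.antisymm h1 h2

/-! ### structure of `L(A ∪ {F})` -/

lemma decomp {A : Finset (Set V)} {F : Set V} (hF : IsGenericFlat ℝ (ℓ - 1) A F) (hl : 1 ≤ ℓ) :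
    interPosetIn Set.univ (insert F A)
      = interPosetIn Set.univ A
        ∪ (((interPosetIn Set.univ A).filter fun X => 1 ≤ flatDim ℝ X).image
            fun X => F ∩ X) := by
  apply Finset.ext
  intro Z
  rw [Finset.mem_union, Finset.mem_image]
  constructor
  · intro hZ
    obtain ⟨hne, S, hS, rfl⟩ := mem_interPoset.1 hZ
    by_cases hFS : F ∈ S
    · right
      have hS' : S.erase F ⊆ A := by
        intro x hx
        rw [Finset.mem_erase] at hx
        rcases Finset.mem_insert.1 (hS hx.2) with h | h
        · exact absurd h hx.1
        · exact h
      have hrep : Set.univ ∩ ⋂ H ∈ S, H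
          = F ∩ (Set.univ ∩ ⋂ H ∈ S.erase F, H) := by
        conv_lhs => rw [← Finset.insert_erase hFS]
        rw [Finset.set_biInter_insert]
        ext x
        simp only [Set.mem_inter_iff, Set.mem_univ, true_and]
        try tauto
      set X := Set.univ ∩ ⋂ H ∈ S.erase F, H with hXdef
      rw [hrep] at hne ⊢
      have hXmem : X ∈ interPosetIn Set.univ A :=
        mem_interPoset.2 ⟨hne.mono Set.inter_subset_right, S.erase F, hS', rfl⟩
      refine ⟨X, Finset.mem_filter.2 ⟨hXmem, ?_⟩, rfl⟩
      by_contra h0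
      exact hne.ne_empty (gen_zero hF hl hXmem (by omega))
    · left
      have hS' : S ⊆ A := by
        intro x hx
        rcases Finset.mem_insert.1 (hS hx) with h | h
        · exact absurd (h ▸ hx) hFS
        · exact h
      exact mem_interPoset.2 ⟨hne, S, hS', rfl⟩
  · rintro (hZ | ⟨X, hX, rfl⟩)
    · obtain ⟨hne, S, hS, rfl⟩ := mem_interPoset.1 hZ
      exact mem_interPoset.2 ⟨hne, S, hS.trans (Finset.subset_insert F A), rfl⟩
    · rw [Finset.mem_filter] at hX
      obtain ⟨-, S, hS, rfl⟩ := mem_interPoset.1 hX.1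
      refine mem_interPoset.2 ⟨(gen_pos hF hX.1 hX.2).1, insert F S,
        Finset.insert_subset_insert F hS, ?_⟩
      rw [Finset.set_biInter_insert]
      ext x
      simp only [Set.mem_inter_iff, Set.mem_univ, true_and]
      try tauto

lemma decomp_disj {A : Finset (Set V)} {F : Set V} (hF : IsGenericFlat ℝ (ℓ - 1) A F) (hl : 1 ≤ ℓ) :
    Disjoint (interPosetIn (Set.univ : Set V) A)
      (((interPosetIn Set.univ A).filter fun X => 1 ≤ flatDim ℝ X).image fun X => F ∩ X) := by
  rw [Finset.disjoint_left]
  rintro Z hZ hZ'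
  obtain ⟨X, hX, rfl⟩ := Finset.mem_image.1 hZ'
  exact not_subset_F hF hl hZ Set.inter_subset_left

end Generic

/-! ### Part 4: Möbius function computations -/

lemma mu_univ {B : Finset (Set V)} {μ : Set V → ℤ} (hμ : IsMobiusIn Set.univ B μ) :
    μ Set.univ = 1 := by
  have h := hμ Set.univ (univ_mem B)
  rw [if_pos rfl] at h
  have hfilter : (interPosetIn (Set.univ : Set V) B).filter (fun Y => Set.univ ⊆ Y)
      = {Set.univ} := by
    apply Finset.ext
    intro Y
    simp only [Finset.mem_filter, Finset.mem_singleton]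
    constructor
    · rintro ⟨hY, hsub⟩
      exact (Set.univ_subset_iff.1 hsub)
    · rintro rfl
      exact ⟨univ_mem B, subset_rfl⟩
  rw [hfilter, Finset.sum_singleton] at h
  exact h

lemma filter_up_L' {A : Finset (Set V)} {F : Set V} (hF : IsGenericFlat ℝ (ℓ - 1) A F)
    (hl : 1 ≤ ℓ) {X : Set V} (hX : X ∈ interPosetIn Set.univ A) :
    (interPosetIn Set.univ (insert F A)).filter (fun Y => X ⊆ Y)
      = (interPosetIn Set.univ A).filter (fun Y => X ⊆ Y) := by
  rw [decomp hF hl, Finset.filter_union]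
  have himg : ((((interPosetIn Set.univ A).filter fun Z => 1 ≤ flatDim ℝ Z).image
      fun Z => F ∩ Z).filter (fun Y => X ⊆ Y)) = ∅ := by
    rw [Finset.filter_eq_empty_iff]
    intro Z hZ
    obtain ⟨Y, hY, rfl⟩ := Finset.mem_image.1 hZ
    intro hsub
    exact not_subset_F hF hl hX (hsub.trans Set.inter_subset_left)
  rw [himg, Finset.union_empty]

lemma mu'_eq_mu {A : Finset (Set V)} {F : Set V} (hF : IsGenericFlat ℝ (ℓ - 1) A F)
    (hl : 1 ≤ ℓ) {μ μ' : Set V → ℤ} (hμ : IsMobiusIn Set.univ A μ)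
    (hμ' : IsMobiusIn Set.univ (insert F A) μ') :
    ∀ X ∈ interPosetIn Set.univ A, μ' X = μ X := by
  have hsub : ∀ X ∈ interPosetIn Set.univ A, X ∈ interPosetIn Set.univ (insert F A) := by
    intro X hX
    rw [decomp hF hl]
    exact Finset.mem_union_left _ hX
  have key : ∀ X ∈ interPosetIn Set.univ A,
      (∑ Y ∈ (interPosetIn Set.univ A).filter fun Y => X ⊆ Y, (μ' Y - μ Y)) = 0 := by
    intro X hX
    rw [Finset.sum_sub_distrib]
    have h1 := hμ' X (hsub X hX)
    rw [filter_up_L' hF hl hX] at h1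
    rw [h1, hμ X hX, sub_self]
  intro X hX
  have := eq_zero_of_upper key X hX
  omega

lemma mu_add_mu' {A : Finset (Set V)} {F : Set V} (hA : ∀ H ∈ A, IsHyperplane ℝ H)
    (hF : IsGenericFlat ℝ (ℓ - 1) A F) (hl : 1 ≤ ℓ)
    {μ μ' : Set V → ℤ} (hμ : IsMobiusIn Set.univ A μ)
    (hμ' : IsMobiusIn Set.univ (insert F A) μ') :
    ∀ X ∈ (interPosetIn Set.univ A).filter (fun Z => 1 ≤ flatDim ℝ Z),
      μ X + μ' (F ∩ X) = 0 := by
  apply eq_zero_of_upper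
  intro X hXle
  have hX := Finset.mem_filter.1 hXle
  -- `F ∩ X` belongs to the large poset
  have hFX_mem : F ∩ X ∈ interPosetIn Set.univ (insert F A) := by
    rw [decomp hF hl]
    exact Finset.mem_union_right _ (Finset.mem_image.2 ⟨X, hXle, rfl⟩)
  have h0 := hμ' (F ∩ X) hFX_mem
  have hne_univ : F ∩ X ≠ Set.univ := by
    intro h
    exact not_subset_F hF hl (univ_mem A) (by rw [← h]; exact Set.inter_subset_left)
  rw [if_neg hne_univ] at h0
  have hdisj' : Disjoint
      ((interPosetIn Set.univ A).filter (fun Y => F ∩ X ⊆ Y))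
      ((((interPosetIn Set.univ A).filter fun Z => 1 ≤ flatDim ℝ Z).image
          fun Z => F ∩ Z).filter (fun Y => F ∩ X ⊆ Y)) :=
    Finset.disjoint_filter_filter (decomp_disj hF hl)
  rw [decomp hF hl, Finset.filter_union, Finset.sum_union hdisj'] at h0
  -- identify the first summand
  have e1 : (interPosetIn Set.univ A).filter (fun Y => F ∩ X ⊆ Y)
      = ((interPosetIn Set.univ A).filter (fun Z => 1 ≤ flatDim ℝ Z)).filter
          (fun Y => X ⊆ Y) := by
    apply Finset.ext
    intro Y
    simp only [Finset.mem_filter]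
    constructor
    · rintro ⟨hY, hsub⟩
      have hXY : X ⊆ Y := gen_key hF hA hX.1 hX.2 hY hsub
      exact ⟨⟨hY, le_trans hX.2 (flatDim_mono hXY)⟩, hXY⟩
    · rintro ⟨⟨hY, -⟩, hsub⟩
      exact ⟨hY, Set.inter_subset_right.trans hsub⟩
  -- identify the second summand
  have e2 : ((((interPosetIn Set.univ A).filter fun Z => 1 ≤ flatDim ℝ Z).image
        fun Z => F ∩ Z).filter (fun Y => F ∩ X ⊆ Y))
      = ((((interPosetIn Set.univ A).filter fun Z => 1 ≤ flatDim ℝ Z).filter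
          (fun Y => X ⊆ Y)).image fun Z => F ∩ Z) := by
    apply Finset.ext
    intro Z
    simp only [Finset.mem_filter, Finset.mem_image]
    constructor
    · rintro ⟨⟨Y, hY, rfl⟩, hsub⟩
      have hXY : X ⊆ Y := gen_key hF hA hX.1 hX.2 hY.1 (hsub.trans Set.inter_subset_right)
      exact ⟨Y, ⟨hY, hXY⟩, rfl⟩
    · rintro ⟨Y, ⟨hY, hXY⟩, rfl⟩
      exact ⟨⟨Y, hY, rfl⟩, Set.inter_subset_inter subset_rfl hXY⟩
  have hinj : ∀ x ∈ (((interPosetIn Set.univ A).filter fun Z => 1 ≤ flatDim ℝ Z).filter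
      (fun Y => X ⊆ Y)),
      ∀ y ∈ (((interPosetIn Set.univ A).filter fun Z => 1 ≤ flatDim ℝ Z).filter
      (fun Y => X ⊆ Y)), F ∩ x = F ∩ y → x = y := by
    intro x hx y hy h
    have hx' := Finset.mem_filter.1 (Finset.mem_filter.1 hx).1
    have hy' := Finset.mem_filter.1 (Finset.mem_filter.1 hy).1
    exact gen_inj hF hA hx'.1 hx'.2 hy'.1 hy'.2 h
  rw [e1, e2, Finset.sum_image hinj] at h0
  -- replace μ' by μ in the first summand
  have e3 : (∑ Y ∈ (((interPosetIn Set.univ A).filter fun Z => 1 ≤ flatDim ℝ Z).filter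
        (fun Y => X ⊆ Y)), μ' Y)
      = ∑ Y ∈ (((interPosetIn Set.univ A).filter fun Z => 1 ≤ flatDim ℝ Z).filter
        (fun Y => X ⊆ Y)), μ Y := by
    apply Finset.sum_congr rfl
    intro Y hY
    exact mu'_eq_mu hF hl hμ hμ' Y (Finset.mem_filter.1 (Finset.mem_filter.1 hY).1).1
  rw [e3] at h0
  rw [Finset.sum_add_distrib]
  exact h0

lemma weisner {A : Finset (Set V)} (hA : ∀ H ∈ A, IsHyperplane ℝ H) (hl : 1 ≤ ℓ)
    {μ : Set V → ℤ} (hμ : IsMobiusIn Set.univ A μ)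
    {X H : Set V} (hX : X ∈ interPosetIn Set.univ A) (hH : H ∈ A) (hXH : X ⊆ H) :
    (∑ Y ∈ (interPosetIn Set.univ A).filter fun Y => X ⊆ Y ∧ Y ∩ H = X, μ Y) = 0 := by
  set L := interPosetIn (Set.univ : Set V) A with hLdef
  have hXne : X.Nonempty := nonempty_of_mem hX
  have hHL : H ∈ L := hyp_mem hH (hyperplane_nonempty (hA H hH))
  have hHuniv : H ≠ Set.univ := hyperplane_ne_univ hl (hA H hH)
  have evalA : ∀ Y ∈ L,
      (∑ W ∈ L, if X ⊆ W ∧ W ⊆ Y ∧ W ⊆ H then μ Y * nu L X W else 0)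
        = if X ⊆ Y ∧ Y ∩ H = X then μ Y else 0 := by
    intro Y hY
    by_cases hXY : X ⊆ Y
    · have hsubYH : X ⊆ Y ∩ H := Set.subset_inter hXY hXH
      have hYH : Y ∩ H ∈ L := inter_mem hY hHL (hXne.mono hsubYH)
      calc (∑ W ∈ L, if X ⊆ W ∧ W ⊆ Y ∧ W ⊆ H then μ Y * nu L X W else 0)
          = ∑ W ∈ L.filter fun W => X ⊆ W ∧ W ⊆ Y ∩ H, μ Y * nu L X W := by
            rw [Finset.sum_filter]
            apply Finset.sum_congr rfl
            intro W _
            apply if_congr _ rfl rfl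
            rw [Set.subset_inter_iff]
        _ = μ Y * ∑ W ∈ L.filter fun W => X ⊆ W ∧ W ⊆ Y ∩ H, nu L X W := by
            rw [Finset.mul_sum]
        _ = μ Y * (if Y ∩ H = X then 1 else 0) := by rw [nu_sum hYH hsubYH]
        _ = if X ⊆ Y ∧ Y ∩ H = X then μ Y else 0 := by
            by_cases h : Y ∩ H = X
            · rw [if_pos h, if_pos ⟨hXY, h⟩, mul_one]
            · rw [if_neg h, if_neg (fun hc => h hc.2), mul_zero]
    · rw [Finset.sum_eq_zero, if_neg (fun hc => hXY hc.1)]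
      intro W hW
      rw [if_neg]
      intro hc
      exact hXY (hc.1.trans hc.2.1)
  have evalB : ∀ W ∈ L,
      (∑ Y ∈ L, if X ⊆ W ∧ W ⊆ Y ∧ W ⊆ H then μ Y * nu L X W else 0) = 0 := by
    intro W hW
    by_cases hc : X ⊆ W ∧ W ⊆ H
    · have hWuniv : W ≠ Set.univ := by
        intro h
        subst h
        exact hHuniv (Set.univ_subset_iff.1 hc.2)
      have hsum := hμ W hW
      rw [if_neg hWuniv] at hsum
      calc (∑ Y ∈ L, if X ⊆ W ∧ W ⊆ Y ∧ W ⊆ H then μ Y * nu L X W else 0)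
          = ∑ Y ∈ L.filter fun Y => W ⊆ Y, μ Y * nu L X W := by
            rw [Finset.sum_filter]
            apply Finset.sum_congr rfl
            intro Y _
            apply if_congr _ rfl rfl
            constructor
            · intro h; exact h.2.1
            · intro h; exact ⟨hc.1, h, hc.2⟩
        _ = (∑ Y ∈ L.filter fun Y => W ⊆ Y, μ Y) * nu L X W := by
            rw [Finset.sum_mul]
        _ = 0 := by rw [hsum, zero_mul]
    · apply Finset.sum_eq_zero
      intro Y hY
      rw [if_neg]
      intro h
      exact hc ⟨h.1, h.2.2⟩
  have hdouble : (∑ Y ∈ L, ∑ W ∈ L,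
      if X ⊆ W ∧ W ⊆ Y ∧ W ⊆ H then μ Y * nu L X W else 0) = 0 := by
    rw [Finset.sum_comm]
    exact Finset.sum_eq_zero evalB
  have hmain : (∑ Y ∈ L, if X ⊆ Y ∧ Y ∩ H = X then μ Y else 0) = 0 := by
    rw [← Finset.sum_congr rfl evalA]
    exact hdouble
  rw [Finset.sum_filter]
  exact hmain

lemma sign_mu {A : Finset (Set V)} (hA : ∀ H ∈ A, IsHyperplane ℝ H)
    {μ : Set V → ℤ} (hμ : IsMobiusIn Set.univ A μ) :
    ∀ X ∈ interPosetIn Set.univ A, 0 ≤ (-1 : ℤ) ^ (ℓ - flatDim ℝ X) * μ X := by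
  suffices Hn : ∀ n, ∀ X ∈ interPosetIn (Set.univ : Set V) A,
      ℓ - flatDim ℝ X ≤ n → 0 ≤ (-1 : ℤ) ^ (ℓ - flatDim ℝ X) * μ X from
    fun X hX => Hn (ℓ - flatDim ℝ X) X hX le_rfl
  intro n
  induction n with
  | zero =>
    intro X hX hle
    have hd := flatDim_le (X : Set V)
    have hXuniv : X = Set.univ := by
      apply eq_of_flatDim_eq (isAff_of_mem hA hX) isAff_univ (nonempty_of_mem hX)
        (Set.subset_univ X)
      rw [flatDim_univ]
      omega
    subst hXuniv
    rw [mu_univ hμ, flatDim_univ, Nat.sub_self, pow_zero, mul_one]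
    norm_num
  | succ n ih =>
    intro X hX hle
    by_cases hc : ℓ - flatDim ℝ X ≤ n
    · exact ih X hX hc
    have hd := flatDim_le (X : Set V)
    have hrk : ℓ - flatDim ℝ X = n + 1 := by omega
    have hl : 1 ≤ ℓ := by omega
    have hXuniv : X ≠ Set.univ := by
      intro h
      rw [h, flatDim_univ] at hrk
      omega
    obtain ⟨H, hH, hXH⟩ := exists_sup_hyp hX hXuniv
    have hW := weisner hA hl hμ hX hH hXH
    have hXmem : X ∈ (interPosetIn Set.univ A).filter (fun Y => X ⊆ Y ∧ Y ∩ H = X) :=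
      Finset.mem_filter.2 ⟨hX, subset_rfl, Set.inter_eq_self_of_subset_left hXH⟩
    rw [← Finset.add_sum_erase _ _ hXmem] at hW
    set E := ((interPosetIn Set.univ A).filter (fun Y => X ⊆ Y ∧ Y ∩ H = X)).erase X with hE
    have hterm : ∀ Y ∈ E, 0 ≤ (-1 : ℤ) ^ n * μ Y := by
      intro Y hY
      rw [hE, Finset.mem_erase, Finset.mem_filter] at hY
      obtain ⟨hYne, hYL, hXY, hYH⟩ := hY
      have hdY_lt : flatDim ℝ X < flatDim ℝ Y :=
        flatDim_strict (isAff_of_mem hA hX) (isAff_of_mem hA hYL) (nonempty_of_mem hX)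
          hXY (fun h => hYne h.symm)
      have hdY_le : flatDim ℝ Y ≤ flatDim ℝ X + 1 := by
        have hcut := flatDim_inter_hyperplane (isAff_of_mem hA hYL) (hA H hH)
          (by rw [hYH]; exact nonempty_of_mem hX)
        rw [hYH] at hcut
        omega
      have hdY2 := flatDim_le (Y : Set V)
      have heq : ℓ - flatDim ℝ Y = n := by omega
      have hres := ih Y hYL (le_of_eq heq)
      rwa [heq] at hres
    have hx : μ X = -∑ Y ∈ E, μ Y := by omega
    have h1 : (-1 : ℤ) ^ (n + 1) * μ X = (-1) ^ n * ∑ Y ∈ E, μ Y := by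
      rw [hx, pow_succ]
      ring
    rw [hrk, h1, Finset.mul_sum]
    exact Finset.sum_nonneg hterm

end Geo

end ArrAux

/-- For an essential finite arrangement `A` of affine hyperplanes in
`ℝ^ℓ` and a generic affine hyperplane `F^{ℓ-1}`, one has
`b_ℓ(A) = β(A ∪ {F^{ℓ-1}})`, where `β` is the absolute value of the Poincaré
polynomial evaluated at `-1`. -/
theorem top_betti_eq_beta {ℓ : ℕ} (A : Finset (Set (Fin ℓ → ℝ)))
    (hA : ∀ H ∈ A, IsHyperplane ℝ H)
    (hess : ∃ X ∈ interPosetIn Set.univ A, rkIn ℝ Set.univ X = ℓ)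
    (F : Set (Fin ℓ → ℝ)) (hF : IsGenericFlat ℝ (ℓ - 1) A F)
    (μ μ' : Set (Fin ℓ → ℝ) → ℤ)
    (hμ : IsMobiusIn Set.univ A μ)
    (hμ' : IsMobiusIn Set.univ (insert F A) μ') :
    (poinIn ℝ Set.univ A μ).coeff ℓ
      = (((poinIn ℝ Set.univ (insert F A) μ').eval (-1)).natAbs : ℤ) := by
  classical
  rcases Nat.eq_zero_or_pos ℓ with hl0 | hl
  · -- degenerate case `ℓ = 0`
    subst hl0
    have hsing : Subsingleton (Fin 0 → ℝ) := ⟨fun a b => funext fun i => i.elim0⟩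
    have key : ∀ B : Finset (Set (Fin 0 → ℝ)),
        interPosetIn (Set.univ : Set (Fin 0 → ℝ)) B = {Set.univ} := by
      intro B
      apply Finset.ext
      intro Z
      rw [Finset.mem_singleton]
      constructor
      · intro hZ
        obtain ⟨y, hy⟩ := ArrAux.nonempty_of_mem hZ
        exact (Set.eq_univ_of_forall fun x => by rwa [Subsingleton.elim x y]).symm ▸ rfl
      · rintro rfl
        exact ArrAux.univ_mem B
    have h1 : μ Set.univ = 1 := ArrAux.mu_univ hμ
    have h2 : μ' Set.univ = 1 := ArrAux.mu_univ hμ'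
    rw [poinIn, poinIn, key, key, Finset.sum_singleton, Finset.sum_singleton, h1, h2]
    have hrk : rkIn ℝ (Set.univ : Set (Fin 0 → ℝ)) Set.univ = 0 := Nat.sub_self _
    rw [hrk, pow_zero, mul_one]
    simp
  · -- main case `1 ≤ ℓ`
    have hl' : 1 ≤ ℓ := hl
    -- Step 1: the top coefficient of `π(A,t)`
    have hcoeff : (poinIn ℝ Set.univ A μ).coeff ℓ
        = (-1 : ℤ) ^ ℓ * ∑ X ∈ (interPosetIn Set.univ A).filter
            (fun X => flatDim ℝ X = 0), μ X := by
      rw [poinIn, Polynomial.finset_sum_coeff]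
      have hterm : ∀ X ∈ interPosetIn (Set.univ : Set (Fin ℓ → ℝ)) A,
          (Polynomial.C (μ X) * (- Polynomial.X) ^ (rkIn ℝ Set.univ X)).coeff ℓ
            = if flatDim ℝ X = 0 then (-1 : ℤ) ^ ℓ * μ X else 0 := by
        intro X hX
        have hd := ArrAux.flatDim_le X
        rw [ArrAux.rk_eq, Polynomial.coeff_C_mul,
          show (-Polynomial.X : Polynomial ℤ) = Polynomial.C (-1) * Polynomial.X by simp,
          mul_pow, ← map_pow, Polynomial.coeff_C_mul, Polynomial.coeff_X_pow]
        by_cases h0 : flatDim ℝ X = 0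
        · rw [if_pos h0, h0, Nat.sub_zero, if_pos rfl]
          ring
        · rw [if_neg h0, if_neg (by omega)]
          ring
      rw [Finset.sum_congr rfl hterm, ← Finset.sum_filter, ← Finset.mul_sum]
    -- Step 2: evaluation of `π(A ∪ {F}, t)` at `-1`
    have heval : Polynomial.eval (-1 : ℤ) (poinIn ℝ Set.univ (insert F A) μ')
        = ∑ Z ∈ interPosetIn Set.univ (insert F A), μ' Z := by
      rw [poinIn, Polynomial.eval_finset_sum]
      apply Finset.sum_congr rfl
      intro Z hZ
      simp
    -- Step 3: the sum of `μ'` over `L(A ∪ {F})`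
    have hinj2 : ∀ x ∈ (interPosetIn Set.univ A).filter (fun X => 1 ≤ flatDim ℝ X),
        ∀ y ∈ (interPosetIn Set.univ A).filter (fun X => 1 ≤ flatDim ℝ X),
          F ∩ x = F ∩ y → x = y := by
      intro x hx y hy h
      have hx' := Finset.mem_filter.1 hx
      have hy' := Finset.mem_filter.1 hy
      exact ArrAux.gen_inj hF hA hx'.1 hx'.2 hy'.1 hy'.2 h
    have hsum : (∑ Z ∈ interPosetIn Set.univ (insert F A), μ' Z)
        = ∑ X ∈ (interPosetIn Set.univ A).filter (fun X => flatDim ℝ X = 0), μ X := by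
      rw [ArrAux.decomp hF hl', Finset.sum_union (ArrAux.decomp_disj hF hl'),
        Finset.sum_image hinj2]
      have e1 : (∑ Y ∈ interPosetIn Set.univ A, μ' Y)
          = ∑ Y ∈ interPosetIn Set.univ A, μ Y :=
        Finset.sum_congr rfl fun Y hY => ArrAux.mu'_eq_mu hF hl' hμ hμ' Y hY
      have e2 : (∑ Y ∈ (interPosetIn Set.univ A).filter (fun X => 1 ≤ flatDim ℝ X),
            μ' (F ∩ Y))
          = ∑ Y ∈ (interPosetIn Set.univ A).filter (fun X => 1 ≤ flatDim ℝ X), (- μ Y) :=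
        Finset.sum_congr rfl fun Y hY => by
          have := ArrAux.mu_add_mu' hA hF hl' hμ hμ' Y hY
          omega
      rw [e1, e2]
      have hsplit := Finset.sum_filter_add_sum_filter_not (interPosetIn Set.univ A)
        (fun X => 1 ≤ flatDim ℝ X) μ
      have e4 : (interPosetIn Set.univ A).filter (fun X => ¬ 1 ≤ flatDim ℝ X)
          = (interPosetIn Set.univ A).filter (fun X => flatDim ℝ X = 0) :=
        Finset.filter_congr fun X hX => by omega
      rw [← hsplit, e4, Finset.sum_neg_distrib]
      ring
    -- Step 4: sign of the top coefficient
    have hTsign : 0 ≤ (-1 : ℤ) ^ ℓ * ∑ X ∈ (interPosetIn Set.univ A).filter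
        (fun X => flatDim ℝ X = 0), μ X := by
      rw [Finset.mul_sum]
      apply Finset.sum_nonneg
      intro X hX
      have hX' := Finset.mem_filter.1 hX
      have h := ArrAux.sign_mu hA hμ X hX'.1
      have h2 : ℓ - flatDim ℝ X = ℓ := by omega
      rwa [h2] at h
    -- conclude
    rw [hcoeff, heval, hsum]
    set T : ℤ := ∑ X ∈ (interPosetIn Set.univ A).filter (fun X => flatDim ℝ X = 0), μ X
      with hT
    have habs : ((T.natAbs : ℤ)) = |T| := (Int.abs_eq_natAbs T).symm
    rw [habs]
    have habs2 : |T| = |(-1 : ℤ) ^ ℓ * T| := by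
      rw [abs_mul, abs_pow, abs_neg, abs_one, one_pow, one_mul]
    rw [habs2, abs_of_nonneg hTsign]
end

section
/- Let A be a finite arrangement of affine hyperplanes in ℝ^ℓ and let F^{ℓ−1} be a generic affine hyperplane for A (in particular F^{ℓ−1} ∉ A). Then the Poincaré polynomial of the enlarged arrangement satisfies π(A ∪ {F^{ℓ−1}}, t) = (1+t)·π(A,t) − b_ℓ(A)·t^{ℓ+1}, where b_ℓ(A) is the coefficient of t^ℓ in π(A,t). -/
open scoped Classical

namespace PfAux

lemma unique_aux {V : Type} (P : Finset (Set V)) (g : Set V → ℤ) (μ₁ μ₂ : Set V → ℤ)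
    (h₁ : ∀ X ∈ P, (∑ Y ∈ P.filter fun Y => X ⊆ Y, μ₁ Y) = g X)
    (h₂ : ∀ X ∈ P, (∑ Y ∈ P.filter fun Y => X ⊆ Y, μ₂ Y) = g X) :
    ∀ X ∈ P, μ₁ X = μ₂ X := by
  suffices h : ∀ n (X : Set V), X ∈ P → (P.filter fun Y => X ⊆ Y).card ≤ n → μ₁ X = μ₂ X by
    intro X hX; exact h (P.filter fun Y => X ⊆ Y).card X hX le_rfl
  intro n
  induction n with
  | zero =>
      intro X hX hc
      exfalso
      have hXf : X ∈ P.filter fun Y => X ⊆ Y := Finset.mem_filter.2 ⟨hX, subset_rfl⟩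
      have := Finset.card_pos.2 ⟨X, hXf⟩
      omega
  | succ n ih =>
      intro X hX hc
      have hXf : X ∈ P.filter fun Y => X ⊆ Y := Finset.mem_filter.2 ⟨hX, subset_rfl⟩
      have e₁ := h₁ X hX
      have e₂ := h₂ X hX
      rw [← Finset.add_sum_erase _ _ hXf] at e₁ e₂
      have key : ∀ Y ∈ (P.filter fun Y => X ⊆ Y).erase X, μ₁ Y = μ₂ Y := by
        intro Y hY
        have hY' := Finset.mem_of_mem_erase hY
        have hYne : Y ≠ X := Finset.ne_of_mem_erase hY
        obtain ⟨hYP, hXY⟩ := Finset.mem_filter.1 hY'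
        apply ih Y hYP
        have hsub : (P.filter fun Z => Y ⊆ Z) ⊆ (P.filter fun Z => X ⊆ Z) := by
          intro Z hZ
          obtain ⟨hz1, hz2⟩ := Finset.mem_filter.1 hZ
          exact Finset.mem_filter.2 ⟨hz1, hXY.trans hz2⟩
        have hstrict : X ∉ (P.filter fun Z => Y ⊆ Z) := by
          intro hmem
          exact hYne (subset_antisymm (Finset.mem_filter.1 hmem).2 hXY)
        have hlt := Finset.card_lt_card ((Finset.ssubset_iff_of_subset hsub).2 ⟨X, hXf, hstrict⟩)
        omega
      have hsum : ∑ Y ∈ (P.filter fun Y => X ⊆ Y).erase X, μ₁ Y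
          = ∑ Y ∈ (P.filter fun Y => X ⊆ Y).erase X, μ₂ Y :=
        Finset.sum_congr rfl key
      omega

lemma mem_interPosetIn_iff {V : Type} {W : Set V} {A : Finset (Set V)} {X : Set V} :
    X ∈ interPosetIn W A ↔ (∃ S ⊆ A, W ∩ ⋂ H ∈ S, (H : Set V) = X) ∧ X.Nonempty := by
  simp [interPosetIn, Finset.mem_filter, Finset.mem_image, Finset.mem_powerset]

variable {ℓ : ℕ}

lemma hyperplane_affine {H : Set (Fin ℓ → ℝ)} (h : IsHyperplane ℝ H) :
    ∃ S : AffineSubspace ℝ (Fin ℓ → ℝ), (S : Set (Fin ℓ → ℝ)) = H := by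
  obtain ⟨f, c, -, rfl⟩ := h
  refine ⟨⟨{x | f x = c}, ?_⟩, rfl⟩
  intro r p1 p2 p3 h1 h2 h3
  simp only [Set.mem_setOf_eq] at *
  simp [vsub_eq_sub, vadd_eq_add, map_add, map_smul, map_sub, h1, h2, h3]

lemma flatDim_coe (S : AffineSubspace ℝ (Fin ℓ → ℝ)) :
    flatDim ℝ (S : Set (Fin ℓ → ℝ)) = Module.finrank ℝ S.direction := by
  unfold flatDim; rw [AffineSubspace.affineSpan_coe]

lemma flatDim_univ : flatDim ℝ (Set.univ : Set (Fin ℓ → ℝ)) = ℓ := by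
  unfold flatDim
  rw [AffineSubspace.span_univ, AffineSubspace.direction_top]
  simp [Module.finrank_fin_fun]

lemma flatDim_coe_le (S : AffineSubspace ℝ (Fin ℓ → ℝ)) :
    flatDim ℝ (S : Set (Fin ℓ → ℝ)) ≤ ℓ := by
  rw [flatDim_coe]
  have := Submodule.finrank_le S.direction
  simpa [Module.finrank_fin_fun] using this

lemma dim_mono' {S T : AffineSubspace ℝ (Fin ℓ → ℝ)} (h : (S : Set (Fin ℓ → ℝ)) ⊆ T) :
    flatDim ℝ (S : Set (Fin ℓ → ℝ)) ≤ flatDim ℝ (T : Set (Fin ℓ → ℝ)) := by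
  rw [flatDim_coe, flatDim_coe]
  exact Submodule.finrank_mono (AffineSubspace.direction_le ((AffineSubspace.le_def _ _).2 h))

lemma coe_eq_of_dim_le {S T : AffineSubspace ℝ (Fin ℓ → ℝ)}
    (hne : (S : Set (Fin ℓ → ℝ)).Nonempty) (h : (S : Set (Fin ℓ → ℝ)) ⊆ T)
    (hd : flatDim ℝ (T : Set (Fin ℓ → ℝ)) ≤ flatDim ℝ (S : Set (Fin ℓ → ℝ))) :
    (S : Set (Fin ℓ → ℝ)) = T := by
  have hle : S ≤ T := (AffineSubspace.le_def _ _).2 h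
  have hdir : S.direction = T.direction := by
    refine Submodule.eq_of_le_of_finrank_le (AffineSubspace.direction_le hle) ?_
    rw [flatDim_coe, flatDim_coe] at hd; exact hd
  have : S = T := AffineSubspace.ext_of_direction_eq hdir
    ⟨hne.choose, hne.choose_spec, h hne.choose_spec⟩
  rw [this]

lemma mem_L_affine {A : Finset (Set (Fin ℓ → ℝ))} (hA : ∀ H ∈ A, IsHyperplane ℝ H)
    {X : Set (Fin ℓ → ℝ)} (hX : X ∈ interPosetIn Set.univ A) :
    ∃ S : AffineSubspace ℝ (Fin ℓ → ℝ), (S : Set (Fin ℓ → ℝ)) = X := by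
  obtain ⟨⟨S, hSA, rfl⟩, -⟩ := mem_interPosetIn_iff.1 hX
  clear hX
  induction S using Finset.induction_on with
  | empty => exact ⟨⊤, by simp⟩
  | @insert H S hH ih =>
      obtain ⟨T, hT⟩ := ih (fun x hx => hSA (Finset.mem_insert_of_mem hx))
      obtain ⟨U, hU⟩ := hyperplane_affine (hA H (hSA (Finset.mem_insert_self _ _)))
      refine ⟨U ⊓ T, ?_⟩
      have hco : ((U ⊓ T : AffineSubspace ℝ (Fin ℓ → ℝ)) : Set (Fin ℓ → ℝ))
          = (U : Set (Fin ℓ → ℝ)) ∩ (T : Set (Fin ℓ → ℝ)) := by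
        ext x
        exact AffineSubspace.mem_inf_iff x U T
      rw [hco, hU, hT]
      ext x
      simp only [Set.mem_inter_iff, Set.mem_iInter, Set.mem_univ, true_and,
        Finset.mem_insert]
      constructor
      · rintro ⟨h1, h2⟩
        intro i hi
        rcases hi with rfl | hi
        · exact h1
        · exact h2 i hi
      · intro h
        exact ⟨h H (Or.inl rfl), fun i hi => h i (Or.inr hi)⟩

lemma inter_mem {A : Finset (Set (Fin ℓ → ℝ))} {X Y : Set (Fin ℓ → ℝ)}
    (hX : X ∈ interPosetIn Set.univ A) (hY : Y ∈ interPosetIn Set.univ A)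
    (hne : (X ∩ Y).Nonempty) : X ∩ Y ∈ interPosetIn Set.univ A := by
  obtain ⟨⟨S, hSA, rfl⟩, -⟩ := mem_interPosetIn_iff.1 hX
  obtain ⟨⟨T, hTA, rfl⟩, -⟩ := mem_interPosetIn_iff.1 hY
  refine mem_interPosetIn_iff.2 ⟨⟨S ∪ T, Finset.union_subset hSA hTA, ?_⟩, hne⟩
  ext x
  simp only [Set.mem_inter_iff, Set.mem_iInter, Set.mem_univ, true_and, Finset.mem_union]
  constructor
  · intro h
    exact ⟨fun i hi => h i (Or.inl hi), fun i hi => h i (Or.inr hi)⟩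
  · rintro ⟨h1, h2⟩ i hi
    rcases hi with hi | hi
    · exact h1 i hi
    · exact h2 i hi

lemma univ_mem {A : Finset (Set (Fin ℓ → ℝ))} :
    (Set.univ : Set (Fin ℓ → ℝ)) ∈ interPosetIn Set.univ A :=
  mem_interPosetIn_iff.2 ⟨⟨∅, Finset.empty_subset _, by simp⟩, Set.univ_nonempty⟩

lemma mem_nonempty {A : Finset (Set (Fin ℓ → ℝ))} {X : Set (Fin ℓ → ℝ)}
    (hX : X ∈ interPosetIn Set.univ A) : X.Nonempty :=
  (mem_interPosetIn_iff.1 hX).2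

lemma rk_eq (X : Set (Fin ℓ → ℝ)) : rkIn ℝ Set.univ X = ℓ - flatDim ℝ X := by
  unfold rkIn; rw [flatDim_univ]

lemma flatDim_mem_le {A : Finset (Set (Fin ℓ → ℝ))} (hA : ∀ H ∈ A, IsHyperplane ℝ H)
    {X : Set (Fin ℓ → ℝ)} (hX : X ∈ interPosetIn Set.univ A) : flatDim ℝ X ≤ ℓ := by
  obtain ⟨S, rfl⟩ := mem_L_affine hA hX
  exact flatDim_coe_le S

lemma dim_mono {A : Finset (Set (Fin ℓ → ℝ))} (hA : ∀ H ∈ A, IsHyperplane ℝ H)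
    {X Y : Set (Fin ℓ → ℝ)} (hX : X ∈ interPosetIn Set.univ A)
    (hY : Y ∈ interPosetIn Set.univ A) (hXY : X ⊆ Y) :
    flatDim ℝ X ≤ flatDim ℝ Y := by
  obtain ⟨S, rfl⟩ := mem_L_affine hA hX
  obtain ⟨T, rfl⟩ := mem_L_affine hA hY
  exact dim_mono' hXY

lemma eq_of_subset_of_dim_le {A : Finset (Set (Fin ℓ → ℝ))} (hA : ∀ H ∈ A, IsHyperplane ℝ H)
    {X Y : Set (Fin ℓ → ℝ)} (hX : X ∈ interPosetIn Set.univ A)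
    (hY : Y ∈ interPosetIn Set.univ A) (hXY : X ⊆ Y)
    (hd : flatDim ℝ Y ≤ flatDim ℝ X) : X = Y := by
  have hne := mem_nonempty hX
  obtain ⟨S, rfl⟩ := mem_L_affine hA hX
  obtain ⟨T, rfl⟩ := mem_L_affine hA hY
  exact coe_eq_of_dim_le hne hXY hd

end PfAux

namespace PfAux

section Generic

variable {ℓ : ℕ} {A : Finset (Set (Fin ℓ → ℝ))} {F : Set (Fin ℓ → ℝ)}

lemma cap_nonempty_iff (hF : IsGenericFlat ℝ (ℓ - 1) A F) {X : Set (Fin ℓ → ℝ)}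
    (hX : X ∈ interPosetIn Set.univ A) :
    (F ∩ X).Nonempty ↔ rkIn ℝ Set.univ X ≤ ℓ - 1 := by
  rcases le_or_gt (rkIn ℝ Set.univ X) (ℓ - 1) with h | h
  · exact iff_of_true ((hF.2.2.2 X hX).1 h).1 h
  · refine iff_of_false ?_ (by omega)
    rw [(hF.2.2.2 X hX).2 h]
    simp

lemma cap_dim (hF : IsGenericFlat ℝ (ℓ - 1) A F) {X : Set (Fin ℓ → ℝ)}
    (hX : X ∈ interPosetIn Set.univ A) (hne : (F ∩ X).Nonempty) :
    flatDim ℝ (F ∩ X) = ℓ - 1 - rkIn ℝ Set.univ X :=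
  ((hF.2.2.2 X hX).1 ((cap_nonempty_iff hF hX).1 hne)).2

lemma cap_rk (hl : 1 ≤ ℓ) (hF : IsGenericFlat ℝ (ℓ - 1) A F) {X : Set (Fin ℓ → ℝ)}
    (hX : X ∈ interPosetIn Set.univ A) (hne : (F ∩ X).Nonempty) :
    rkIn ℝ Set.univ (F ∩ X) = rkIn ℝ Set.univ X + 1 := by
  have h1 := cap_dim hF hX hne
  have h2 := (cap_nonempty_iff hF hX).1 hne
  have h3 := rk_eq (F ∩ X)
  omega

lemma cap_notin (hl : 1 ≤ ℓ) (hA : ∀ H ∈ A, IsHyperplane ℝ H)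
    (hF : IsGenericFlat ℝ (ℓ - 1) A F) {X : Set (Fin ℓ → ℝ)}
    (hX : X ∈ interPosetIn Set.univ A) (hne : (F ∩ X).Nonempty) :
    F ∩ X ∉ interPosetIn Set.univ A := by
  intro hmem
  have h1 : F ∩ (F ∩ X) = F ∩ X := by rw [← Set.inter_assoc, Set.inter_self]
  have hne2 : (F ∩ (F ∩ X)).Nonempty := by rw [h1]; exact hne
  have hrk := (cap_nonempty_iff hF hmem).1 hne2
  have hdim := cap_dim hF hmem hne2
  rw [h1] at hdim
  have hd2 := flatDim_mem_le hA hmem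
  have h3 := rk_eq (F ∩ X)
  omega

lemma subset_of_cap_subset (hl : 1 ≤ ℓ) (hA : ∀ H ∈ A, IsHyperplane ℝ H)
    (hF : IsGenericFlat ℝ (ℓ - 1) A F) {X Y : Set (Fin ℓ → ℝ)}
    (hX : X ∈ interPosetIn Set.univ A) (hY : Y ∈ interPosetIn Set.univ A)
    (hne : (F ∩ X).Nonempty) (hsub : F ∩ X ⊆ Y) : X ⊆ Y := by
  have hZne : (X ∩ Y).Nonempty := hne.mono (fun z hz => ⟨hz.2, hsub hz⟩)
  have hZ : X ∩ Y ∈ interPosetIn Set.univ A := inter_mem hX hY hZne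
  have hFZ : F ∩ (X ∩ Y) = F ∩ X := by
    apply subset_antisymm
    · exact fun z hz => ⟨hz.1, hz.2.1⟩
    · exact fun z hz => ⟨hz.1, hz.2, hsub hz⟩
  have hFZne : (F ∩ (X ∩ Y)).Nonempty := by rw [hFZ]; exact hne
  have hd1 := cap_dim hF hZ hFZne
  rw [hFZ] at hd1
  have hd2 := cap_dim hF hX hne
  have hr1 := (cap_nonempty_iff hF hZ).1 hFZne
  have hr2 := (cap_nonempty_iff hF hX).1 hne
  have hq1 := rk_eq (ℓ := ℓ) (X ∩ Y)
  have hq2 := rk_eq (ℓ := ℓ) X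
  have hm1 := flatDim_mem_le hA hZ
  have hm2 := flatDim_mem_le hA hX
  have hdd : flatDim ℝ X ≤ flatDim ℝ (X ∩ Y) := by omega
  have heq : X ∩ Y = X := eq_of_subset_of_dim_le hA hZ hX Set.inter_subset_left hdd
  intro x hx
  rw [← heq] at hx
  exact hx.2

lemma cap_inj (hl : 1 ≤ ℓ) (hA : ∀ H ∈ A, IsHyperplane ℝ H)
    (hF : IsGenericFlat ℝ (ℓ - 1) A F) {X Y : Set (Fin ℓ → ℝ)}
    (hX : X ∈ interPosetIn Set.univ A) (hY : Y ∈ interPosetIn Set.univ A)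
    (hne : (F ∩ X).Nonempty) (heq : F ∩ X = F ∩ Y) : X = Y := by
  have hne' : (F ∩ Y).Nonempty := heq ▸ hne
  apply subset_antisymm
  · exact subset_of_cap_subset hl hA hF hX hY hne
      (heq ▸ (Set.inter_subset_right : F ∩ Y ⊆ Y))
  · exact subset_of_cap_subset hl hA hF hY hX hne'
      (heq ▸ (Set.inter_subset_right : F ∩ X ⊆ X))

lemma mem_L'_iff {X : Set (Fin ℓ → ℝ)} :
    X ∈ interPosetIn Set.univ (insert F A) ↔
      X ∈ interPosetIn Set.univ A ∨
        ∃ Y ∈ interPosetIn Set.univ A, (F ∩ Y).Nonempty ∧ X = F ∩ Y := by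
  constructor
  · intro hX
    obtain ⟨⟨S, hSA, rfl⟩, hne⟩ := mem_interPosetIn_iff.1 hX
    by_cases hFS : F ∈ S
    · right
      set Y : Set (Fin ℓ → ℝ) := Set.univ ∩ ⋂ H ∈ S.erase F, (H : Set (Fin ℓ → ℝ)) with hYdef
      have hXY : Set.univ ∩ ⋂ H ∈ S, (H : Set (Fin ℓ → ℝ)) = F ∩ Y := by
        rw [hYdef]
        ext x
        simp only [Set.mem_inter_iff, Set.mem_iInter, Set.mem_univ, true_and,
          Finset.mem_erase]
        constructor
        · intro h
          exact ⟨h F hFS, fun i hi => h i hi.2⟩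
        · rintro ⟨h1, h2⟩ i hi
          by_cases hiF : i = F
          · rw [hiF]; exact h1
          · exact h2 i ⟨hiF, hi⟩
      have hYne : Y.Nonempty := by
        obtain ⟨x, hx⟩ := hne
        rw [hXY] at hx
        exact ⟨x, hx.2⟩
      have hYL : Y ∈ interPosetIn Set.univ A := by
        refine mem_interPosetIn_iff.2 ⟨⟨S.erase F, ?_, rfl⟩, hYne⟩
        intro x hx
        obtain ⟨hxF, hxS⟩ := Finset.mem_erase.1 hx
        rcases Finset.mem_insert.1 (hSA hxS) with h | h
        · exact absurd h hxF
        · exact h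
      refine ⟨Y, hYL, ?_, hXY⟩
      rw [← hXY]; exact hne
    · left
      refine mem_interPosetIn_iff.2 ⟨⟨S, ?_, rfl⟩, hne⟩
      intro x hx
      rcases Finset.mem_insert.1 (hSA hx) with h | h
      · exact absurd (h ▸ hx) hFS
      · exact h
  · rintro (hX | ⟨Y, hY, hne, rfl⟩)
    · obtain ⟨⟨S, hSA, rfl⟩, hne⟩ := mem_interPosetIn_iff.1 hX
      exact mem_interPosetIn_iff.2
        ⟨⟨S, hSA.trans (Finset.subset_insert _ _), rfl⟩, hne⟩
    · obtain ⟨⟨S, hSA, rfl⟩, hYne⟩ := mem_interPosetIn_iff.1 hY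
      refine mem_interPosetIn_iff.2 ⟨⟨insert F S, Finset.insert_subset_insert _ hSA, ?_⟩, hne⟩
      ext x
      simp only [Set.mem_inter_iff, Set.mem_iInter, Set.mem_univ, true_and,
        Finset.mem_insert]
      constructor
      · intro h
        exact ⟨h F (Or.inl rfl), fun i hi => h i (Or.inr hi)⟩
      · rintro ⟨h1, h2⟩ i hi
        rcases hi with rfl | hi
        · exact h1
        · exact h2 i hi

lemma coeff_term (a : ℤ) (r k : ℕ) :
    (Polynomial.C a * (- Polynomial.X) ^ r).coeff k = if k = r then a * (-1) ^ r else 0 := by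
  have h : Polynomial.C a * (- Polynomial.X : Polynomial ℤ) ^ r
      = Polynomial.C (a * (-1) ^ r) * Polynomial.X ^ r := by
    rw [neg_pow, map_mul, map_pow, map_neg, map_one]
    ring
  rw [h, Polynomial.coeff_C_mul, Polynomial.coeff_X_pow]
  split <;> simp

end Generic

end PfAux

/-- For a finite arrangement `A` of affine hyperplanes in `ℝ^ℓ` and a
generic affine hyperplane `F^{ℓ-1}` (in particular `F^{ℓ-1} ∉ A`), the Poincaré
polynomial of the enlarged arrangement satisfies
`π(A ∪ {F^{ℓ-1}}, t) = (1+t)·π(A,t) − b_ℓ(A)·t^{ℓ+1}`. -/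
theorem poincare_of_added_generic_hyperplane {ℓ : ℕ} (A : Finset (Set (Fin ℓ → ℝ)))
    (hA : ∀ H ∈ A, IsHyperplane ℝ H)
    (F : Set (Fin ℓ → ℝ)) (hF : IsGenericFlat ℝ (ℓ - 1) A F) (hFA : F ∉ A)
    (μ μ' : Set (Fin ℓ → ℝ) → ℤ)
    (hμ : IsMobiusIn Set.univ A μ)
    (hμ' : IsMobiusIn Set.univ (insert F A) μ') :
    poinIn ℝ Set.univ (insert F A) μ'
      = (1 + Polynomial.X) * poinIn ℝ Set.univ A μ
        - Polynomial.C ((poinIn ℝ Set.univ A μ).coeff ℓ) * Polynomial.X ^ (ℓ + 1) := by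
  classical
  rcases Nat.eq_zero_or_pos ℓ with hl0 | hl
  · -- degenerate case ℓ = 0
    subst hl0
    have hAe : A = ∅ := by
      rcases Finset.eq_empty_or_nonempty A with h | ⟨H, hH⟩
      · exact h
      · obtain ⟨f, c, hf, -⟩ := hA H hH
        refine absurd (LinearMap.ext fun v => ?_) hf
        have hv : v = 0 := Subsingleton.elim v 0
        rw [hv]
        simp only [map_zero, LinearMap.zero_apply]
    subst hAe
    have hFuniv : F = Set.univ := by
      obtain ⟨y, hy⟩ := hF.2.1
      exact Set.eq_univ_of_forall fun x => by rwa [Subsingleton.elim x y]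
    subst hFuniv
    have hP0 : interPosetIn (Set.univ : Set (Fin 0 → ℝ)) ∅ = {Set.univ} := by
      apply Finset.ext
      intro X
      rw [PfAux.mem_interPosetIn_iff]
      simp only [Finset.mem_singleton]
      constructor
      · rintro ⟨⟨S, hS, rfl⟩, -⟩
        rw [Finset.subset_empty.1 hS]
        simp
      · rintro rfl
        exact ⟨⟨∅, Finset.Subset.refl _, by simp⟩, Set.univ_nonempty⟩
    have hP1 : interPosetIn (Set.univ : Set (Fin 0 → ℝ)) (insert Set.univ ∅)
        = {Set.univ} := by
      apply Finset.ext
      intro X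
      rw [PfAux.mem_interPosetIn_iff]
      simp only [Finset.mem_singleton]
      constructor
      · rintro ⟨⟨S, hS, rfl⟩, -⟩
        apply Set.eq_univ_of_forall
        intro x
        simp only [Set.mem_inter_iff, Set.mem_iInter, Set.mem_univ, true_and]
        intro i hi
        have := hS hi
        simp only [Finset.mem_insert, Finset.notMem_empty, or_false] at this
        rw [this]
        trivial
      · rintro rfl
        exact ⟨⟨∅, Finset.empty_subset _, by simp⟩, Set.univ_nonempty⟩
    have hμ1 : μ Set.univ = 1 := by
      have := hμ Set.univ (by rw [hP0]; simp)
      rw [hP0] at this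
      simpa [Finset.filter_singleton] using this
    have hμ'1 : μ' Set.univ = 1 := by
      have := hμ' Set.univ (by rw [hP1]; simp)
      rw [hP1] at this
      simpa [Finset.filter_singleton] using this
    have hrk0 : rkIn ℝ (Set.univ : Set (Fin 0 → ℝ)) Set.univ = 0 := by
      unfold rkIn
      omega
    unfold poinIn
    rw [hP0, hP1]
    rw [Finset.sum_singleton, Finset.sum_singleton, hrk0, hμ1, hμ'1]
    have hc : ((Polynomial.C (1 : ℤ)) * (-Polynomial.X) ^ 0).coeff 0 = 1 := by simp
    rw [hc]
    simp only [map_one, pow_zero, mul_one, pow_one]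
    ring
  · -- main case ℓ ≥ 1
    -- μ' agrees with μ on (interPosetIn Set.univ A)
    have hμ'A : IsMobiusIn Set.univ A μ' := by
      intro X hX
      have hXL' : X ∈ interPosetIn Set.univ (insert F A) := PfAux.mem_L'_iff.2 (Or.inl hX)
      have hrec := hμ' X hXL'
      have hfilter : (interPosetIn Set.univ (insert F A)).filter (fun Y => X ⊆ Y)
          = (interPosetIn Set.univ A).filter (fun Y => X ⊆ Y) := by
        apply Finset.ext
        intro Z
        simp only [Finset.mem_filter]
        constructor
        · rintro ⟨hZ, hXZ⟩
          refine ⟨?_, hXZ⟩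
          rcases PfAux.mem_L'_iff.1 hZ with hZL | ⟨Y, hYL, hYne, rfl⟩
          · exact hZL
          · exfalso
            have hXF : F ∩ X = X :=
              subset_antisymm Set.inter_subset_right (fun z hz => ⟨(hXZ hz).1, hz⟩)
            have hXne' : (F ∩ X).Nonempty := by
              rw [hXF]; exact PfAux.mem_nonempty hX
            have hno : F ∩ X ∉ (interPosetIn Set.univ A) := PfAux.cap_notin hl hA hF hX hXne'
            rw [hXF] at hno
            exact hno hX
        · rintro ⟨hZL, hXZ⟩
          exact ⟨PfAux.mem_L'_iff.2 (Or.inl hZL), hXZ⟩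
      rw [hfilter] at hrec
      exact hrec
    have hμeq : ∀ X ∈ (interPosetIn Set.univ A), μ' X = μ X :=
      PfAux.unique_aux (interPosetIn Set.univ A) (fun X => if X = Set.univ then 1 else 0) μ' μ hμ'A hμ
    -- injectivity of Y ↦ F ∩ Y on ((interPosetIn Set.univ A).filter (fun Y => (F ∩ Y).Nonempty))
    have hinjM : ∀ Y ∈ ((interPosetIn Set.univ A).filter (fun Y => (F ∩ Y).Nonempty)), ∀ Y' ∈ ((interPosetIn Set.univ A).filter (fun Y => (F ∩ Y).Nonempty)), F ∩ Y = F ∩ Y' → Y = Y' := by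
      intro Y hY Y' hY' h
      obtain ⟨hYL, hYne⟩ := Finset.mem_filter.1 hY
      obtain ⟨hY'L, -⟩ := Finset.mem_filter.1 hY'
      exact PfAux.cap_inj hl hA hF hYL hY'L hYne h
    -- recursion for ν := μ' (F ∩ ·) on ((interPosetIn Set.univ A).filter (fun Y => (F ∩ Y).Nonempty))
    have hν : ∀ X ∈ ((interPosetIn Set.univ A).filter (fun Y => (F ∩ Y).Nonempty)), (∑ Y ∈ ((interPosetIn Set.univ A).filter (fun Y => (F ∩ Y).Nonempty)).filter fun Y => X ⊆ Y, μ' (F ∩ Y))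
        = -(if X = Set.univ then 1 else 0) := by
      intro X hXM
      obtain ⟨hXL, hXne⟩ := Finset.mem_filter.1 hXM
      have hFXL' : F ∩ X ∈ interPosetIn Set.univ (insert F A) :=
        PfAux.mem_L'_iff.2 (Or.inr ⟨X, hXL, hXne, rfl⟩)
      have hrec := hμ' (F ∩ X) hFXL'
      have hFXnu : F ∩ X ≠ Set.univ := by
        intro h
        have hFuniv : F = Set.univ :=
          Set.eq_univ_of_univ_subset (h ▸ (Set.inter_subset_left : F ∩ X ⊆ F))
        have hd := hF.2.2.1
        rw [hFuniv, PfAux.flatDim_univ] at hd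
        omega
      rw [if_neg hFXnu] at hrec
      have hdisj2 : Disjoint ((interPosetIn Set.univ A).filter fun Z => X ⊆ Z)
          ((((interPosetIn Set.univ A).filter (fun Y => (F ∩ Y).Nonempty)).filter fun Y => X ⊆ Y).image fun Y => F ∩ Y) := by
        rw [Finset.disjoint_left]
        rintro Z hZ hZ'
        obtain ⟨hZL, -⟩ := Finset.mem_filter.1 hZ
        obtain ⟨Y, hYm, rfl⟩ := Finset.mem_image.1 hZ'
        obtain ⟨hYM, -⟩ := Finset.mem_filter.1 hYm
        obtain ⟨hYL, hYne⟩ := Finset.mem_filter.1 hYM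
        exact PfAux.cap_notin hl hA hF hYL hYne hZL
      have hdec : (interPosetIn Set.univ (insert F A)).filter (fun Z => F ∩ X ⊆ Z)
          = ((interPosetIn Set.univ A).filter fun Z => X ⊆ Z)
            ∪ ((((interPosetIn Set.univ A).filter (fun Y => (F ∩ Y).Nonempty)).filter fun Y => X ⊆ Y).image fun Y => F ∩ Y) := by
        apply Finset.ext
        intro Z
        constructor
        · intro hZm
          obtain ⟨hZ, hsub⟩ := Finset.mem_filter.1 hZm
          rcases PfAux.mem_L'_iff.1 hZ with hZL | ⟨Y, hYL, hYne, rfl⟩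
          · exact Finset.mem_union.2 (Or.inl (Finset.mem_filter.2
              ⟨hZL, PfAux.subset_of_cap_subset hl hA hF hXL hZL hXne hsub⟩))
          · refine Finset.mem_union.2 (Or.inr (Finset.mem_image.2 ⟨Y, ?_, rfl⟩))
            refine Finset.mem_filter.2 ⟨Finset.mem_filter.2 ⟨hYL, hYne⟩, ?_⟩
            exact PfAux.subset_of_cap_subset hl hA hF hXL hYL hXne
              (hsub.trans Set.inter_subset_right)
        · intro hZm
          rcases Finset.mem_union.1 hZm with hZ1 | hZ2
          · obtain ⟨hZL, hXZ⟩ := Finset.mem_filter.1 hZ1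
            exact Finset.mem_filter.2 ⟨PfAux.mem_L'_iff.2 (Or.inl hZL),
              (Set.inter_subset_right : F ∩ X ⊆ X).trans hXZ⟩
          · obtain ⟨Y, hYm, rfl⟩ := Finset.mem_image.1 hZ2
            obtain ⟨hYM, hXY⟩ := Finset.mem_filter.1 hYm
            obtain ⟨hYL, hYne⟩ := Finset.mem_filter.1 hYM
            exact Finset.mem_filter.2 ⟨PfAux.mem_L'_iff.2 (Or.inr ⟨Y, hYL, hYne, rfl⟩),
              Set.inter_subset_inter_right F hXY⟩
      rw [hdec, Finset.sum_union hdisj2] at hrec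
      have himage_sum : ∑ Z ∈ (((interPosetIn Set.univ A).filter (fun Y => (F ∩ Y).Nonempty)).filter fun Y => X ⊆ Y).image (fun Y => F ∩ Y), μ' Z
          = ∑ Y ∈ ((interPosetIn Set.univ A).filter (fun Y => (F ∩ Y).Nonempty)).filter (fun Y => X ⊆ Y), μ' (F ∩ Y) := by
        apply Finset.sum_image
        intro x hx y hy hxy
        exact hinjM x (Finset.mem_filter.1 hx).1 y (Finset.mem_filter.1 hy).1 hxy
      rw [himage_sum] at hrec
      have hfirst : ∑ Z ∈ (interPosetIn Set.univ A).filter (fun Z => X ⊆ Z), μ' Z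
          = ∑ Z ∈ (interPosetIn Set.univ A).filter (fun Z => X ⊆ Z), μ Z := by
        apply Finset.sum_congr rfl
        intro Z hZ
        exact hμeq Z (Finset.mem_filter.1 hZ).1
      rw [hfirst, hμ X hXL] at hrec
      omega
    -- recursion for -μ on ((interPosetIn Set.univ A).filter (fun Y => (F ∩ Y).Nonempty))
    have hgM : ∀ X ∈ ((interPosetIn Set.univ A).filter (fun Y => (F ∩ Y).Nonempty)), (∑ Y ∈ ((interPosetIn Set.univ A).filter (fun Y => (F ∩ Y).Nonempty)).filter fun Y => X ⊆ Y, -μ Y)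
        = -(if X = Set.univ then 1 else 0) := by
      intro X hXM
      obtain ⟨hXL, hXne⟩ := Finset.mem_filter.1 hXM
      have hfeq : ((interPosetIn Set.univ A).filter (fun Y => (F ∩ Y).Nonempty)).filter (fun Y => X ⊆ Y) = (interPosetIn Set.univ A).filter (fun Y => X ⊆ Y) := by
        apply Finset.ext
        intro Z
        constructor
        · intro hZ
          obtain ⟨hZM, hXZ⟩ := Finset.mem_filter.1 hZ
          exact Finset.mem_filter.2 ⟨(Finset.mem_filter.1 hZM).1, hXZ⟩
        · intro hZ
          obtain ⟨hZL, hXZ⟩ := Finset.mem_filter.1 hZ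
          refine Finset.mem_filter.2 ⟨Finset.mem_filter.2 ⟨hZL, ?_⟩, hXZ⟩
          apply (PfAux.cap_nonempty_iff hF hZL).2
          have hd := PfAux.dim_mono hA hXL hZL hXZ
          have hrX := (PfAux.cap_nonempty_iff hF hXL).1 hXne
          have e1 := PfAux.rk_eq (ℓ := ℓ) X
          have e2 := PfAux.rk_eq (ℓ := ℓ) Z
          have e3 := PfAux.flatDim_mem_le hA hXL
          omega
      rw [hfeq, Finset.sum_neg_distrib, hμ X hXL]
    have hνeq : ∀ X ∈ ((interPosetIn Set.univ A).filter (fun Y => (F ∩ Y).Nonempty)), μ' (F ∩ X) = -μ X := by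
      have h := PfAux.unique_aux ((interPosetIn Set.univ A).filter (fun Y => (F ∩ Y).Nonempty)) (fun X => -(if X = Set.univ then 1 else 0))
        (fun Y => μ' (F ∩ Y)) (fun Y => -μ Y) hν hgM
      intro X hX
      exact h X hX
    -- decomposition of L'
    have hdisj : Disjoint (interPosetIn Set.univ A) (((interPosetIn Set.univ A).filter (fun Y => (F ∩ Y).Nonempty)).image fun Y => F ∩ Y) := by
      rw [Finset.disjoint_left]
      rintro Z hZ hZ'
      obtain ⟨Y, hYM, rfl⟩ := Finset.mem_image.1 hZ'
      obtain ⟨hYL, hYne⟩ := Finset.mem_filter.1 hYM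
      exact PfAux.cap_notin hl hA hF hYL hYne hZ
    have hL' : interPosetIn Set.univ (insert F A) = (interPosetIn Set.univ A) ∪ ((interPosetIn Set.univ A).filter (fun Y => (F ∩ Y).Nonempty)).image (fun Y => F ∩ Y) := by
      apply Finset.ext
      intro Z
      rw [Finset.mem_union]
      constructor
      · intro hZ
        rcases PfAux.mem_L'_iff.1 hZ with hZL | ⟨Y, hYL, hYne, rfl⟩
        · exact Or.inl hZL
        · exact Or.inr (Finset.mem_image.2 ⟨Y, Finset.mem_filter.2 ⟨hYL, hYne⟩, rfl⟩)
      · rintro (hZL | hZ')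
        · exact PfAux.mem_L'_iff.2 (Or.inl hZL)
        · obtain ⟨Y, hYM, rfl⟩ := Finset.mem_image.1 hZ'
          obtain ⟨hYL, hYne⟩ := Finset.mem_filter.1 hYM
          exact PfAux.mem_L'_iff.2 (Or.inr ⟨Y, hYL, hYne, rfl⟩)
    -- every element of (interPosetIn Set.univ A) not in ((interPosetIn Set.univ A).filter (fun Y => (F ∩ Y).Nonempty)) has rank ℓ
    have hrkfull : ∀ Y ∈ (interPosetIn Set.univ A).filter (fun Y => ¬(F ∩ Y).Nonempty),
        rkIn ℝ (Set.univ : Set (Fin ℓ → ℝ)) Y = ℓ := by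
      intro Y hY
      obtain ⟨hYL, hYne⟩ := Finset.mem_filter.1 hY
      have h1 : ¬ rkIn ℝ (Set.univ : Set (Fin ℓ → ℝ)) Y ≤ ℓ - 1 :=
        fun h => hYne ((PfAux.cap_nonempty_iff hF hYL).2 h)
      have e2 := PfAux.rk_eq (ℓ := ℓ) Y
      omega
    -- ranks of elements of ((interPosetIn Set.univ A).filter (fun Y => (F ∩ Y).Nonempty)) are ≤ ℓ - 1
    have hrkM : ∀ Y ∈ ((interPosetIn Set.univ A).filter (fun Y => (F ∩ Y).Nonempty)), rkIn ℝ (Set.univ : Set (Fin ℓ → ℝ)) Y ≤ ℓ - 1 := by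
      intro Y hY
      obtain ⟨hYL, hYne⟩ := Finset.mem_filter.1 hY
      exact (PfAux.cap_nonempty_iff hF hYL).1 hYne
    -- the top coefficient
    have hcoeff : (poinIn ℝ Set.univ A μ).coeff ℓ = (∑ Y ∈ (interPosetIn Set.univ A).filter (fun Y => ¬(F ∩ Y).Nonempty), μ Y) * (-1) ^ ℓ := by
      unfold poinIn
      rw [Polynomial.finset_sum_coeff]
      rw [← Finset.sum_filter_add_sum_filter_not (interPosetIn Set.univ A)
        (fun Y => (F ∩ Y).Nonempty)]
      have hz : ∑ X ∈ ((interPosetIn Set.univ A).filter (fun Y => (F ∩ Y).Nonempty)), (Polynomial.C (μ X)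
          * (-Polynomial.X) ^ rkIn ℝ (Set.univ : Set (Fin ℓ → ℝ)) X).coeff ℓ = 0 := by
        apply Finset.sum_eq_zero
        intro X hX
        rw [PfAux.coeff_term]
        have := hrkM X hX
        rw [if_neg (by omega)]
      rw [hz, zero_add]
      rw [Finset.sum_congr rfl (fun X hX => by
        rw [PfAux.coeff_term, hrkfull X hX, if_pos rfl])]
      rw [← Finset.sum_mul]
    -- splitting the Poincaré polynomial of A
    have hpoin : poinIn ℝ Set.univ A μ
        = (∑ Y ∈ ((interPosetIn Set.univ A).filter (fun Y => (F ∩ Y).Nonempty)), Polynomial.C (μ Y)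
            * (-Polynomial.X) ^ rkIn ℝ (Set.univ : Set (Fin ℓ → ℝ)) Y)
          + Polynomial.C (∑ Y ∈ (interPosetIn Set.univ A).filter (fun Y => ¬(F ∩ Y).Nonempty), μ Y) * (-Polynomial.X) ^ ℓ := by
      unfold poinIn
      rw [← Finset.sum_filter_add_sum_filter_not (interPosetIn Set.univ A)
        (fun Y => (F ∩ Y).Nonempty)]
      congr 1
      rw [Finset.sum_congr rfl (fun X hX => by rw [hrkfull X hX])]
      rw [← Finset.sum_mul, ← map_sum]
    have hLHS : poinIn ℝ Set.univ (insert F A) μ'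
        = (∑ X ∈ (interPosetIn Set.univ A), Polynomial.C (μ' X)
            * (-Polynomial.X) ^ rkIn ℝ (Set.univ : Set (Fin ℓ → ℝ)) X)
          + ∑ Y ∈ ((interPosetIn Set.univ A).filter (fun Y => (F ∩ Y).Nonempty)), Polynomial.C (μ' (F ∩ Y))
            * (-Polynomial.X) ^ rkIn ℝ (Set.univ : Set (Fin ℓ → ℝ)) (F ∩ Y) := by
      unfold poinIn
      rw [hL', Finset.sum_union hdisj, Finset.sum_image hinjM]
    have hsum1 : ∑ X ∈ (interPosetIn Set.univ A), Polynomial.C (μ' X)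
        * (-Polynomial.X) ^ rkIn ℝ (Set.univ : Set (Fin ℓ → ℝ)) X
        = poinIn ℝ Set.univ A μ := by
      unfold poinIn
      exact Finset.sum_congr rfl (fun X hX => by rw [hμeq X hX])
    have hsum2 : ∑ Y ∈ ((interPosetIn Set.univ A).filter (fun Y => (F ∩ Y).Nonempty)), Polynomial.C (μ' (F ∩ Y))
        * (-Polynomial.X) ^ rkIn ℝ (Set.univ : Set (Fin ℓ → ℝ)) (F ∩ Y)
        = Polynomial.X * ∑ Y ∈ ((interPosetIn Set.univ A).filter (fun Y => (F ∩ Y).Nonempty)), Polynomial.C (μ Y)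
            * (-Polynomial.X) ^ rkIn ℝ (Set.univ : Set (Fin ℓ → ℝ)) Y := by
      rw [Finset.mul_sum]
      apply Finset.sum_congr rfl
      intro Y hY
      obtain ⟨hYL, hYne⟩ := Finset.mem_filter.1 hY
      rw [hνeq Y hY, PfAux.cap_rk hl hF hYL hYne, map_neg, pow_succ]
      ring
    rw [hLHS, hsum1, hsum2, hcoeff, hpoin]
    have hXpow : Polynomial.C ((-1 : ℤ) ^ ℓ) * Polynomial.X ^ (ℓ + 1)
        = Polynomial.X * (-Polynomial.X) ^ ℓ := by
      have h1 : ((-1 : Polynomial ℤ)) ^ ℓ = Polynomial.C ((-1 : ℤ) ^ ℓ) := by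
        rw [map_pow, map_neg, map_one]
      rw [neg_pow (Polynomial.X : Polynomial ℤ), h1]
      ring
    rw [map_mul, mul_assoc, hXpow]
    ring
end

section
/- Let U be an open neighborhood of 0 in ℂ^n and let f : U → ℂ be holomorphic with f(0) ≠ 0, and suppose 0 is a critical point of f (the complex derivative of f vanishes at 0). Then the symmetric real bilinear form given by the second real Fréchet derivative of z ↦ |f(z)|² at 0 (a bilinear form on ℂ^n viewed as a 2n-dimensional real vector space) is nondegenerate if and only if the symmetric complex bilinear form given by the second complex Fréchet derivative of f at 0 is nondegenerate. -/
set_option maxHeartbeats 2000000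

open Complex Metric Set MeasureTheory
open scoped Real Topology

private lemma aux_rep0 {n : ℕ} {f : (Fin n → ℂ) → ℂ} {R : ℝ} (hR : 0 < R)
    (hd : ∀ x ∈ closedBall (0 : Fin n → ℂ) (6*R), DifferentiableAt ℂ f x)
    {v : Fin n → ℂ} (hv : v ≠ 0) {z : Fin n → ℂ} (hz : z ∈ closedBall (0 : Fin n → ℂ) (3*R)) :
    fderiv ℂ f z v = (2 * ↑Real.pi * I)⁻¹ •
      ∮ ζ in C(0, R / ‖v‖), ((1:ℂ) / (ζ - 0)) ^ 1 • (ζ - 0)⁻¹ • f (z + ζ • v) := by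
  have hv' : (0:ℝ) < ‖v‖ := norm_pos_iff.mpr hv
  set r : ℝ := R / ‖v‖ with hr_def
  have hr : 0 < r := div_pos hR hv'
  set h : ℂ → ℂ := fun w => f (z + w • v) with hh
  have hmem : ∀ w : ℂ, w ∈ closedBall (0:ℂ) r → (z + w • v) ∈ closedBall (0 : Fin n → ℂ) (6*R) := by
    intro w hw
    rw [mem_closedBall_zero_iff] at hw ⊢
    calc ‖z + w • v‖ ≤ ‖z‖ + ‖w • v‖ := norm_add_le _ _
      _ ≤ 3*R + r * ‖v‖ := by
          gcongr
          · exact mem_closedBall_zero_iff.mp hz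
          · rw [norm_smul]; gcongr
      _ ≤ 6*R := by
          rw [hr_def, div_mul_cancel₀ _ hv'.ne']; linarith
  have hdo : DifferentiableOn ℂ h (closedBall (0:ℂ) r) := by
    intro w hw
    have : DifferentiableAt ℂ h w := by
      have h1 : DifferentiableAt ℂ f (z + w • v) := hd _ (hmem w hw)
      have h2 : DifferentiableAt ℂ (fun w : ℂ => z + w • v) w :=
        (differentiableAt_const _).add ((differentiableAt_id).smul_const v)
      exact h1.comp w h2
    exact this.differentiableWithinAt
  have hdc : DiffContOnCl ℂ h (ball (0:ℂ) r) := by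
    apply DifferentiableOn.diffContOnCl
    rwa [closure_ball (0:ℂ) hr.ne']
  set rn : NNReal := ⟨r, hr.le⟩ with hrn
  have hrr : (rn : ℝ) = r := rfl
  have hp : HasFPowerSeriesOnBall h (cauchyPowerSeries h 0 rn) 0 rn := by
    apply DiffContOnCl.hasFPowerSeriesOnBall _ (by exact NNReal.coe_pos.mp hr)
    rwa [hrr]
  have hder : deriv h 0 = fderiv ℂ f z v := by
    have h1 : HasFDerivAt f (fderiv ℂ f z) (z + (0:ℂ) • v) := by
      have hz6 : z ∈ closedBall (0 : Fin n → ℂ) (6*R) := by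
        rw [mem_closedBall_zero_iff] at hz ⊢; linarith
      have := (hd z hz6).hasFDerivAt
      simpa using this
    have h2 : HasDerivAt (fun w : ℂ => z + w • v) v 0 := by
      simpa using ((hasDerivAt_id (0:ℂ)).smul_const v).const_add z
    have := h1.comp_hasDerivAt 0 h2
    exact this.deriv
  have hcoeff := hp.hasFPowerSeriesAt.deriv
  rw [hder] at hcoeff
  rw [hcoeff]
  have := cauchyPowerSeries_apply h 0 (rn : ℝ) 1 1
  rw [this]
  rw [hrr]

private lemma aux_bound {n : ℕ} {f : (Fin n → ℂ) → ℂ} {R M : ℝ} (hR : 0 < R)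
    (hd : ∀ x ∈ closedBall (0 : Fin n → ℂ) (6*R), DifferentiableAt ℂ f x)
    (hM0 : 0 ≤ M) (hM : ∀ x ∈ closedBall (0 : Fin n → ℂ) (6*R), ‖f x‖ ≤ M)
    {z : Fin n → ℂ} (hz : z ∈ closedBall (0 : Fin n → ℂ) (3*R)) (u : Fin n → ℂ) :
    ‖fderiv ℂ f z u‖ ≤ (M/R) * ‖u‖ := by
  rcases eq_or_ne u 0 with rfl | hu
  · simp [div_nonneg hM0 hR.le]
  have hu' : (0:ℝ) < ‖u‖ := norm_pos_iff.mpr hu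
  set r : ℝ := R / ‖u‖ with hr_def
  have hr : 0 < r := div_pos hR hu'
  rw [aux_rep0 hR hd hu hz]
  have hbd : ∀ ζ ∈ sphere (0:ℂ) r,
      ‖((1:ℂ) / (ζ - 0)) ^ 1 • (ζ - 0)⁻¹ • f (z + ζ • u)‖ ≤ r⁻¹ * (r⁻¹ * M) := by
    intro ζ hζ
    have hζr : ‖ζ‖ = r := by simpa using hζ
    have hmem : (z + ζ • u) ∈ closedBall (0 : Fin n → ℂ) (6*R) := by
      rw [mem_closedBall_zero_iff]
      calc ‖z + ζ • u‖ ≤ ‖z‖ + ‖ζ • u‖ := norm_add_le _ _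
        _ ≤ 3*R + r * ‖u‖ := by
            gcongr
            · exact mem_closedBall_zero_iff.mp hz
            · rw [norm_smul, hζr]
        _ ≤ 6*R := by rw [hr_def, div_mul_cancel₀ _ hu'.ne']; linarith
    rw [norm_smul, norm_smul]
    rw [sub_zero]
    have h1 : ‖((1:ℂ)/ζ)^1‖ = r⁻¹ := by
      rw [pow_one, norm_div, norm_one, hζr]; simp
    have h2 : ‖ζ⁻¹‖ = r⁻¹ := by rw [norm_inv, hζr]
    rw [h1, h2]
    gcongr
    exact hM _ hmem
  have hint := circleIntegral.norm_integral_le_of_norm_le_const hr.le hbd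
  rw [norm_smul]
  have hsc : ‖(2 * ↑Real.pi * I)⁻¹‖ = (2 * Real.pi)⁻¹ := by
    simp [norm_inv, norm_mul, Real.pi_nonneg, abs_of_nonneg]
  rw [hsc]
  calc (2 * Real.pi)⁻¹ * ‖∮ ζ in C(0, r), ((1:ℂ)/(ζ-0))^1 • (ζ-0)⁻¹ • f (z + ζ • u)‖
      ≤ (2 * Real.pi)⁻¹ * (2 * Real.pi * r * (r⁻¹ * (r⁻¹ * M))) := by
        gcongr
    _ = (M/R) * ‖u‖ := by
        rw [hr_def]
        field_simp

private lemma aux_dirDeriv {n : ℕ} {f : (Fin n → ℂ) → ℂ} {R M : ℝ} (hR : 0 < R)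
    (hd : ∀ x ∈ closedBall (0 : Fin n → ℂ) (6*R), DifferentiableAt ℂ f x)
    (hM0 : 0 ≤ M) (hM : ∀ x ∈ closedBall (0 : Fin n → ℂ) (6*R), ‖f x‖ ≤ M)
    (v : Fin n → ℂ) :
    DifferentiableAt ℂ (fun z => fderiv ℂ f z v) 0 := by
  rcases eq_or_ne v 0 with rfl | hv
  · simp only [map_zero]
    exact differentiableAt_const 0
  have hC2 : ∀ z ∈ closedBall (0 : Fin n → ℂ) (3*R), ∀ u : Fin n → ℂ,
      ‖fderiv ℂ f z u‖ ≤ (M/R) * ‖u‖ := fun z hz u => aux_bound hR hd hM0 hM hz u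
  have hv' : (0:ℝ) < ‖v‖ := norm_pos_iff.mpr hv
  set r : ℝ := R / ‖v‖ with hr_def
  have hr : 0 < r := div_pos hR hv'
  have hcm_norm : ∀ θ : ℝ, ‖circleMap 0 r θ‖ = r := by
    intro θ; simpa [abs_of_pos hr] using abs_circleMap_zero r θ
  have hcm_ne : ∀ θ : ℝ, circleMap 0 r θ ≠ 0 := fun θ => circleMap_ne_center hr.ne'
  set sc : ℝ → ℂ := fun θ => circleMap 0 r θ * I *
    (((1:ℂ) / (circleMap 0 r θ - 0)) ^ 1 * (circleMap 0 r θ - 0)⁻¹) with hsc_def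
  set F : (Fin n → ℂ) → ℝ → ℂ := fun z θ => sc θ • f (z + circleMap 0 r θ • v) with hF_def
  have hsc_norm : ∀ θ : ℝ, ‖sc θ‖ = r⁻¹ := by
    intro θ
    rw [hsc_def]
    simp only [sub_zero, pow_one, one_div, norm_mul, norm_inv, Complex.norm_I, hcm_norm θ,
      mul_one]
    field_simp
  have hmemb : ∀ z ∈ ball (0 : Fin n → ℂ) R, ∀ θ : ℝ,
      (z + circleMap 0 r θ • v) ∈ closedBall (0 : Fin n → ℂ) (3*R) := by
    intro z hz θ
    rw [mem_closedBall_zero_iff]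
    calc ‖z + circleMap 0 r θ • v‖ ≤ ‖z‖ + ‖circleMap 0 r θ • v‖ := norm_add_le _ _
      _ ≤ R + r * ‖v‖ := by
          gcongr
          · exact le_of_lt (mem_ball_zero_iff.mp hz)
          · rw [norm_smul, hcm_norm θ]
      _ ≤ 3*R := by rw [hr_def, div_mul_cancel₀ _ hv'.ne']; linarith
  have hmemb6 : ∀ z ∈ ball (0 : Fin n → ℂ) R, ∀ θ : ℝ,
      (z + circleMap 0 r θ • v) ∈ closedBall (0 : Fin n → ℂ) (6*R) := by
    intro z hz θ
    have := hmemb z hz θ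
    rw [mem_closedBall_zero_iff] at this ⊢
    linarith
  have rep : ∀ z ∈ closedBall (0 : Fin n → ℂ) (3*R),
      fderiv ℂ f z v = (2 * ↑Real.pi * I)⁻¹ • ∫ θ in Ioc 0 (2*Real.pi), F z θ := by
    intro z hz
    rw [aux_rep0 hR hd hv hz]
    congr 1
    rw [circleIntegral]
    simp only [deriv_circleMap]
    rw [intervalIntegral.integral_of_le Real.two_pi_pos.le]
    apply setIntegral_congr_fun measurableSet_Ioc
    intro θ _
    rw [hF_def, hsc_def]
    simp only [smul_smul]
    rfl
  have hsc_cont : Continuous sc := by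
    apply ((continuous_circleMap 0 r).mul continuous_const).mul
    apply Continuous.mul
    · apply Continuous.pow
      apply Continuous.div continuous_const
      · exact (continuous_circleMap 0 r).sub continuous_const
      · intro θ; simpa using hcm_ne θ
    · apply Continuous.inv₀
      · exact (continuous_circleMap 0 r).sub continuous_const
      · intro θ; simpa using hcm_ne θ
  set F' : (Fin n → ℂ) → ℝ → (Fin n → ℂ) →L[ℂ] ℂ :=
    fun z θ => sc θ • fderiv ℂ f (z + circleMap 0 r θ • v) with hF'_def
  set μ : Measure ℝ := volume.restrict (Ioc 0 (2*Real.pi)) with hμ_def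
  have h_diff : ∀ᵐ θ ∂μ, ∀ z ∈ ball (0 : Fin n → ℂ) R, HasFDerivAt (F · θ) (F' z θ) z := by
    apply Filter.Eventually.of_forall
    intro θ z hz
    have hw : DifferentiableAt ℂ f (z + circleMap 0 r θ • v) := hd _ (hmemb6 z hz θ)
    have h2 : HasFDerivAt (fun z : Fin n → ℂ => z + circleMap 0 r θ • v)
        (ContinuousLinearMap.id ℂ (Fin n → ℂ)) z := (hasFDerivAt_id z).add_const _
    have h3 := (hw.hasFDerivAt.comp z h2)
    rw [ContinuousLinearMap.comp_id] at h3
    exact h3.const_smul (sc θ)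
  have h_bound : ∀ᵐ θ ∂μ, ∀ z ∈ ball (0 : Fin n → ℂ) R, ‖F' z θ‖ ≤ r⁻¹ * (M/R) := by
    apply Filter.Eventually.of_forall
    intro θ z hz
    rw [hF'_def]
    simp only
    rw [norm_smul (sc θ) (fderiv ℂ f (z + circleMap 0 r θ • v)), hsc_norm θ]
    gcongr
    apply ContinuousLinearMap.opNorm_le_bound _ (div_nonneg hM0 hR.le)
    intro u
    exact hC2 _ (hmemb z hz θ) u
  have hFcont : ∀ z ∈ ball (0 : Fin n → ℂ) R, Continuous (F z) := by
    intro z hz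
    apply hsc_cont.smul
    apply continuous_iff_continuousAt.mpr
    intro θ
    have hw : DifferentiableAt ℂ f (z + circleMap 0 r θ • v) := hd _ (hmemb6 z hz θ)
    have h2 : Continuous fun θ : ℝ => z + circleMap 0 r θ • v :=
      continuous_const.add ((continuous_circleMap 0 r).smul continuous_const)
    exact ContinuousAt.comp (g := f) hw.continuousAt h2.continuousAt
  have hF_meas : ∀ᶠ z in 𝓝 (0 : Fin n → ℂ), AEStronglyMeasurable (F z) μ := by
    filter_upwards [ball_mem_nhds (0 : Fin n → ℂ) hR] with z hz
    exact (hFcont z hz).aestronglyMeasurable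
  have hF_int : Integrable (F 0) μ := by
    rw [hμ_def]
    exact (hFcont 0 (mem_ball_self hR)).integrableOn_Ioc
  have hF'_meas : AEStronglyMeasurable (F' 0) μ := by
    apply AEStronglyMeasurable.smul hsc_cont.aestronglyMeasurable
    apply Measurable.aestronglyMeasurable
    exact (measurable_fderiv ℂ f).comp
      (continuous_const.add ((continuous_circleMap 0 r).smul continuous_const)).measurable
  have bound_int : Integrable (fun _ : ℝ => r⁻¹ * (M/R)) μ := by
    rw [hμ_def]; exact integrableOn_const measure_Ioc_lt_top.ne
  have hMain := hasFDerivAt_integral_of_dominated_of_fderiv_le (ball_mem_nhds _ hR) hF_meas hF_int hF'_meas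
    h_bound bound_int h_diff
  have h1 : HasFDerivAt (fun z => (2 * ↑Real.pi * I)⁻¹ • ∫ θ, F z θ ∂μ)
      ((2 * ↑Real.pi * I)⁻¹ • ∫ θ, F' 0 θ ∂μ) 0 := hMain.fun_const_smul _
  apply h1.differentiableAt.congr_of_eventuallyEq
  filter_upwards [ball_mem_nhds (0 : Fin n → ℂ) hR] with z hz
  exact rep z (ball_subset_closedBall.trans (closedBall_subset_closedBall (by linarith)) hz)

/-- Let `f` be holomorphic on an open neighborhood `U` of `0` in
`ℂ^n` with `f 0 ≠ 0`, and suppose `0` is a critical point of `f`.  Then the second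
real Fréchet derivative of `z ↦ |f z|²` at `0` (a symmetric real bilinear form on
`ℂ^n` viewed as a `2n`-dimensional real vector space) is nondegenerate if and only
if the second complex Fréchet derivative of `f` at `0` is nondegenerate. -/
theorem nondegenerate_hessian_of_abs_sq {n : ℕ} (U : Set (Fin n → ℂ)) (hU : IsOpen U)
    (h0 : (0 : Fin n → ℂ) ∈ U) (f : (Fin n → ℂ) → ℂ)
    (hf : DifferentiableOn ℂ f U) (hf0 : f 0 ≠ 0)
    (hcrit : fderiv ℂ f 0 = 0) :
    ((∀ u : Fin n → ℂ,
        (∀ v : Fin n → ℂ, fderiv ℝ (fderiv ℝ fun z => ‖f z‖ ^ 2) 0 u v = 0) → u = 0) ↔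
      (∀ u : Fin n → ℂ,
        (∀ v : Fin n → ℂ, fderiv ℂ (fderiv ℂ f) 0 u v = 0) → u = 0)) := by
  obtain ⟨ε, hε, hball⟩ := Metric.isOpen_iff.mp hU 0 h0
  set R : ℝ := ε / 7 with hR_def
  have hR : 0 < R := by positivity
  have hsub : closedBall (0 : Fin n → ℂ) (6*R) ⊆ U := by
    intro x hx
    apply hball
    rw [mem_closedBall_zero_iff] at hx
    rw [mem_ball_zero_iff]
    rw [hR_def] at hx
    linarith
  have hd : ∀ x ∈ closedBall (0 : Fin n → ℂ) (6*R), DifferentiableAt ℂ f x := fun x hx =>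
    hf.differentiableAt (hU.mem_nhds (hsub hx))
  have hcont : ContinuousOn f (closedBall (0 : Fin n → ℂ) (6*R)) := fun x hx =>
    (hd x hx).continuousAt.continuousWithinAt
  obtain ⟨M₀, hM₀⟩ := (isCompact_closedBall _ _).exists_bound_of_continuousOn hcont
  set M : ℝ := max M₀ 0 with hM_def
  have hM0 : 0 ≤ M := le_max_right _ _
  have hM : ∀ x ∈ closedBall (0 : Fin n → ℂ) (6*R), ‖f x‖ ≤ M := fun x hx =>
    (hM₀ x hx).trans (le_max_left _ _)
  -- differentiability of the complex derivative map at 0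
  have hdv : ∀ v : Fin n → ℂ, DifferentiableAt ℂ (fun z => fderiv ℂ f z v) 0 := fun v =>
    aux_dirDeriv hR hd hM0 hM v
  have hDdiff : DifferentiableAt ℂ (fderiv ℂ f) 0 := by
    have hrepr : (fderiv ℂ f) = fun z => ∑ i : Fin n, (fderiv ℂ f z (Pi.single i 1)) •
        (ContinuousLinearMap.proj (R := ℂ) (φ := fun _ : Fin n => ℂ) i) := by
      funext z
      ext w
      simp only [ContinuousLinearMap.sum_apply, ContinuousLinearMap.smul_apply,
        ContinuousLinearMap.proj_apply, smul_eq_mul]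
      have h1 : w = ∑ i : Fin n, (Pi.single i (w i) : Fin n → ℂ) :=
        (Finset.univ_sum_single w).symm
      conv_lhs => rw [h1]
      rw [map_sum]
      congr 1
      funext i
      have h2 : (Pi.single i (w i) : Fin n → ℂ) = w i • (Pi.single i (1:ℂ) : Fin n → ℂ) := by
        ext j
        by_cases h : j = i <;> simp [Pi.single_apply, h]
      rw [h2, ContinuousLinearMap.map_smul, smul_eq_mul, mul_comm]
    rw [hrepr]
    exact DifferentiableAt.fun_sum (fun i _ => (hdv _).smul_const _)
  -- the second complex derivative
  set B := fderiv ℂ (fderiv ℂ f) 0 with hB_def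
  have hB : HasFDerivAt (fderiv ℂ f) B 0 := hDdiff.hasFDerivAt
  have hfd0 : DifferentiableAt ℂ f 0 := hf.differentiableAt (hU.mem_nhds h0)
  have hfr0 : HasFDerivAt f (0 : (Fin n → ℂ) →L[ℝ] ℂ) 0 := by
    have h1 := (hfd0.hasFDerivAt).restrictScalars ℝ
    rw [hcrit] at h1
    simpa using h1
  set L := ContinuousLinearMap.restrictScalarsL ℂ (Fin n → ℂ) ℂ ℝ ℝ with hL_def
  set T : (Fin n → ℂ) → (Fin n → ℂ) →L[ℝ] ℂ :=
    fun z => (fderiv ℂ f z).restrictScalars ℝ with hT_def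
  have hTd : HasFDerivAt T (L.comp (B.restrictScalars ℝ)) 0 := by
    have h1 := (L.hasFDerivAt (x := fderiv ℂ f 0)).comp 0 (hB.restrictScalars ℝ)
    exact h1
  have hT0 : T 0 = 0 := by
    rw [hT_def]
    simp only [hcrit]
    ext w
    simp
  have hA' : HasFDerivAt (fun z => innerSL ℝ (f z)) (0 : (Fin n → ℂ) →L[ℝ] (ℂ →L[ℝ] ℝ)) 0 := by
    have hA : HasFDerivAt (fun z => innerSL ℝ (f z))
        ((innerSL ℝ (E := ℂ)).comp (0 : (Fin n → ℂ) →L[ℝ] ℂ)) 0 :=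
      (ContinuousLinearMap.hasFDerivAt _).comp 0 hfr0
    simpa using hA
  have hcc := hA'.clm_comp hTd
  have hEv : (fderiv ℝ fun z => ‖f z‖ ^ 2) =ᶠ[𝓝 (0 : Fin n → ℂ)]
      fun z => (2:ℝ) • ((innerSL ℝ (f z)).comp (T z)) := by
    filter_upwards [hU.mem_nhds h0] with z hz
    have hfz : DifferentiableAt ℂ f z := hf.differentiableAt (hU.mem_nhds hz)
    have hfzr : HasFDerivAt f (T z) z := hfz.hasFDerivAt.restrictScalars ℝ
    have hInner := hfzr.inner ℝ hfzr
    have hgeq : (fun z => ‖f z‖ ^ 2) = fun t => (inner ℝ (f t) (f t) : ℝ) :=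
      funext fun t => (real_inner_self_eq_norm_sq (f t)).symm
    rw [hgeq, hInner.fderiv]
    ext w
    simp only [ContinuousLinearMap.comp_apply, ContinuousLinearMap.prod_apply,
      fderivInnerCLM_apply, ContinuousLinearMap.smul_apply, smul_eq_mul]
    simp only [innerSL_apply_apply]
    rw [real_inner_comm (f z) ((T z) w)]
    ring
  have hHess : fderiv ℝ (fderiv ℝ fun z => ‖f z‖ ^ 2) 0 =
      (2:ℝ) • (((ContinuousLinearMap.compL ℝ (Fin n → ℂ) ℂ ℝ) (innerSL ℝ (f 0))).comp
          (L.comp (B.restrictScalars ℝ)) +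
        (((ContinuousLinearMap.compL ℝ (Fin n → ℂ) ℂ ℝ).flip (T 0)).comp (0 : (Fin n → ℂ) →L[ℝ] (ℂ →L[ℝ] ℝ)))) := by
    rw [hEv.fderiv_eq]
    exact (hcc.const_smul (2:ℝ)).fderiv
  have Hfact : ∀ u w : Fin n → ℂ, fderiv ℝ (fderiv ℝ fun z => ‖f z‖ ^ 2) 0 u w =
      2 * ((starRingEnd ℂ) (f 0) * (B u w)).re := by
    intro u w
    rw [hHess]
    simp only [ContinuousLinearMap.smul_apply, ContinuousLinearMap.add_apply,
      ContinuousLinearMap.comp_apply, ContinuousLinearMap.compL_apply,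
      ContinuousLinearMap.flip_apply, ContinuousLinearMap.zero_apply, map_zero,
      ContinuousLinearMap.zero_comp, add_zero, innerSL_apply_apply]
    have hLBw : (L ((ContinuousLinearMap.restrictScalars ℝ B) u)) w = B u w := rfl
    rw [hLBw, Complex.inner, smul_eq_mul, mul_comm ((B u) w)]
  constructor
  · intro hH u hu
    apply hH u
    intro w
    rw [Hfact u w, hu w]
    simp
  · intro hBnd u hu
    apply hBnd u
    intro w
    have h1 := hu w
    have h2 := hu (Complex.I • w)
    rw [Hfact] at h1 h2
    have e2 : B u (Complex.I • w) = Complex.I * B u w := by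
      rw [ContinuousLinearMap.map_smul]
      simp [smul_eq_mul]
    rw [e2] at h2
    set c := (starRingEnd ℂ) (f 0) with hc_def
    have hc : c ≠ 0 := by
      rw [hc_def]
      simpa using hf0
    have hre : (c * B u w).re = 0 := by linarith
    have him : (c * B u w).im = 0 := by
      have h3 : (c * (Complex.I * B u w)).re = 0 := by linarith
      rw [show c * (Complex.I * B u w) = Complex.I * (c * B u w) by ring, Complex.mul_re] at h3
      simp only [Complex.I_re, Complex.I_im, zero_mul, one_mul, zero_sub, neg_eq_zero] at h3
      exact h3
    have hzero : c * B u w = 0 := by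
      apply Complex.ext <;> simp [hre, him]
    rcases mul_eq_zero.mp hzero with h | h
    · exact absurd h hc
    · exact h
end

section
/- Let U be an open neighborhood of 0 in ℂ^n and let f : U → ℂ be holomorphic with f(0) ≠ 0. Suppose 0 is a nondegenerate critical point of the real-valued function z ↦ |f(z)|² (its real Fréchet derivative vanishes at 0 and its second real Fréchet derivative at 0 is a nondegenerate symmetric bilinear form on ℂ^n viewed as a 2n-dimensional real vector space). Then the Morse index at 0 equals n: the maximal dimension of a real subspace of ℂ^n on which the Hessian bilinear form is negative definite is n (and likewise the maximal dimension of a subspace on which it is positive definite is n). -/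
open Module Submodule

section LinAlg

variable {V : Type*} [AddCommGroup V] [Module ℝ V] [FiniteDimensional ℝ V]

lemma finrank_add_le_of_negpos (B : LinearMap.BilinForm ℝ V)
    {W₁ W₂ : Submodule ℝ V}
    (h₁ : ∀ w ∈ W₁, w ≠ 0 → B w w < 0) (h₂ : ∀ w ∈ W₂, w ≠ 0 → 0 < B w w) :
    finrank ℝ W₁ + finrank ℝ W₂ ≤ finrank ℝ V := by
  have hdisj : W₁ ⊓ W₂ = ⊥ := by
    rw [eq_bot_iff]
    intro x hx
    rcases mem_inf.1 hx with ⟨hx1, hx2⟩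
    by_contra hne
    have h1 := h₁ x hx1 (by simpa using hne)
    have h2 := h₂ x hx2 (by simpa using hne)
    linarith
  have := Submodule.finrank_sup_add_finrank_inf_eq W₁ W₂
  rw [hdisj] at this
  simp only [finrank_bot, add_zero] at this
  rw [← this]
  exact Submodule.finrank_le _

lemma posdef_map (B : LinearMap.BilinForm ℝ V) (J : V ≃ₗ[ℝ] V)
    (hJ : ∀ w, B (J w) (J w) = - B w w) {W : Submodule ℝ V}
    (h : ∀ w ∈ W, w ≠ 0 → B w w < 0) :
    ∀ w ∈ W.map (J : V →ₗ[ℝ] V), w ≠ 0 → 0 < B w w := by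
  rintro w hw hne
  rcases Submodule.mem_map.1 hw with ⟨x, hx, rfl⟩
  have hxne : x ≠ 0 := by rintro rfl; simp at hne
  have := h x hx hxne
  rw [show (J : V →ₗ[ℝ] V) x = J x from rfl, hJ]
  linarith

lemma negdef_map (B : LinearMap.BilinForm ℝ V) (J : V ≃ₗ[ℝ] V)
    (hJ : ∀ w, B (J w) (J w) = - B w w) {W : Submodule ℝ V}
    (h : ∀ w ∈ W, w ≠ 0 → 0 < B w w) :
    ∀ w ∈ W.map (J : V →ₗ[ℝ] V), w ≠ 0 → B w w < 0 := by
  rintro w hw hne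
  rcases Submodule.mem_map.1 hw with ⟨x, hx, rfl⟩
  have hxne : x ≠ 0 := by rintro rfl; simp at hne
  have := h x hx hxne
  rw [show (J : V →ₗ[ℝ] V) x = J x from rfl, hJ]
  linarith

lemma bilin_index_eq {nn : ℕ} (hdim : finrank ℝ V = 2 * nn)
    (B : LinearMap.BilinForm ℝ V) (hsymm : ∀ u v, B u v = B v u)
    (hnd : ∀ u, (∀ v, B u v = 0) → u = 0)
    (J : V ≃ₗ[ℝ] V) (hJ : ∀ w, B (J w) (J w) = - B w w) :
    ((∃ W : Submodule ℝ V, finrank ℝ W = nn ∧ ∀ w ∈ W, w ≠ 0 → B w w < 0) ∧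
     (∀ W : Submodule ℝ V, (∀ w ∈ W, w ≠ 0 → B w w < 0) → finrank ℝ W ≤ nn)) ∧
    ((∃ W : Submodule ℝ V, finrank ℝ W = nn ∧ ∀ w ∈ W, w ≠ 0 → 0 < B w w) ∧
     (∀ W : Submodule ℝ V, (∀ w ∈ W, w ≠ 0 → 0 < B w w) → finrank ℝ W ≤ nn)) := by
  have hrefl : B.IsRefl := fun u v h => by rw [hsymm]; exact h
  -- upper bound for negative-definite subspaces
  have hub : ∀ W : Submodule ℝ V, (∀ w ∈ W, w ≠ 0 → B w w < 0) → finrank ℝ W ≤ nn := by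
    intro W hW
    have h2 := finrank_add_le_of_negpos B hW (posdef_map B J hJ hW)
    rw [LinearEquiv.finrank_map_eq J W, hdim] at h2
    omega
  have hub' : ∀ W : Submodule ℝ V, (∀ w ∈ W, w ≠ 0 → 0 < B w w) → finrank ℝ W ≤ nn := by
    intro W hW
    have h2 := finrank_add_le_of_negpos B (negdef_map B J hJ hW) hW
    rw [LinearEquiv.finrank_map_eq J W, hdim] at h2
    omega
  -- the set of dimensions of negative definite subspaces
  set S : Set ℕ := {m | ∃ W : Submodule ℝ V, (∀ w ∈ W, w ≠ 0 → B w w < 0) ∧ finrank ℝ W = m}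
    with hS
  have hS0 : 0 ∈ S := ⟨⊥, fun w hw hne => absurd (Submodule.mem_bot ℝ |>.1 hw) hne, finrank_bot ℝ V⟩
  have hSbdd : BddAbove S := by
    refine ⟨nn, fun m hm => ?_⟩
    rcases hm with ⟨W, hW, rfl⟩
    exact hub W hW
  have hSfin : S.Finite := (Set.finite_Icc 0 nn).subset fun m hm => by
    rcases hm with ⟨W, hW, rfl⟩
    exact ⟨Nat.zero_le _, hub W hW⟩
  set m := sSup S with hm
  obtain ⟨W, hWneg, hWrank⟩ : m ∈ S := Set.Nonempty.csSup_mem ⟨0, hS0⟩ hSfin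
  have hmax : ∀ W' : Submodule ℝ V, (∀ w ∈ W', w ≠ 0 → B w w < 0) → finrank ℝ W' ≤ m :=
    fun W' hW' => le_csSup hSbdd ⟨W', hW', rfl⟩
  -- B restricted to W is nondegenerate
  have hWnd : (B.restrict W).Nondegenerate := by
    refine LinearMap.BilinForm.Nondegenerate.ofSeparatingLeft ?_
    intro x hx
    by_contra hne
    have hx0 : (x : V) ≠ 0 := fun h => hne (Subtype.ext h)
    have := hWneg x x.2 hx0
    have h2 := hx x
    simp only [LinearMap.BilinForm.restrict_apply, LinearMap.domRestrict_apply] at h2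
    linarith
  have hcompl : IsCompl W (B.orthogonal W) :=
    LinearMap.BilinForm.isCompl_orthogonal_of_restrict_nondegenerate hrefl hWnd
  set O := B.orthogonal W with hO
  have horthm : ∀ v ∈ O, ∀ w ∈ W, B w v = 0 := by
    intro v hv w hw
    exact (LinearMap.BilinForm.mem_orthogonal_iff.1 hv) w hw
  -- B is nonneg on O
  have hnonneg : ∀ v ∈ O, 0 ≤ B v v := by
    intro v hv
    by_contra hneg
    push_neg at hneg
    have hvne : v ≠ 0 := fun h => by rw [h] at hneg; simp at hneg
    have hvW : v ∉ W := by
      intro hvW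
      have : v ∈ W ⊓ O := ⟨hvW, hv⟩
      rw [hcompl.inf_eq_bot] at this
      exact hvne this
    -- W ⊔ span v is negative definite, contradiction with maximality
    set W' := W ⊔ (ℝ ∙ v) with hW'
    have hneg' : ∀ w ∈ W', w ≠ 0 → B w w < 0 := by
      intro x hx hxne
      rcases Submodule.mem_sup.1 hx with ⟨w, hw, s, hs, rfl⟩
      rcases Submodule.mem_span_singleton.1 hs with ⟨t, rfl⟩
      have hBwv : B w v = 0 := horthm v hv w hw
      have hBvw : B v w = 0 := hrefl w v hBwv
      have hexp : B (w + t • v) (w + t • v) = B w w + t^2 * B v v := by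
        simp [map_add, LinearMap.add_apply, map_smul, LinearMap.smul_apply, hBwv, hBvw,
          smul_eq_mul]
        ring
      rw [hexp]
      rcases eq_or_ne w 0 with rfl | hwne
      · have ht : t ≠ 0 := by
          rintro rfl
          simp at hxne
        have ht2 : t^2 > 0 := by positivity
        have hz : B (0:V) (0:V) = 0 := by simp
        nlinarith
      · have h1 := hWneg w hw hwne
        nlinarith [sq_nonneg t]
    have hrank' : finrank ℝ W' = m + 1 := by
      have hinf : W ⊓ (ℝ ∙ v) = ⊥ := by
        rw [eq_bot_iff]
        rintro x ⟨hxW, hxs⟩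
        rcases Submodule.mem_span_singleton.1 hxs with ⟨t, rfl⟩
        rcases eq_or_ne t 0 with rfl | ht
        · simp
        · exact absurd (by simpa [ht] using Submodule.smul_mem W t⁻¹ hxW : v ∈ W) hvW
      have := Submodule.finrank_sup_add_finrank_inf_eq W (ℝ ∙ v)
      rw [hinf] at this
      simp only [finrank_bot, add_zero] at this
      rw [← hW'] at this
      rw [this, hWrank, finrank_span_singleton hvne]
    have := hmax W' hneg'
    omega
  -- B is positive definite on O
  have hpos : ∀ v ∈ O, v ≠ 0 → 0 < B v v := by
    intro v hv hvne
    rcases lt_or_eq_of_le (hnonneg v hv) with h | h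
    · exact h
    exfalso
    -- B v v = 0 ; use nondegeneracy to find w' ∈ O with B v w' ≠ 0
    obtain ⟨z, hz⟩ : ∃ z, B v z ≠ 0 := by
      by_contra hall
      push_neg at hall
      exact hvne (hnd v hall)
    have hzsup : z ∈ W ⊔ O := by rw [hcompl.sup_eq_top]; trivial
    rcases Submodule.mem_sup.1 hzsup with ⟨w, hw, w', hw', rfl⟩
    have hvw : B v w = 0 := hrefl w v (horthm v hv w hw)
    have ha : B v w' ≠ 0 := by
      intro h
      apply hz
      simp [map_add, hvw, h]
    set a := B v w' with haa
    set b := B w' w' with hbb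
    have hb : 0 ≤ b := hnonneg w' hw'
    -- consider v + t • w' ∈ O with t = -a * δ
    set δ := 1/(b+1) with hδ
    have hδpos : 0 < δ := by positivity
    set t := -a * δ with ht
    have hmem : v + t • w' ∈ O := O.add_mem hv (O.smul_mem t hw')
    have hval : B (v + t • w') (v + t • w') = 2 * t * a + t^2 * b := by
      have h1 : B w' v = a := by rw [hsymm w' v]
      simp only [map_add, LinearMap.add_apply, map_smul, LinearMap.smul_apply, smul_eq_mul]
      rw [← h, h1, ← haa, ← hbb]
      ring
    have h0le := hnonneg _ hmem
    rw [hval] at h0le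
    have ha2 : 0 < a^2 := by positivity
    have hδb : δ * b < 2 := by
      rw [hδ, div_mul_eq_mul_div, one_mul, div_lt_iff₀ (by positivity)]
      nlinarith
    have hkey : 2 * t * a + t^2 * b = a^2 * δ * (δ * b - 2) := by rw [ht]; ring
    have : a^2 * δ * (δ * b - 2) < 0 :=
      mul_neg_of_pos_of_neg (by positivity) (by linarith)
    linarith
  have hOconsequence : finrank ℝ O = 2 * nn - m ∧ m + finrank ℝ O = 2 * nn := by
    have := Submodule.finrank_add_eq_of_isCompl hcompl
    rw [hWrank, hdim] at this
    omega
  -- J O is negative definite of dimension 2n - m, so 2n - m ≤ m; also m ≤ nn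
  have hJO := negdef_map B J hJ hpos
  have hle1 := hmax _ hJO
  rw [LinearEquiv.finrank_map_eq J O] at hle1
  have hmle := hub W hWneg
  rw [hWrank] at hmle
  have hmeq : m = nn := by omega
  refine ⟨⟨⟨W, by rw [hWrank, hmeq], hWneg⟩, hub⟩,
    ⟨⟨W.map (J : V →ₗ[ℝ] V), by rw [LinearEquiv.finrank_map_eq J W, hWrank, hmeq],
      posdef_map B J hJ hWneg⟩, hub'⟩⟩

end LinAlg

section Analysis

/-- The derivative of `Complex.normSq` as a continuous linear map. -/
noncomputable def phiCLM : ℂ →L[ℝ] (ℂ →L[ℝ] ℝ) :=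
  LinearMap.toContinuousLinearMap
  { toFun := fun a => (2 * a.re) • Complex.reCLM + (2 * a.im) • Complex.imCLM
    map_add' := by
      intro a b; ext v
      simp only [Complex.add_re, Complex.add_im, ContinuousLinearMap.add_apply,
        ContinuousLinearMap.coe_smul', Pi.smul_apply, smul_eq_mul, Complex.reCLM_apply,
        Complex.imCLM_apply]
      ring
    map_smul' := by
      intro t a; ext v
      simp only [Complex.real_smul, Complex.mul_re, Complex.ofReal_re, Complex.ofReal_im,
        Complex.mul_im, ContinuousLinearMap.add_apply, ContinuousLinearMap.coe_smul',
        Pi.smul_apply, smul_eq_mul, Complex.reCLM_apply, Complex.imCLM_apply,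
        RingHom.id_apply]
      ring }

lemma phiCLM_apply (a v : ℂ) : phiCLM a v = 2 * a.re * v.re + 2 * a.im * v.im := by
  simp [phiCLM, LinearMap.toContinuousLinearMap]

lemma phiCLM_hasFDerivAt (w : ℂ) : HasFDerivAt Complex.normSq (phiCLM w) w := by
  have hre : HasFDerivAt (fun z : ℂ => z.re) Complex.reCLM w := Complex.reCLM.hasFDerivAt
  have him : HasFDerivAt (fun z : ℂ => z.im) Complex.imCLM w := Complex.imCLM.hasFDerivAt
  have h := (hre.mul hre).add (him.mul him)
  have heq : (fun z : ℂ => z.re * z.re + z.im * z.im) = Complex.normSq := by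
    funext z; rw [Complex.normSq_apply]
  rw [show (((fun z : ℂ => z.re) * fun z : ℂ => z.re) + (fun z : ℂ => z.im) * fun z : ℂ => z.im) = Complex.normSq from heq] at h
  refine h.congr_fderiv ?_
  ext v
  simp only [phiCLM_apply, ContinuousLinearMap.add_apply, ContinuousLinearMap.coe_smul',
    Pi.smul_apply, smul_eq_mul, Complex.reCLM_apply, Complex.imCLM_apply]
  ring

end Analysis

set_option maxHeartbeats 1000000 in
theorem morse_aux_analysis {n : ℕ} (U : Set (Fin n → ℂ)) (hU : IsOpen U)
    (h0 : (0 : Fin n → ℂ) ∈ U) (f : (Fin n → ℂ) → ℂ)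
    (hf : DifferentiableOn ℂ f U) (hf0 : f 0 ≠ 0)
    (hcrit : fderiv ℝ (fun z => Complex.normSq (f z)) 0 = 0)
    (hdiff : DifferentiableAt ℝ (fderiv ℝ (fun z => Complex.normSq (f z))) 0) :
    (∀ u : Fin n → ℂ,
      fderiv ℝ (fderiv ℝ (fun z => Complex.normSq (f z))) 0 (Complex.I • u) (Complex.I • u)
        = - fderiv ℝ (fderiv ℝ (fun z => Complex.normSq (f z))) 0 u u) ∧
    (∀ u v : Fin n → ℂ,
      fderiv ℝ (fderiv ℝ (fun z => Complex.normSq (f z))) 0 u v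
        = fderiv ℝ (fderiv ℝ (fun z => Complex.normSq (f z))) 0 v u) := by
  set g : (Fin n → ℂ) → ℝ := fun z => Complex.normSq (f z) with hgdef
  set D2 := fderiv ℝ (fderiv ℝ g) 0 with hD2def
  have hmemU : U ∈ nhds (0 : Fin n → ℂ) := hU.mem_nhds h0
  have hfd : ∀ z ∈ U, DifferentiableAt ℂ f z := fun z hz => hf.differentiableAt (hU.mem_nhds hz)
  set G : (Fin n → ℂ) → ((Fin n → ℂ) →L[ℝ] ℝ) :=
    fun z => (phiCLM (f z)).comp ((fderiv ℂ f z).restrictScalars ℝ) with hGdef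
  have hG : ∀ z ∈ U, HasFDerivAt g (G z) z := fun z hz =>
    (phiCLM_hasFDerivAt (f z)).comp z (((hfd z hz).hasFDerivAt).restrictScalars ℝ)
  have hfg : ∀ z ∈ U, fderiv ℝ g z = G z := fun z hz => (hG z hz).fderiv
  have hG0 : G 0 = 0 := by rw [← hfg 0 h0]; exact hcrit
  have hDf0 : fderiv ℂ f 0 = 0 := by
    apply ContinuousLinearMap.ext
    intro v
    set w := fderiv ℂ f 0 v with hw
    have key : ∀ x : Fin n → ℂ, phiCLM (f 0) (fderiv ℂ f 0 x) = 0 := by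
      intro x
      have h := congrFun (congrArg DFunLike.coe hG0) x
      simpa [hGdef] using h
    have h1 := key v
    have h2 := key (Complex.I • v)
    rw [map_smul] at h2
    rw [phiCLM_apply] at h1
    rw [phiCLM_apply] at h2
    simp only [smul_eq_mul, Complex.mul_re, Complex.mul_im, Complex.I_re, Complex.I_im] at h2
    have hcpos : 0 < (f 0).re * (f 0).re + (f 0).im * (f 0).im := by
      have := Complex.normSq_pos.2 hf0
      rwa [Complex.normSq_apply] at this
    have h3 : ((f 0).re * (f 0).re + (f 0).im * (f 0).im) * w.re = 0 := by
      linear_combination ((f 0).re / 2) * h1 + ((f 0).im / 2) * h2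
    have h4 : ((f 0).re * (f 0).re + (f 0).im * (f 0).im) * w.im = 0 := by
      linear_combination ((f 0).im / 2) * h1 - ((f 0).re / 2) * h2
    have hwre : w.re = 0 := by
      rcases mul_eq_zero.mp h3 with h | h
      · linarith
      · exact h
    have hwim : w.im = 0 := by
      rcases mul_eq_zero.mp h4 with h | h
      · linarith
      · exact h
    rw [ContinuousLinearMap.zero_apply]
    exact Complex.ext hwre hwim
  constructor
  · -- the J-diagonal identity
    intro u
    set Luc : ℂ →L[ℂ] (Fin n → ℂ) := ContinuousLinearMap.toSpanSingleton ℂ u with hLuc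
    set Lu : ℂ →L[ℝ] (Fin n → ℂ) := Luc.restrictScalars ℝ with hLu
    have hLua : ∀ a : ℂ, Lu a = a • u := fun a => rfl
    set ψ : ℂ → ℂ := fun w => f (Lu w) with hψdef
    set q : ℂ → ℝ := fun w => g (Lu w) with hqdef
    set T : Set ℂ := Lu ⁻¹' U with hT
    have hTopen : IsOpen T := hU.preimage Lu.continuous
    have hT0 : (0 : ℂ) ∈ T := by
      show Lu 0 ∈ U
      rw [map_zero]; exact h0
    have hψd : ∀ w ∈ T, DifferentiableAt ℂ ψ w := fun w hw =>
      ((hfd _ hw).comp w Luc.differentiableAt)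
    have hψdo : DifferentiableOn ℂ ψ T := fun w hw => (hψd w hw).differentiableWithinAt
    have hψan : AnalyticOnNhd ℂ ψ T := hψdo.analyticOnNhd hTopen
    have hdψan : AnalyticOnNhd ℂ (fderiv ℂ ψ) T := hψan.fderiv
    set T₁ : ℂ →L[ℂ] (ℂ →L[ℂ] ℂ) := fderiv ℂ (fderiv ℂ ψ) 0 with hT₁
    have hT₁d : HasFDerivAt (fderiv ℂ ψ) T₁ 0 :=
      ((hdψan 0 hT0).differentiableAt).hasFDerivAt
    have hψ0 : fderiv ℂ ψ 0 = 0 := by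
      have h0' : HasFDerivAt f (fderiv ℂ f 0) (Luc 0) := by
        rw [map_zero]; exact ((hfd 0 h0).hasFDerivAt)
      have h1 : HasFDerivAt ψ ((fderiv ℂ f 0).comp Luc) 0 := h0'.comp 0 Luc.hasFDerivAt
      rw [h1.fderiv, hDf0, ContinuousLinearMap.zero_comp]
    have hq1 : ∀ w ∈ T, HasFDerivAt q
        ((phiCLM (ψ w)).comp ((fderiv ℂ ψ w).restrictScalars ℝ)) w := by
      intro w hw
      exact (phiCLM_hasFDerivAt (ψ w)).comp w (((hψd w hw).hasFDerivAt).restrictScalars ℝ)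
    have hq2 : ∀ w ∈ T, HasFDerivAt q ((G (Lu w)).comp Lu) w := by
      intro w hw
      have hw' : Lu w ∈ U := hw
      exact (hG (Lu w) hw').comp w Lu.hasFDerivAt
    have hGq : fderiv ℝ q =ᶠ[nhds 0] fun w => (fderiv ℝ g (Lu w)).comp Lu := by
      filter_upwards [hTopen.mem_nhds hT0] with w hw
      rw [(hq2 w hw).fderiv, hfg _ hw]
    set Pre : ((Fin n → ℂ) →L[ℝ] ℝ) →L[ℝ] (ℂ →L[ℝ] ℝ) :=
      (ContinuousLinearMap.compL ℝ ℂ (Fin n → ℂ) ℝ).flip Lu with hPre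
    have hw1 : HasFDerivAt (fun w : ℂ => fderiv ℝ g (Lu w)) (D2.comp Lu) 0 := by
      have h1 : HasFDerivAt (fderiv ℝ g) D2 (Lu 0) := by
        rw [map_zero]; exact hdiff.hasFDerivAt
      exact h1.comp 0 Lu.hasFDerivAt
    have hw1' : HasFDerivAt (fun w : ℂ => (fderiv ℝ g (Lu w)).comp Lu)
        (Pre.comp (D2.comp Lu)) 0 := Pre.hasFDerivAt.comp 0 hw1
    have hQ1 : HasFDerivAt (fderiv ℝ q) (Pre.comp (D2.comp Lu)) 0 :=
      hw1'.congr_of_eventuallyEq hGq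
    have hGq2 : fderiv ℝ q =ᶠ[nhds 0]
        fun w => (phiCLM (ψ w)).comp ((fderiv ℂ ψ w).restrictScalars ℝ) := by
      filter_upwards [hTopen.mem_nhds hT0] with w hw
      exact (hq1 w hw).fderiv
    set R : (ℂ →L[ℂ] ℂ) →L[ℝ] (ℂ →L[ℝ] ℂ) :=
      ContinuousLinearMap.restrictScalarsL ℂ ℂ ℂ ℝ ℝ with hR
    have hψ0' : HasFDerivAt ψ ((fderiv ℂ ψ 0).restrictScalars ℝ) 0 :=
      ((hψd 0 hT0).hasFDerivAt).restrictScalars ℝ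
    have hA : HasFDerivAt (fun w : ℂ => phiCLM (ψ w))
        (phiCLM.comp ((fderiv ℂ ψ 0).restrictScalars ℝ)) 0 :=
      phiCLM.hasFDerivAt.comp 0 hψ0'
    have hBd : HasFDerivAt (fun w : ℂ => (fderiv ℂ ψ w).restrictScalars ℝ)
        (R.comp (T₁.restrictScalars ℝ)) 0 :=
      R.hasFDerivAt.comp 0 (hT₁d.restrictScalars ℝ)
    have hAB := hA.clm_comp hBd
    have hQ2 := hAB.congr_of_eventuallyEq hGq2
    have huniq := hQ1.unique hQ2
    have hval : ∀ a b : ℂ, D2 (a • u) (b • u) = phiCLM (f 0) (T₁ a b) := by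
      intro a b
      have h := ContinuousLinearMap.ext_iff.1 (ContinuousLinearMap.ext_iff.1 huniq a) b
      simp only [hPre, hR, ContinuousLinearMap.coe_comp', Function.comp_apply,
        ContinuousLinearMap.flip_apply, ContinuousLinearMap.compL_apply,
        ContinuousLinearMap.add_apply, ContinuousLinearMap.comp_apply,
        ContinuousLinearMap.coe_restrictScalars', hψ0, ContinuousLinearMap.zero_apply,
        map_zero, ContinuousLinearMap.zero_comp,
        ContinuousLinearMap.coe_restrict_scalarsL'] at h
      simp only [hLua] at h
      rw [h]
      simp [hψdef, hLua]
    have hT₁I : T₁ Complex.I Complex.I = - (T₁ 1 1) := by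
      have hI1 : Complex.I • (1:ℂ) = Complex.I := by rw [smul_eq_mul, mul_one]
      calc T₁ Complex.I Complex.I
          = T₁ (Complex.I • (1:ℂ)) (Complex.I • (1:ℂ)) := by rw [hI1]
        _ = (Complex.I • T₁ 1) (Complex.I • (1:ℂ)) := by rw [map_smul T₁ Complex.I 1]
        _ = Complex.I • (T₁ 1 (Complex.I • (1:ℂ))) := by rw [ContinuousLinearMap.smul_apply]
        _ = Complex.I • (Complex.I • (T₁ 1 1)) := by rw [map_smul (T₁ 1) Complex.I 1]
        _ = - (T₁ 1 1) := by rw [smul_smul, Complex.I_mul_I, neg_smul, one_smul]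
    have hval1 := hval 1 1
    have hvalI := hval Complex.I Complex.I
    rw [one_smul] at hval1
    rw [hvalI, hT₁I, map_neg, ← hval1]
  · -- symmetry
    intro u v
    have hev : ∀ᶠ y in nhds (0 : Fin n → ℂ), HasFDerivAt g (fderiv ℝ g y) y := by
      filter_upwards [hmemU] with z hz
      exact (hG z hz).differentiableAt.hasFDerivAt
    exact second_derivative_symmetric_of_eventually_of_real hev hdiff.hasFDerivAt u v

set_option maxHeartbeats 1000000 in
/-- Let `f` be holomorphic on an open neighborhood `U` of `0` in
`ℂ^n` with `f 0 ≠ 0`, and suppose `0` is a nondegenerate critical point of the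
real-valued function `z ↦ |f z|²`.  Then the Morse index at `0` equals `n`: the
maximal dimension of a real subspace of `ℂ^n` on which the Hessian bilinear form is
negative definite is `n`, and likewise for positive definite. -/
theorem morse_index_of_abs_sq {n : ℕ} (U : Set (Fin n → ℂ)) (hU : IsOpen U)
    (h0 : (0 : Fin n → ℂ) ∈ U) (f : (Fin n → ℂ) → ℂ)
    (hf : DifferentiableOn ℂ f U) (hf0 : f 0 ≠ 0)
    (hcrit : fderiv ℝ (fun z => ‖f z‖ ^ 2) 0 = 0)
    (hnd : ∀ u : Fin n → ℂ,
      (∀ v : Fin n → ℂ, fderiv ℝ (fderiv ℝ fun z => ‖f z‖ ^ 2) 0 u v = 0) → u = 0) :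
    ((∃ W : Submodule ℝ (Fin n → ℂ), Module.finrank ℝ W = n ∧
        ∀ w ∈ W, w ≠ 0 → fderiv ℝ (fderiv ℝ fun z => ‖f z‖ ^ 2) 0 w w < 0) ∧
      (∀ W : Submodule ℝ (Fin n → ℂ),
        (∀ w ∈ W, w ≠ 0 → fderiv ℝ (fderiv ℝ fun z => ‖f z‖ ^ 2) 0 w w < 0) →
          Module.finrank ℝ W ≤ n)) ∧
    ((∃ W : Submodule ℝ (Fin n → ℂ), Module.finrank ℝ W = n ∧
        ∀ w ∈ W, w ≠ 0 → 0 < fderiv ℝ (fderiv ℝ fun z => ‖f z‖ ^ 2) 0 w w) ∧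
      (∀ W : Submodule ℝ (Fin n → ℂ),
        (∀ w ∈ W, w ≠ 0 → 0 < fderiv ℝ (fderiv ℝ fun z => ‖f z‖ ^ 2) 0 w w) →
          Module.finrank ℝ W ≤ n)) := by
  have heqg : (fun z : Fin n → ℂ => ‖f z‖ ^ 2) = fun z => Complex.normSq (f z) := by
    funext z
    rw [← Complex.sq_norm]
  rw [heqg] at hcrit hnd ⊢
  have hdim : finrank ℝ (Fin n → ℂ) = 2 * n := by
    rw [Module.finrank_pi_fintype ℝ]
    simp [Complex.finrank_real_complex, Finset.sum_const, mul_comm]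
  by_cases hdiff : DifferentiableAt ℝ (fderiv ℝ (fun z : Fin n → ℂ => Complex.normSq (f z))) 0
  · obtain ⟨hJdiag, hsym⟩ := morse_aux_analysis U hU h0 f hf hf0 hcrit hdiff
    set D2 := fderiv ℝ (fderiv ℝ (fun z : Fin n → ℂ => Complex.normSq (f z))) 0 with hD2
    set Bb : LinearMap.BilinForm ℝ (Fin n → ℂ) := LinearMap.mk₂ ℝ (fun u v => D2 u v)
      (fun u u' v => by simp) (fun t u v => by simp) (fun u v v' => by simp)
      (fun t u v => by simp) with hBb
    set J : (Fin n → ℂ) ≃ₗ[ℝ] (Fin n → ℂ) :=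
      { toFun := fun w => Complex.I • w
        invFun := fun w => -(Complex.I • w)
        map_add' := fun a b => smul_add _ a b
        map_smul' := fun t w => by simpa using smul_comm Complex.I t w
        left_inv := fun w => by
          show -(Complex.I • Complex.I • w) = w
          rw [smul_smul, Complex.I_mul_I, neg_smul, one_smul, neg_neg]
        right_inv := fun w => by
          show Complex.I • -(Complex.I • w) = w
          rw [smul_neg, smul_smul, Complex.I_mul_I, neg_smul, one_smul, neg_neg] } with hJta
    exact bilin_index_eq hdim Bb (fun u v => hsym u v) (fun u h => hnd u h)
      J (fun w => hJdiag w)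
  · have hD2z : fderiv ℝ (fderiv ℝ (fun z : Fin n → ℂ => Complex.normSq (f z))) 0 = 0 :=
      fderiv_zero_of_not_differentiableAt hdiff
    have hall : ∀ u : Fin n → ℂ, u = 0 := fun u => hnd u (fun v => by rw [hD2z]; simp)
    have hn : n = 0 := by
      by_contra hne
      have h1 := congrFun (hall fun _ => 1) ⟨0, Nat.pos_of_ne_zero hne⟩
      simpa using h1
    have hW : ∀ W : Submodule ℝ (Fin n → ℂ), finrank ℝ W ≤ n := by
      intro W
      have h1 := Submodule.finrank_le W
      omega
    have hbotrk : finrank ℝ (⊥ : Submodule ℝ (Fin n → ℂ)) = n := by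
      rw [finrank_bot]; omega
    have hbot : ∀ w ∈ (⊥ : Submodule ℝ (Fin n → ℂ)), w ≠ 0 → False :=
      fun w hw hne => absurd ((Submodule.mem_bot ℝ).1 hw) hne
    exact ⟨⟨⟨⊥, hbotrk, fun w hw hne => absurd ((Submodule.mem_bot ℝ).1 hw) hne⟩,
        fun W _ => hW W⟩,
      ⟨⟨⊥, hbotrk, fun w hw hne => absurd ((Submodule.mem_bot ℝ).1 hw) hne⟩,
        fun W _ => hW W⟩⟩
end
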